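/- arXiv:2303.02541 — 7 statements merged into one kernel-verified Lean document; each statement's English description precedes it below -/
import Mathlib

section
/- Assume 𝕍 is continuous and T-invariant. Then for each P ∈ Θ there exists a T-invariant probability measure P' ∈ Θ₀ such that P'(A) = P(A) for every A in the invariant σ-algebra 𝓘. -/
open MeasureTheory Filter
open scoped ENNReal

/-- If `V` is continuous and `T`-invariant, then every `P ∈ Θ`
agrees on the invariant σ-algebra with some `T`-invariant `P' ∈ Θ₀ ⊆ Θ`. -/
theorem stmt_1 {Ω : Type*} [MeasurableSpace Ω] (T : Ω → Ω) (hT : Measurable T)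
    (Θ : Set (Measure Ω)) (hΘne : Θ.Nonempty)
    (hprob : ∀ P ∈ Θ, IsProbabilityMeasure P)
    (V : Set Ω → ℝ≥0∞)
    (hV : ∀ A : Set Ω, V A = ⨆ P ∈ Θ, P A)
    (hmax : ∀ P : Measure Ω, IsProbabilityMeasure P →
      (∀ A, MeasurableSet A → P A ≤ V A) → P ∈ Θ)
    (hcont : ∀ A : ℕ → Set Ω, (∀ n, MeasurableSet (A n)) → Antitone A →
      (⋂ n, A n) = ∅ → Tendsto (fun n => V (A n)) atTop (nhds 0))
    (hVinv : ∀ A : Set Ω, MeasurableSet A → V (T ⁻¹' A) = V A) :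
    ∀ P ∈ Θ, ∃ P' ∈ Θ,
      (∀ A : Set Ω, MeasurableSet A → P' (T ⁻¹' A) = P' A) ∧
      (∀ A : Set Ω, MeasurableSet A → T ⁻¹' A = A → P' A = P A) := by
  intro P hP
  haveI hPprob : IsProbabilityMeasure P := hprob P hP
  have hTk : ∀ k : ℕ, Measurable (T^[k]) := fun k => hT.iterate k
  have hP1 : ∀ B : Set Ω, P B ≤ 1 := fun B => prob_le_one
  -- Cesàro averages
  set Q : ℕ → Measure Ω := fun n =>
    ((n + 1 : ℕ) : ℝ≥0∞)⁻¹ • ∑ k ∈ Finset.range (n + 1), P.map (T^[k]) with hQdef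
  have hn1ne : ∀ n : ℕ, ((n + 1 : ℕ) : ℝ≥0∞) ≠ 0 := fun n =>
    Nat.cast_ne_zero.mpr (Nat.succ_ne_zero n)
  have hn1top : ∀ n : ℕ, ((n + 1 : ℕ) : ℝ≥0∞) ≠ ⊤ := fun n => ENNReal.natCast_ne_top _
  have hQ_apply : ∀ (n : ℕ) (A : Set Ω), MeasurableSet A →
      Q n A = ((n + 1 : ℕ) : ℝ≥0∞)⁻¹ * ∑ k ∈ Finset.range (n + 1), P ((T^[k]) ⁻¹' A) := by
    intro n A hA
    simp only [hQdef, Measure.smul_apply, smul_eq_mul, Measure.finset_sum_apply]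
    congr 1
    refine Finset.sum_congr rfl fun k _ => Measure.map_apply (hTk k) hA
  -- P is dominated by V
  have hPle : ∀ (R : Measure Ω), R ∈ Θ → ∀ B : Set Ω, R B ≤ V B := by
    intro R hR B
    rw [hV]
    exact le_iSup₂ (f := fun (R : Measure Ω) (_ : R ∈ Θ) => R B) R hR
  have hV1 : ∀ A : Set Ω, V A ≤ 1 := by
    intro A
    rw [hV]
    refine iSup₂_le fun R hR => ?_
    haveI := hprob R hR
    exact prob_le_one
  -- V is invariant under iterates
  have hViter : ∀ (k : ℕ) (A : Set Ω), MeasurableSet A → V ((T^[k]) ⁻¹' A) = V A := by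
    intro k
    induction k with
    | zero => intro A _; simp
    | succ k ih =>
      intro A hA
      have : (T^[k + 1]) ⁻¹' A = T ⁻¹' ((T^[k]) ⁻¹' A) := by
        rw [Function.iterate_succ]
        exact Set.preimage_comp
      rw [this, hVinv _ ((hTk k) hA), ih A hA]
  -- each Q n is dominated by V
  have hQle : ∀ (n : ℕ) (A : Set Ω), MeasurableSet A → Q n A ≤ V A := by
    intro n A hA
    rw [hQ_apply n A hA]
    have hsum : ∑ k ∈ Finset.range (n + 1), P ((T^[k]) ⁻¹' A)
        ≤ (n + 1 : ℕ) * V A := by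
      calc ∑ k ∈ Finset.range (n + 1), P ((T^[k]) ⁻¹' A)
          ≤ ∑ k ∈ Finset.range (n + 1), V A := by
            refine Finset.sum_le_sum fun k _ => ?_
            rw [← hViter k A hA]
            exact hPle P hP _
        _ = (n + 1 : ℕ) * V A := by
            rw [Finset.sum_const, Finset.card_range, nsmul_eq_mul]
    calc ((n + 1 : ℕ) : ℝ≥0∞)⁻¹ * ∑ k ∈ Finset.range (n + 1), P ((T^[k]) ⁻¹' A)
        ≤ ((n + 1 : ℕ) : ℝ≥0∞)⁻¹ * ((n + 1 : ℕ) * V A) := by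
          gcongr
      _ = V A := by
          rw [← mul_assoc, ENNReal.inv_mul_cancel (hn1ne n) (hn1top n), one_mul]
  have hQprob : ∀ n : ℕ, IsProbabilityMeasure (Q n) := by
    intro n
    constructor
    rw [hQ_apply n Set.univ MeasurableSet.univ]
    simp only [Set.preimage_univ, measure_univ, Finset.sum_const, Finset.card_range,
      nsmul_eq_mul, mul_one]
    exact ENNReal.inv_mul_cancel (hn1ne n) (hn1top n)
  have hQΘ : ∀ n : ℕ, Q n ∈ Θ := fun n => hmax _ (hQprob n) (fun A hA => hQle n A hA)
  -- ultrafilter limit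
  let U : Ultrafilter ℕ := Ultrafilter.of atTop
  have hU : (U : Filter ℕ) ≤ atTop := Ultrafilter.of_le _
  let m : Set Ω → ℝ≥0∞ := fun A => (U.map (fun n => Q n A)).lim
  have htendsto : ∀ A : Set Ω, Tendsto (fun n => Q n A) (U : Filter ℕ) (nhds (m A)) := by
    intro A
    have := Ultrafilter.le_nhds_lim (U.map (fun n => Q n A))
    rwa [Ultrafilter.coe_map] at this
  have hm_le : ∀ A : Set Ω, MeasurableSet A → m A ≤ V A := fun A hA =>
    le_of_tendsto (htendsto A) (Eventually.of_forall fun n => hQle n A hA)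
  have hm_empty : m ∅ = 0 := by
    refine tendsto_nhds_unique (htendsto ∅) ?_
    simp only [measure_empty]
    exact tendsto_const_nhds
  have hm_univ : m Set.univ = 1 := by
    refine tendsto_nhds_unique (htendsto Set.univ) ?_
    have : ∀ n : ℕ, Q n Set.univ = 1 := fun n => (hQprob n).measure_univ
    simp only [this]
    exact tendsto_const_nhds
  -- countable additivity
  have hm_iUnion : ∀ (f : ℕ → Set Ω), (∀ i, MeasurableSet (f i)) →
      Pairwise (Function.onFun Disjoint f) → m (⋃ i, f i) = ∑' i, m (f i) := by
    intro f hf hdisj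
    set g : ℕ → Set Ω := fun N => ⋃ i ∈ Set.Ici N, f i with hgdef
    have hg_meas : ∀ N, MeasurableSet (g N) :=
      fun N => MeasurableSet.biUnion (Set.Ici N).to_countable (fun i _ => hf i)
    have hg_anti : Antitone g := by
      intro N M hNM
      exact Set.iUnion₂_mono' fun i hi => ⟨i, le_trans hNM hi, le_rfl⟩
    have hg_inter : (⋂ N, g N) = ∅ := by
      ext x
      simp only [Set.mem_iInter, Set.mem_empty_iff_false, iff_false]
      intro hx
      have hmem : ∀ N : ℕ, ∃ i, N ≤ i ∧ x ∈ f i := by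
        intro N
        have h := hx N
        simp only [hgdef, Set.mem_iUnion, Set.mem_Ici, exists_prop] at h
        exact h
      obtain ⟨i, hi, hxi⟩ := hmem 0
      obtain ⟨j, hj, hxj⟩ := hmem (i + 1)
      exact (hdisj (by omega : i ≠ j)).le_bot ⟨hxi, hxj⟩ |>.elim
    -- finite decomposition for each Q n
    have hdecomp : ∀ (N n : ℕ),
        Q n (⋃ i, f i) = (∑ i ∈ Finset.range N, Q n (f i)) + Q n (g N) := by
      intro N n
      have hunion : (⋃ i, f i) = (⋃ i ∈ Finset.range N, f i) ∪ g N := by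
        ext x
        simp only [Set.mem_iUnion, Set.mem_union, Finset.mem_range, hgdef, Set.mem_Ici,
          exists_prop]
        constructor
        · rintro ⟨i, hi⟩
          rcases lt_or_ge i N with h | h
          · exact Or.inl ⟨i, h, hi⟩
          · exact Or.inr ⟨i, h, hi⟩
        · rintro (⟨i, _, hi⟩ | ⟨i, _, hi⟩) <;> exact ⟨i, hi⟩
      rw [hunion, measure_union ?_ (hg_meas N), measure_biUnion_finset ?_ (fun i _ => hf i)]
      · intro i _ j _ hij
        exact hdisj hij
      · refine Set.disjoint_left.mpr ?_
        rintro x hx hx'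
        simp only [Set.mem_iUnion, Finset.mem_range, exists_prop] at hx
        simp only [hgdef, Set.mem_iUnion, Set.mem_Ici, exists_prop] at hx'
        obtain ⟨i, hi, hxi⟩ := hx
        obtain ⟨j, hj, hxj⟩ := hx'
        exact (hdisj (Nat.ne_of_lt (lt_of_lt_of_le hi hj))).le_bot ⟨hxi, hxj⟩
    have hm_decomp : ∀ N : ℕ,
        m (⋃ i, f i) = (∑ i ∈ Finset.range N, m (f i)) + m (g N) := by
      intro N
      refine tendsto_nhds_unique (htendsto _) ?_
      have h1 : Tendsto (fun n => ∑ i ∈ Finset.range N, Q n (f i)) (U : Filter ℕ)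
          (nhds (∑ i ∈ Finset.range N, m (f i))) :=
        tendsto_finset_sum _ (fun i _ => htendsto (f i))
      have h2 := (h1.add (htendsto (g N)))
      refine h2.congr fun n => (hdecomp N n).symm
    have hle1 : ∑' i, m (f i) ≤ m (⋃ i, f i) := by
      refine ENNReal.tsum_le_of_sum_range_le fun N => ?_
      rw [hm_decomp N]
      exact le_add_right le_rfl
    have hle2 : m (⋃ i, f i) ≤ ∑' i, m (f i) := by
      have hVg : Tendsto (fun N => V (g N)) atTop (nhds 0) :=
        hcont g hg_meas hg_anti hg_inter
      have hsum : Tendsto (fun N => ∑ i ∈ Finset.range N, m (f i)) atTop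
          (nhds (∑' i, m (f i))) := ENNReal.tendsto_nat_tsum _
      have hlim : Tendsto (fun N => (∑ i ∈ Finset.range N, m (f i)) + V (g N)) atTop
          (nhds ((∑' i, m (f i)) + 0)) := hsum.add hVg
      rw [add_zero] at hlim
      refine ge_of_tendsto hlim (Eventually.of_forall fun N => ?_)
      rw [hm_decomp N]
      gcongr
      exact hm_le _ (hg_meas N)
    exact le_antisymm hle2 hle1
  -- build the measure
  let P' : Measure Ω := Measure.ofMeasurable (fun A _ => m A) hm_empty
    (fun f hf hd => hm_iUnion f hf hd)
  have hP'_apply : ∀ A : Set Ω, MeasurableSet A → P' A = m A := fun A hA =>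
    Measure.ofMeasurable_apply A hA
  haveI hP'prob : IsProbabilityMeasure P' := ⟨by
    rw [hP'_apply _ MeasurableSet.univ, hm_univ]⟩
  have hP'Θ : P' ∈ Θ := hmax P' hP'prob (fun A hA => by
    rw [hP'_apply A hA]; exact hm_le A hA)
  refine ⟨P', hP'Θ, ?_, ?_⟩
  · -- T-invariance
    intro A hA
    rw [hP'_apply _ (hT hA), hP'_apply _ hA]
    have key : ∀ n : ℕ,
        Q n (T ⁻¹' A) + ((n + 1 : ℕ) : ℝ≥0∞)⁻¹ * P A
          = Q n A + ((n + 1 : ℕ) : ℝ≥0∞)⁻¹ * P ((T^[n + 1]) ⁻¹' A) := by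
      intro n
      have hpre : ∀ k : ℕ, (T^[k]) ⁻¹' (T ⁻¹' A) = (T^[k + 1]) ⁻¹' A := by
        intro k
        rw [Function.iterate_succ']
        exact Set.preimage_comp.symm
      rw [hQ_apply n _ (hT hA), hQ_apply n A hA]
      have : ∑ k ∈ Finset.range (n + 1), P ((T^[k]) ⁻¹' (T ⁻¹' A))
          = ∑ k ∈ Finset.range (n + 1), P ((T^[k + 1]) ⁻¹' A) := by
        refine Finset.sum_congr rfl fun k _ => by rw [hpre k]
      rw [this, ← mul_add, ← mul_add]
      congr 1
      have h0 : P A = P ((T^[0]) ⁻¹' A) := by simp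
      rw [h0]
      rw [← Finset.sum_range_succ' (fun k => P ((T^[k]) ⁻¹' A)) (n + 1),
        ← Finset.sum_range_succ (fun k => P ((T^[k]) ⁻¹' A)) (n + 1)]
    -- small terms tend to 0
    have hsmall : ∀ (c : ℕ → ℝ≥0∞), (∀ n, c n ≤ 1) →
        Tendsto (fun n => ((n + 1 : ℕ) : ℝ≥0∞)⁻¹ * c n) (U : Filter ℕ) (nhds 0) := by
      intro c hc
      have h1 : Tendsto (fun n : ℕ => ((n + 1 : ℕ) : ℝ≥0∞)⁻¹) atTop (nhds 0) := by
        have := ENNReal.tendsto_inv_nat_nhds_zero.comp (tendsto_add_atTop_nat 1)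
        exact this.congr fun n => by norm_cast
      have h2 : Tendsto (fun n : ℕ => ((n + 1 : ℕ) : ℝ≥0∞)⁻¹ * c n) atTop (nhds 0) := by
        refine tendsto_of_tendsto_of_tendsto_of_le_of_le tendsto_const_nhds h1
          (fun n => by positivity) (fun n => ?_)
        calc ((n + 1 : ℕ) : ℝ≥0∞)⁻¹ * c n ≤ ((n + 1 : ℕ) : ℝ≥0∞)⁻¹ * 1 :=
              by gcongr; exact hc n
          _ = _ := mul_one _
      exact h2.mono_left hU
    have hL : Tendsto (fun n => Q n (T ⁻¹' A) + ((n + 1 : ℕ) : ℝ≥0∞)⁻¹ * P A)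
        (U : Filter ℕ) (nhds (m (T ⁻¹' A) + 0)) :=
      (htendsto (T ⁻¹' A)).add (hsmall (fun _ => P A) (fun _ => hP1 A))
    have hR : Tendsto (fun n => Q n A + ((n + 1 : ℕ) : ℝ≥0∞)⁻¹ * P ((T^[n + 1]) ⁻¹' A))
        (U : Filter ℕ) (nhds (m A + 0)) :=
      (htendsto A).add (hsmall (fun n => P ((T^[n + 1]) ⁻¹' A)) (fun n => hP1 _))
    have := tendsto_nhds_unique (hL.congr fun n => key n) hR
    rwa [add_zero, add_zero] at this
  · -- agreement on invariant sets
    intro A hA hfix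
    rw [hP'_apply A hA]
    have hiter : ∀ k : ℕ, (T^[k]) ⁻¹' A = A := by
      intro k
      induction k with
      | zero => simp
      | succ k ih =>
        rw [Function.iterate_succ', Set.preimage_comp, hfix, ih]
    have hQA : ∀ n : ℕ, Q n A = P A := by
      intro n
      rw [hQ_apply n A hA]
      simp only [hiter]
      rw [Finset.sum_const, Finset.card_range, nsmul_eq_mul, ← mul_assoc,
        ENNReal.inv_mul_cancel (hn1ne n) (hn1top n), one_mul]
    refine tendsto_nhds_unique (htendsto A) ?_
    simp only [hQA]
    exact tendsto_const_nhds
end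

section
/- Assume 𝕍 is continuous, T-invariant, and T-ergodic. Then for every A in the invariant σ-algebra 𝓘 with 𝕍(A) > 0, there exists a T-invariant probability measure P' ∈ Θ₀ with P'(A) = 1. -/
open MeasureTheory Filter
open scoped Topology
open scoped ENNReal

/-- If `V` is continuous, `T`-invariant and `T`-ergodic, then for
every invariant measurable set `A` with `V(A) > 0` there is a `T`-invariant
`P' ∈ Θ₀` with `P'(A) = 1`. -/
theorem stmt_2 {Ω : Type*} [MeasurableSpace Ω] (T : Ω → Ω) (hT : Measurable T)
    (Θ : Set (Measure Ω)) (hΘne : Θ.Nonempty)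
    (hprob : ∀ P ∈ Θ, IsProbabilityMeasure P)
    (V : Set Ω → ℝ≥0∞)
    (hV : ∀ A : Set Ω, V A = ⨆ P ∈ Θ, P A)
    (hmax : ∀ P : Measure Ω, IsProbabilityMeasure P →
      (∀ A, MeasurableSet A → P A ≤ V A) → P ∈ Θ)
    (hcont : ∀ A : ℕ → Set Ω, (∀ n, MeasurableSet (A n)) → Antitone A →
      (⋂ n, A n) = ∅ → Tendsto (fun n => V (A n)) atTop (nhds 0))
    (hVinv : ∀ A : Set Ω, MeasurableSet A → V (T ⁻¹' A) = V A)
    (hVerg : ∀ A : Set Ω, MeasurableSet A → T ⁻¹' A = A → V A = 0 ∨ V A = 1) :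
    ∀ A : Set Ω, MeasurableSet A → T ⁻¹' A = A → 0 < V A →
      ∃ P' ∈ Θ, (∀ B : Set Ω, MeasurableSet B → P' (T ⁻¹' B) = P' B) ∧ P' A = 1 := by
  intro A hA hTA hVA
  classical
  -- every P ∈ Θ is dominated by V
  have hPleV : ∀ P ∈ Θ, ∀ X : Set Ω, P X ≤ V X := by
    intro P hP X
    rw [hV]
    exact le_biSup (fun P : Measure Ω => P X) hP
  -- measurability of preimages under iterates
  have hmeas_iter : ∀ (k : ℕ) (B : Set Ω), MeasurableSet B →
      MeasurableSet (T^[k] ⁻¹' B) := fun k B hB => (hT.iterate k) hB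
  -- V is invariant under iterates
  have hViter : ∀ (k : ℕ) (B : Set Ω), MeasurableSet B → V (T^[k] ⁻¹' B) = V B := by
    intro k B hB
    induction k with
    | zero => simp
    | succ n ih =>
      rw [Function.iterate_succ, Set.preimage_comp, hVinv _ (hmeas_iter n B hB), ih]
  -- V A = 1 by ergodicity
  have hVA1 : V A = 1 := by
    rcases hVerg A hA hTA with h | h
    · rw [h] at hVA; exact absurd hVA (lt_irrefl 0)
    · exact h
  -- choose measures P m ∈ Θ with P m A > 1 - (m+1)⁻¹
  have hex : ∀ m : ℕ, ∃ P, P ∈ Θ ∧ 1 - ((m : ℝ≥0∞) + 1)⁻¹ < P A := by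
    intro m
    have h1 : (1 : ℝ≥0∞) - ((m : ℝ≥0∞) + 1)⁻¹ < V A := by
      rw [hVA1]
      refine ENNReal.sub_lt_self ENNReal.one_ne_top one_ne_zero ?_
      simp [ENNReal.inv_ne_zero]
    rw [hV] at h1
    rcases lt_iSup_iff.mp h1 with ⟨P, hP⟩
    rcases lt_iSup_iff.mp hP with ⟨hPΘ, hlt⟩
    exact ⟨P, hPΘ, hlt⟩
  choose P hPΘ hPA using hex
  have hPA_le_one : ∀ m, P m A ≤ 1 := by
    intro m
    haveI := hprob (P m) (hPΘ m)
    exact prob_le_one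
  -- Cesàro-type averages
  set s : ℕ → Set Ω → ℝ≥0∞ :=
    fun m B => (m : ℝ≥0∞)⁻¹ * ∑ k ∈ Finset.range m, P m (T^[k] ⁻¹' B) with hs
  -- an ultrafilter extending atTop
  let 𝒰 : Ultrafilter ℕ := Ultrafilter.of atTop
  have h𝒰 : (𝒰 : Filter ℕ) ≤ atTop := Ultrafilter.of_le _
  -- limits along 𝒰 exist by compactness of ℝ≥0∞
  have hexlim : ∀ B : Set Ω, ∃ x : ℝ≥0∞, Tendsto (fun m => s m B) 𝒰 (𝓝 x) := by
    intro B
    obtain ⟨x, -, hx⟩ := isCompact_univ.ultrafilter_le_nhds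
      (𝒰.map fun m => s m B) (by simp)
    rw [Ultrafilter.coe_map] at hx
    exact ⟨x, hx⟩
  choose μ hμ using hexlim
  -- s m B ≤ V B
  have hsle : ∀ m (B : Set Ω), MeasurableSet B → s m B ≤ V B := by
    intro m B hB
    rcases Nat.eq_zero_or_pos m with rfl | hm
    · simp [hs]
    · calc s m B ≤ (m : ℝ≥0∞)⁻¹ * ∑ _k ∈ Finset.range m, V B := by
            refine mul_le_mul_right (Finset.sum_le_sum fun k _ => ?_) _
            calc P m (T^[k] ⁻¹' B) ≤ V (T^[k] ⁻¹' B) := hPleV _ (hPΘ m) _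
              _ = V B := hViter k B hB
        _ = ((m : ℝ≥0∞)⁻¹ * m) * V B := by
            rw [Finset.sum_const, Finset.card_range, nsmul_eq_mul, mul_assoc]
        _ = V B := by
            rw [ENNReal.inv_mul_cancel (by exact_mod_cast hm.ne')
              (ENNReal.natCast_ne_top m), one_mul]
  have hμle : ∀ B : Set Ω, MeasurableSet B → μ B ≤ V B := fun B hB =>
    le_of_tendsto (hμ B) (Filter.Eventually.of_forall fun m => hsle m B hB)
  -- additivity on pairs
  have hsadd : ∀ m (B C : Set Ω), MeasurableSet C → Disjoint B C →
      s m (B ∪ C) = s m B + s m C := by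
    intro m B C hC hBC
    simp only [hs]
    rw [← mul_add, ← Finset.sum_add_distrib]
    congr 1
    refine Finset.sum_congr rfl fun k _ => ?_
    rw [Set.preimage_union]
    exact measure_union (hBC.preimage _) (hmeas_iter k C hC)
  have hμadd : ∀ B C : Set Ω, MeasurableSet C → Disjoint B C →
      μ (B ∪ C) = μ B + μ C := by
    intro B C hC hBC
    refine tendsto_nhds_unique (hμ (B ∪ C)) ?_
    exact ((hμ B).add (hμ C)).congr fun m => (hsadd m B C hC hBC).symm
  have hμempty : μ (∅ : Set Ω) = 0 := by
    have h0 : ∀ m, s m (∅ : Set Ω) = 0 := by intro m; simp [hs]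
    exact tendsto_nhds_unique (hμ ∅) ((tendsto_congr h0).mpr tendsto_const_nhds)
  -- countable additivity
  have hμiUnion : ∀ f : ℕ → Set Ω, (∀ i, MeasurableSet (f i)) →
      Pairwise (Function.onFun Disjoint f) → μ (⋃ i, f i) = ∑' i, μ (f i) := by
    intro f hf hdisj
    set C : ℕ → Set Ω := fun n => ⋃ i, f (n + i) with hC
    have hCmeas : ∀ n, MeasurableSet (C n) := fun n => MeasurableSet.iUnion fun i => hf _
    have hCanti : Antitone C := by
      intro a b hab
      simp only [hC]
      refine Set.iUnion_subset fun i => ?_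
      have hbi : b + i = a + (b - a + i) := by omega
      rw [hbi]
      exact Set.subset_iUnion (fun j => f (a + j)) _
    have hCempty : (⋂ n, C n) = ∅ := by
      ext x
      simp only [hC, Set.mem_iInter, Set.mem_iUnion, Set.mem_empty_iff_false, iff_false]
      intro h
      obtain ⟨i, hi⟩ := h 0
      obtain ⟨j, hj⟩ := h (i + 1)
      have hne : 0 + i ≠ i + 1 + j := by omega
      exact Set.disjoint_left.mp (hdisj hne) hi hj
    have hbUmeas : ∀ n, MeasurableSet (⋃ i ∈ Finset.range n, f i) := fun n =>
      (Finset.range n).measurableSet_biUnion fun i _ => hf i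
    have hsplit : ∀ n, (⋃ i, f i) = (⋃ i ∈ Finset.range n, f i) ∪ C n := by
      intro n
      ext x
      simp only [Set.mem_iUnion, Set.mem_union, Finset.mem_range, hC]
      constructor
      · rintro ⟨i, hi⟩
        rcases lt_or_ge i n with h | h
        · exact Or.inl ⟨i, h, hi⟩
        · exact Or.inr ⟨i - n, by rwa [Nat.add_sub_cancel' h]⟩
      · rintro (⟨i, _, hi⟩ | ⟨i, hi⟩)
        · exact ⟨i, hi⟩
        · exact ⟨n + i, hi⟩
    have hfin : ∀ n, μ (⋃ i ∈ Finset.range n, f i) = ∑ i ∈ Finset.range n, μ (f i) := by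
      intro n
      induction n with
      | zero => simpa using hμempty
      | succ n ih =>
        have heq : (⋃ i ∈ Finset.range (n + 1), f i)
            = (⋃ i ∈ Finset.range n, f i) ∪ f n := by
          ext x
          simp only [Set.mem_iUnion, Set.mem_union, Finset.mem_range]
          constructor
          · rintro ⟨i, hi, hx⟩
            rcases Nat.lt_succ_iff_lt_or_eq.mp hi with h | rfl
            · exact Or.inl ⟨i, h, hx⟩
            · exact Or.inr hx
          · rintro (⟨i, hi, hx⟩ | hx)
            · exact ⟨i, Nat.lt_succ_of_lt hi, hx⟩
            · exact ⟨n, Nat.lt_succ_self n, hx⟩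
        have hd : Disjoint (⋃ i ∈ Finset.range n, f i) (f n) := by
          refine Set.disjoint_left.mpr fun x hx hx' => ?_
          simp only [Set.mem_iUnion, Finset.mem_range] at hx
          obtain ⟨i, hi, hxi⟩ := hx
          exact Set.disjoint_left.mp (hdisj hi.ne) hxi hx'
        rw [Finset.sum_range_succ, ← ih, heq, hμadd _ _ (hf n) hd]
    have hdecomp : ∀ n, μ (⋃ i, f i) = (∑ i ∈ Finset.range n, μ (f i)) + μ (C n) := by
      intro n
      have hd : Disjoint (⋃ i ∈ Finset.range n, f i) (C n) := by
        refine Set.disjoint_left.mpr fun x hx hx' => ?_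
        simp only [Set.mem_iUnion, Finset.mem_range] at hx
        simp only [hC, Set.mem_iUnion] at hx'
        obtain ⟨i, hi, hxi⟩ := hx
        obtain ⟨j, hxj⟩ := hx'
        have hne : i ≠ n + j := by omega
        exact Set.disjoint_left.mp (hdisj hne) hxi hxj
      rw [hsplit n, hμadd _ _ (hCmeas n) hd, hfin n]
    have hle1 : ∑' i, μ (f i) ≤ μ (⋃ i, f i) := by
      rw [ENNReal.tsum_eq_iSup_sum]
      refine iSup_le fun F => ?_
      obtain ⟨n, hn⟩ := F.exists_nat_subset_range
      calc ∑ i ∈ F, μ (f i) ≤ ∑ i ∈ Finset.range n, μ (f i) :=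
            Finset.sum_le_sum_of_subset hn
        _ ≤ _ := by rw [hdecomp n]; exact le_self_add
    have hge : μ (⋃ i, f i) ≤ ∑' i, μ (f i) := by
      have hVC : Tendsto (fun n => V (C n)) atTop (𝓝 0) := hcont C hCmeas hCanti hCempty
      have htend : Tendsto (fun n => (∑ i ∈ Finset.range n, μ (f i)) + V (C n)) atTop
          (𝓝 ((∑' i, μ (f i)) + 0)) := (ENNReal.tendsto_nat_tsum _).add hVC
      rw [add_zero] at htend
      refine ge_of_tendsto htend (Filter.Eventually.of_forall fun n => ?_)
      calc μ (⋃ i, f i) = (∑ i ∈ Finset.range n, μ (f i)) + μ (C n) := hdecomp n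
        _ ≤ (∑ i ∈ Finset.range n, μ (f i)) + V (C n) :=
            add_le_add_right (hμle _ (hCmeas n)) _
    exact le_antisymm hge hle1
  -- construct the measure
  let P' : Measure Ω := Measure.ofMeasurable (fun B _ => μ B) hμempty
    (fun f hf hd => hμiUnion f hf hd)
  have hP'app : ∀ B : Set Ω, MeasurableSet B → P' B = μ B := fun B hB =>
    Measure.ofMeasurable_apply B hB
  -- P' is a probability measure
  have hμuniv : μ Set.univ = 1 := by
    have h1 : ∀ m : ℕ, 1 ≤ m → s m Set.univ = 1 := by
      intro m hm
      haveI := hprob (P m) (hPΘ m)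
      simp only [hs, Set.preimage_univ, measure_univ, Finset.sum_const,
        Finset.card_range, nsmul_eq_mul, mul_one]
      exact ENNReal.inv_mul_cancel (by exact_mod_cast Nat.one_le_iff_ne_zero.mp hm)
        (ENNReal.natCast_ne_top m)
    have h2 : Tendsto (fun m => s m Set.univ) atTop (𝓝 1) :=
      tendsto_const_nhds.congr' (by
        filter_upwards [eventually_ge_atTop 1] with m hm using (h1 m hm).symm)
    exact tendsto_nhds_unique (hμ _) (h2.mono_left h𝒰)
  haveI hP'prob : IsProbabilityMeasure P' :=
    ⟨by rw [hP'app _ MeasurableSet.univ, hμuniv]⟩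
  have hP'Θ : P' ∈ Θ := hmax P' hP'prob fun B hB => by
    rw [hP'app B hB]; exact hμle B hB
  -- invariance
  have hinv : ∀ B : Set Ω, MeasurableSet B → μ (T ⁻¹' B) = μ B := by
    intro B hB
    have hcomp : ∀ k : ℕ, T^[k] ⁻¹' (T ⁻¹' B) = T^[k + 1] ⁻¹' B := by
      intro k
      rw [Function.iterate_succ', Set.preimage_comp]
    have hg_le : ∀ m k : ℕ, P m (T^[k] ⁻¹' B) ≤ 1 := by
      intro m k
      haveI := hprob (P m) (hPΘ m)
      exact prob_le_one
    have hb1 : ∀ m, s m (T ⁻¹' B) ≤ s m B + (m : ℝ≥0∞)⁻¹ := by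
      intro m
      simp only [hs]
      have : ∑ k ∈ Finset.range m, P m (T^[k] ⁻¹' (T ⁻¹' B))
          ≤ (∑ k ∈ Finset.range m, P m (T^[k] ⁻¹' B)) + 1 := by
        calc ∑ k ∈ Finset.range m, P m (T^[k] ⁻¹' (T ⁻¹' B))
            = ∑ k ∈ Finset.range m, P m (T^[k + 1] ⁻¹' B) := by
              refine Finset.sum_congr rfl fun k _ => by rw [hcomp k]
          _ ≤ ∑ k ∈ Finset.range (m + 1), P m (T^[k] ⁻¹' B) := by
              rw [Finset.sum_range_succ' (fun k => P m (T^[k] ⁻¹' B)) m]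
              exact le_add_of_nonneg_right zero_le
          _ = (∑ k ∈ Finset.range m, P m (T^[k] ⁻¹' B)) + P m (T^[m] ⁻¹' B) :=
              Finset.sum_range_succ _ m
          _ ≤ _ := add_le_add_right (hg_le m m) _
      calc (m : ℝ≥0∞)⁻¹ * ∑ k ∈ Finset.range m, P m (T^[k] ⁻¹' (T ⁻¹' B))
          ≤ (m : ℝ≥0∞)⁻¹ * ((∑ k ∈ Finset.range m, P m (T^[k] ⁻¹' B)) + 1) :=
            mul_le_mul_right this _
        _ = _ := by rw [mul_add, mul_one]
    have hb2 : ∀ m, s m B ≤ s m (T ⁻¹' B) + (m : ℝ≥0∞)⁻¹ := by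
      intro m
      simp only [hs]
      have : ∑ k ∈ Finset.range m, P m (T^[k] ⁻¹' B)
          ≤ (∑ k ∈ Finset.range m, P m (T^[k] ⁻¹' (T ⁻¹' B))) + 1 := by
        calc ∑ k ∈ Finset.range m, P m (T^[k] ⁻¹' B)
            ≤ ∑ k ∈ Finset.range (m + 1), P m (T^[k] ⁻¹' B) := by
              rw [Finset.sum_range_succ]
              exact le_add_of_nonneg_right zero_le
          _ = (∑ k ∈ Finset.range m, P m (T^[k + 1] ⁻¹' B)) + P m (T^[0] ⁻¹' B) :=
              Finset.sum_range_succ' _ m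
          _ = (∑ k ∈ Finset.range m, P m (T^[k] ⁻¹' (T ⁻¹' B))) + P m (T^[0] ⁻¹' B) := by
              congr 1
              exact Finset.sum_congr rfl fun k _ => by rw [hcomp k]
          _ ≤ _ := add_le_add_right (hg_le m 0) _
      calc (m : ℝ≥0∞)⁻¹ * ∑ k ∈ Finset.range m, P m (T^[k] ⁻¹' B)
          ≤ (m : ℝ≥0∞)⁻¹ * ((∑ k ∈ Finset.range m, P m (T^[k] ⁻¹' (T ⁻¹' B))) + 1) :=
            mul_le_mul_right this _
        _ = _ := by rw [mul_add, mul_one]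
    have hz : Tendsto (fun m : ℕ => ((m : ℝ≥0∞))⁻¹) (𝒰 : Filter ℕ) (𝓝 0) :=
      ENNReal.tendsto_inv_nat_nhds_zero.mono_left h𝒰
    have l1 : μ (T ⁻¹' B) ≤ μ B := by
      have h : Tendsto (fun m => s m B + (m : ℝ≥0∞)⁻¹) (𝒰 : Filter ℕ) (𝓝 (μ B)) := by
        have := (hμ B).add hz
        rwa [add_zero] at this
      exact le_of_tendsto_of_tendsto' (hμ (T ⁻¹' B)) h hb1
    have l2 : μ B ≤ μ (T ⁻¹' B) := by
      have h : Tendsto (fun m => s m (T ⁻¹' B) + (m : ℝ≥0∞)⁻¹) (𝒰 : Filter ℕ)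
          (𝓝 (μ (T ⁻¹' B))) := by
        have := (hμ (T ⁻¹' B)).add hz
        rwa [add_zero] at this
      exact le_of_tendsto_of_tendsto' (hμ B) h hb2
    exact le_antisymm l1 l2
  -- μ A = 1
  have hAiter : ∀ k : ℕ, T^[k] ⁻¹' A = A := by
    intro k
    induction k with
    | zero => simp
    | succ n ih => rw [Function.iterate_succ, Set.preimage_comp, ih, hTA]
  have hlow : Tendsto (fun m : ℕ => 1 - ((m : ℝ≥0∞) + 1)⁻¹) atTop (𝓝 1) := by
    have h0 : Tendsto (fun m : ℕ => ((m : ℝ≥0∞) + 1)⁻¹) atTop (𝓝 0) := by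
      have := ENNReal.tendsto_inv_nat_nhds_zero.comp (tendsto_add_atTop_nat 1)
      refine this.congr fun m => ?_
      simp [Function.comp, Nat.cast_add]
    have := (ENNReal.Tendsto.sub (tendsto_const_nhds (x := (1 : ℝ≥0∞))) h0
      (Or.inl ENNReal.one_ne_top))
    simpa using this
  have hPA1 : Tendsto (fun m => P m A) atTop (𝓝 1) := by
    refine tendsto_of_tendsto_of_tendsto_of_le_of_le hlow tendsto_const_nhds
      (fun m => (hPA m).le) (fun m => hPA_le_one m)
  have hsA : Tendsto (fun m => s m A) atTop (𝓝 1) := by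
    refine hPA1.congr' ?_
    filter_upwards [eventually_ge_atTop 1] with m hm
    simp only [hs, hAiter]
    rw [Finset.sum_const, Finset.card_range, nsmul_eq_mul, ← mul_assoc,
      ENNReal.inv_mul_cancel (by exact_mod_cast Nat.one_le_iff_ne_zero.mp hm)
        (ENNReal.natCast_ne_top m), one_mul]
  have hμA : μ A = 1 := tendsto_nhds_unique (hμ A) (hsA.mono_left h𝒰)
  refine ⟨P', hP'Θ, fun B hB => ?_, ?_⟩
  · rw [hP'app _ (hT hB), hP'app _ hB, hinv B hB]
  · rw [hP'app _ hA, hμA]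
end

section
/- Assume 𝕍 is continuous, T-invariant, and T-ergodic. Then the set Θ* of T-ergodic probability measures belonging to Θ is finite. -/
open MeasureTheory Filter Set
open scoped ENNReal

section Aux

variable {Ω : Type*} [MeasurableSpace Ω]

private lemma diff_meas_eq (μ : Measure Ω) [IsFiniteMeasure μ] {X Y : Set Ω}
    (hY : MeasurableSet Y) (hX : MeasurableSet X) (h : μ X = μ Y) :
    μ (X \ Y) = μ (Y \ X) := by
  have h1 : μ (X ∩ Y) + μ (X \ Y) = μ X := measure_inter_add_diff X hY
  have h2 : μ (Y ∩ X) + μ (Y \ X) = μ Y := measure_inter_add_diff Y hX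
  rw [Set.inter_comm] at h2
  exact (ENNReal.add_right_inj (measure_ne_top μ _)).mp (h1.trans (h.trans h2.symm))

private lemma null_of_lt_on (Q : Measure Ω) {f : Ω → ℝ≥0∞} (hf : Measurable f)
    {E : Set Ω} (hE : MeasurableSet E) (hEfin : Q E ≠ ∞)
    (hlt : ∀ x ∈ E, f x < 1) (heq : ∫⁻ x in E, f x ∂Q = Q E) : Q E = 0 := by
  have hle : f ≤ᵐ[Q.restrict E] 1 := by
    filter_upwards [ae_restrict_mem hE] with x hx
    exact (hlt x hx).le
  have hone : ∫⁻ x in E, (1 : ℝ≥0∞) ∂Q = Q E := by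
    simp
  have hsub : ∫⁻ x in E, (1 - f x) ∂Q = 0 := by
    have h := lintegral_sub hf (μ := Q.restrict E) (f := fun _ => (1 : ℝ≥0∞))
      (by rw [heq]; exact hEfin) hle
    rw [h, hone, heq, tsub_self]
  have hz : (fun x => 1 - f x) =ᵐ[Q.restrict E] 0 :=
    (lintegral_eq_zero_iff (measurable_const.sub hf)).mp hsub
  have hFalse : ∀ᵐ x ∂Q.restrict E, False := by
    filter_upwards [hz, ae_restrict_mem hE] with x h1 h2
    exact absurd (tsub_eq_zero_iff_le.mp h1) (not_le.mpr (hlt x h2))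
  have : Q.restrict E univ = 0 := by
    simpa [ae_iff] using hFalse
  simpa [Measure.restrict_apply_univ] using this

private lemma null_of_gt_on (Q : Measure Ω) {f : Ω → ℝ≥0∞} (hf : Measurable f)
    {E : Set Ω} (hE : MeasurableSet E) (hEfin : Q E ≠ ∞)
    (hgt : ∀ x ∈ E, 1 < f x) (heq : ∫⁻ x in E, f x ∂Q = Q E) : Q E = 0 := by
  have hle : (fun _ => (1 : ℝ≥0∞)) ≤ᵐ[Q.restrict E] f := by
    filter_upwards [ae_restrict_mem hE] with x hx
    exact (hgt x hx).le
  have hone : ∫⁻ x in E, (1 : ℝ≥0∞) ∂Q = Q E := by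
    simp
  have hsub : ∫⁻ x in E, (f x - 1) ∂Q = 0 := by
    have h := lintegral_sub (measurable_const (a := (1:ℝ≥0∞))) (μ := Q.restrict E) (f := f)
      (by rw [hone]; exact hEfin) hle
    rw [h, hone, heq, tsub_self]
  have hz : (fun x => f x - 1) =ᵐ[Q.restrict E] 0 :=
    (lintegral_eq_zero_iff (hf.sub measurable_const)).mp hsub
  have hFalse : ∀ᵐ x ∂Q.restrict E, False := by
    filter_upwards [hz, ae_restrict_mem hE] with x h1 h2
    exact absurd (tsub_eq_zero_iff_le.mp h1) (not_le.mpr (hgt x h2))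
  have : Q.restrict E univ = 0 := by
    simpa [ae_iff] using hFalse
  simpa [Measure.restrict_apply_univ] using this

/-- An invariant probability measure absolutely continuous w.r.t. an ergodic invariant
probability measure equals it. -/
private lemma eq_of_ac (T : Ω → Ω) (hT : Measurable T)
    (P Q : Measure Ω) [IsProbabilityMeasure P] [IsProbabilityMeasure Q]
    (hPinv : ∀ A : Set Ω, MeasurableSet A → P (T ⁻¹' A) = P A)
    (hQinv : ∀ A : Set Ω, MeasurableSet A → Q (T ⁻¹' A) = Q A)
    (hQerg : ∀ A : Set Ω, MeasurableSet A → T ⁻¹' A = A → Q A = 0 ∨ Q A = 1)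
    (hPQ : P ≪ Q) : P = Q := by
  have hQmp : MeasurePreserving T Q Q :=
    ⟨hT, Measure.ext fun s hs => by rw [Measure.map_apply hT hs]; exact hQinv s hs⟩
  have hQE : QuasiErgodic T Q := by
    refine Ergodic.quasiErgodic ⟨hQmp, ⟨fun s hs hinv => ?_⟩⟩
    rw [eventuallyConst_set']
    rcases hQerg s hs hinv with h | h
    · exact Or.inl (ae_eq_empty.mpr h)
    · refine Or.inr (ae_eq_univ.mpr ?_)
      rw [prob_compl_eq_zero_iff hs]
      exact h
  set f : Ω → ℝ≥0∞ := P.rnDeriv Q with hfdef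
  have hf : Measurable f := Measure.measurable_rnDeriv P Q
  have hPd : Q.withDensity f = P := Measure.withDensity_rnDeriv_eq P Q hPQ
  have hP_apply : ∀ {E : Set Ω}, MeasurableSet E → P E = ∫⁻ x in E, f x ∂Q := by
    intro E hE
    rw [← hPd, withDensity_apply _ hE]
  -- the set where the density is < 1
  have key : ∀ X : Set Ω, MeasurableSet X →
      (∀ x ∈ X, f x < 1) → (∀ x ∉ X, 1 ≤ f x) → Q X = 0 ∧ P X = 0 := by
    intro X hX hlt hge
    have hTX : MeasurableSet (T ⁻¹' X) := hT hX
    have hQd : Q (X \ T ⁻¹' X) = Q (T ⁻¹' X \ X) :=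
      diff_meas_eq Q hTX hX (hQinv X hX).symm
    have hPd' : P (X \ T ⁻¹' X) = P (T ⁻¹' X \ X) :=
      diff_meas_eq P hTX hX (hPinv X hX).symm
    have hE : MeasurableSet (X \ T ⁻¹' X) := hX.diff hTX
    have hF : MeasurableSet (T ⁻¹' X \ X) := hTX.diff hX
    -- P ≤ Q on subsets of X
    have hPleQ : ∀ {E : Set Ω}, MeasurableSet E → E ⊆ X → P E ≤ Q E := by
      intro E hEm hEX
      rw [hP_apply hEm]
      calc ∫⁻ x in E, f x ∂Q ≤ ∫⁻ x in E, 1 ∂Q := by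
            refine lintegral_mono_ae ?_
            filter_upwards [ae_restrict_mem hEm] with x hx
            exact (hlt x (hEX hx)).le
        _ = Q E := by simp
    -- Q ≤ P on subsets of Xᶜ
    have hQleP : ∀ {E : Set Ω}, MeasurableSet E → (∀ x ∈ E, x ∉ X) → Q E ≤ P E := by
      intro E hEm hEX
      rw [hP_apply hEm]
      calc Q E = ∫⁻ x in E, 1 ∂Q := by simp
        _ ≤ ∫⁻ x in E, f x ∂Q := by
            refine lintegral_mono_ae ?_
            filter_upwards [ae_restrict_mem hEm] with x hx
            exact hge x (hEX x hx)
    have hchain : P (X \ T ⁻¹' X) = Q (X \ T ⁻¹' X) := by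
      have h1 : Q (X \ T ⁻¹' X) ≤ P (X \ T ⁻¹' X) := by
        rw [hQd, hPd']
        exact hQleP hF (fun x hx => hx.2)
      exact le_antisymm (hPleQ hE diff_subset) h1
    have hE0 : Q (X \ T ⁻¹' X) = 0 :=
      null_of_lt_on Q hf hE (measure_ne_top Q _)
        (fun x hx => hlt x hx.1) (by rw [← hP_apply hE]; exact hchain)
    have hF0 : Q (T ⁻¹' X \ X) = 0 := by rw [← hQd]; exact hE0
    have hae : T ⁻¹' X =ᵐ[Q] X := ae_eq_set.mpr ⟨hF0, hE0⟩
    rcases hQE.ae_empty_or_univ₀ hX.nullMeasurableSet hae with h0 | h1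
    · have hQX : Q X = 0 := ae_eq_empty.mp h0
      have hPX : P X = 0 := hPQ hQX
      exact ⟨hQX, hPX⟩
    · exfalso
      have hQX : Q X = 1 := by
        rw [show Q X = Q univ from measure_congr h1]
        simp
      have hint : ∫⁻ x in X, f x ∂Q = Q X := by
        rw [setLIntegral_congr h1, setLIntegral_univ, ← setLIntegral_univ,
          ← hP_apply MeasurableSet.univ, hQX]
        simp
      have := null_of_lt_on Q hf hX (measure_ne_top Q _) hlt hint
      rw [this] at hQX
      exact zero_ne_one hQX
  -- sets with density above 1
  have key' : ∀ X : Set Ω, MeasurableSet X →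
      (∀ x ∈ X, 1 < f x) → (∀ x ∉ X, f x ≤ 1) → Q X = 0 := by
    intro X hX hgt hle
    have hTX : MeasurableSet (T ⁻¹' X) := hT hX
    have hQd : Q (X \ T ⁻¹' X) = Q (T ⁻¹' X \ X) :=
      diff_meas_eq Q hTX hX (hQinv X hX).symm
    have hPd' : P (X \ T ⁻¹' X) = P (T ⁻¹' X \ X) :=
      diff_meas_eq P hTX hX (hPinv X hX).symm
    have hE : MeasurableSet (X \ T ⁻¹' X) := hX.diff hTX
    have hF : MeasurableSet (T ⁻¹' X \ X) := hTX.diff hX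
    have hQleP : ∀ {E : Set Ω}, MeasurableSet E → E ⊆ X → Q E ≤ P E := by
      intro E hEm hEX
      rw [hP_apply hEm]
      calc Q E = ∫⁻ x in E, 1 ∂Q := by simp
        _ ≤ ∫⁻ x in E, f x ∂Q := by
            refine lintegral_mono_ae ?_
            filter_upwards [ae_restrict_mem hEm] with x hx
            exact (hgt x (hEX hx)).le
    have hPleQ : ∀ {E : Set Ω}, MeasurableSet E → (∀ x ∈ E, x ∉ X) → P E ≤ Q E := by
      intro E hEm hEX
      rw [hP_apply hEm]
      calc ∫⁻ x in E, f x ∂Q ≤ ∫⁻ x in E, 1 ∂Q := by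
            refine lintegral_mono_ae ?_
            filter_upwards [ae_restrict_mem hEm] with x hx
            exact hle x (hEX x hx)
        _ = Q E := by simp
    have hchain : P (X \ T ⁻¹' X) = Q (X \ T ⁻¹' X) := by
      have h1 : P (X \ T ⁻¹' X) ≤ Q (X \ T ⁻¹' X) := by
        rw [hQd, hPd']
        exact hPleQ hF (fun x hx => hx.2)
      exact le_antisymm h1 (hQleP hE diff_subset)
    have hE0 : Q (X \ T ⁻¹' X) = 0 :=
      null_of_gt_on Q hf hE (measure_ne_top Q _)
        (fun x hx => hgt x hx.1) (by rw [← hP_apply hE]; exact hchain)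
    have hF0 : Q (T ⁻¹' X \ X) = 0 := by rw [← hQd]; exact hE0
    have hae : T ⁻¹' X =ᵐ[Q] X := ae_eq_set.mpr ⟨hF0, hE0⟩
    rcases hQE.ae_empty_or_univ₀ hX.nullMeasurableSet hae with h0 | h1
    · exact ae_eq_empty.mp h0
    · exfalso
      have hQX : Q X = 1 := by
        rw [show Q X = Q univ from measure_congr h1]
        simp
      have hint : ∫⁻ x in X, f x ∂Q = Q X := by
        rw [setLIntegral_congr h1, setLIntegral_univ, ← setLIntegral_univ,
          ← hP_apply MeasurableSet.univ, hQX]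
        simp
      have := null_of_gt_on Q hf hX (measure_ne_top Q _) hgt hint
      rw [this] at hQX
      exact zero_ne_one hQX
  have hA : MeasurableSet {x | f x < 1} := measurableSet_lt hf measurable_const
  have hB : MeasurableSet {x | (1 : ℝ≥0∞) < f x} := measurableSet_lt measurable_const hf
  obtain ⟨hQA, -⟩ := key {x | f x < 1} hA (fun x hx => hx) (fun x hx => not_lt.mp hx)
  have hQB := key' {x | (1 : ℝ≥0∞) < f x} hB (fun x hx => hx) (fun x hx => not_lt.mp hx)
  have hone : f =ᵐ[Q] 1 := by
    have hU : Q ({x | f x < 1} ∪ {x | (1 : ℝ≥0∞) < f x}) = 0 := measure_union_null hQA hQB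
    rw [Filter.EventuallyEq, ae_iff]
    refine measure_mono_null (fun x hx => ?_) hU
    rcases lt_trichotomy (f x) 1 with h | h | h
    · exact Or.inl h
    · exact absurd h hx
    · exact Or.inr h
  calc P = Q.withDensity f := hPd.symm
    _ = Q.withDensity 1 := withDensity_congr_ae hone
    _ = Q := withDensity_one

/-- Two distinct ergodic invariant probability measures are separated by an exactly
invariant set. -/
private lemma exists_invariant_sep (T : Ω → Ω) (hT : Measurable T)
    (P Q : Measure Ω) [IsProbabilityMeasure P] [IsProbabilityMeasure Q]
    (hPinv : ∀ A : Set Ω, MeasurableSet A → P (T ⁻¹' A) = P A)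
    (hQinv : ∀ A : Set Ω, MeasurableSet A → Q (T ⁻¹' A) = Q A)
    (hPerg : ∀ A : Set Ω, MeasurableSet A → T ⁻¹' A = A → P A = 0 ∨ P A = 1)
    (hQerg : ∀ A : Set Ω, MeasurableSet A → T ⁻¹' A = A → Q A = 0 ∨ Q A = 1)
    (hne : P ≠ Q) :
    ∃ A : Set Ω, MeasurableSet A ∧ T ⁻¹' A = A ∧ P A = 1 ∧ Q A = 0 := by
  obtain ⟨s, hs, hs0, hs1⟩ := Measure.mutuallySingular_singularPart P Q
  -- hs0 : P.singularPart Q s = 0, hs1 : Q sᶜ = 0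
  set S : Set Ω := sᶜ with hSdef
  have hSm : MeasurableSet S := hs.compl
  have hQS : Q S = 0 := hs1
  set g : ℕ → Set Ω := fun n => (T^[n]) ⁻¹' S with hgdef
  have hgm : ∀ n, MeasurableSet (g n) := fun n => (hT.iterate n) hSm
  have hg_succ : ∀ n, g (n + 1) = T ⁻¹' g n := fun n => by
    simp only [hgdef, Function.iterate_succ, Set.preimage_comp]
  have hPg : ∀ n, P (g n) = P S := by
    intro n
    induction n with
    | zero => rfl
    | succ n ih => rw [hg_succ n, hPinv _ (hgm n), ih]
  have hQg : ∀ n, Q (g n) = 0 := by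
    intro n
    induction n with
    | zero => exact hQS
    | succ n ih => rw [hg_succ n, hQinv _ (hgm n), ih]
  set U : ℕ → Set Ω := fun N => ⋃ n, g (n + N) with hUdef
  have hUm : ∀ N, MeasurableSet (U N) := fun N => MeasurableSet.iUnion fun n => hgm _
  have hU_succ : ∀ N, T ⁻¹' U N = U (N + 1) := by
    intro N
    simp only [hUdef, preimage_iUnion]
    exact iUnion_congr fun n => (hg_succ (n + N)).symm
  have hUanti : Antitone U := by
    refine antitone_nat_of_succ_le fun N => iUnion_subset fun n => ?_
    have h : n + (N + 1) = (n + 1) + N := by omega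
    rw [h]
    exact subset_iUnion (fun m => g (m + N)) (n + 1)
  set Atil : Set Ω := ⋂ N, U N with hAtildef
  have hAm : MeasurableSet Atil := MeasurableSet.iInter fun N => hUm N
  have hAinv : T ⁻¹' Atil = Atil := by
    rw [hAtildef, preimage_iInter]
    have h1 : (⋂ N, T ⁻¹' U N) = ⋂ N, U (N + 1) := iInter_congr hU_succ
    rw [h1]
    ext x
    simp only [mem_iInter]
    constructor
    · intro hx N
      exact hUanti (Nat.le_succ N) (hx N)
    · intro hx N
      exact hx (N + 1)
  have hQAtil : Q Atil = 0 := by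
    refine measure_mono_null (iInter_subset U 0) ?_
    exact measure_iUnion_null fun n => hQg _
  have hPAtil_ge : P S ≤ P Atil := by
    have htend : Tendsto (fun N => P (U N)) atTop (nhds (P Atil)) :=
      tendsto_measure_iInter_atTop (fun N => (hUm N).nullMeasurableSet) hUanti
        ⟨0, measure_ne_top P _⟩
    refine ge_of_tendsto' htend fun N => ?_
    have : g (0 + N) ⊆ U N := subset_iUnion (fun n => g (n + N)) 0
    calc P S = P (g (0 + N)) := (hPg _).symm
      _ ≤ P (U N) := measure_mono this
  rcases hPerg Atil hAm hAinv with h0 | h1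
  · -- P Atil = 0 forces P ≪ Q, hence P = Q, contradiction
    exfalso
    have hPS : P S = 0 := le_antisymm (h0 ▸ hPAtil_ge) zero_le
    have hsing : P.singularPart Q = 0 := by
      have huniv : P.singularPart Q univ = 0 := by
        have hsplit : P.singularPart Q univ ≤ P.singularPart Q s + P.singularPart Q S := by
          rw [show (univ : Set Ω) = s ∪ S from by simp [hSdef]]
          exact measure_union_le s S
        have hS0 : P.singularPart Q S = 0 :=
          le_antisymm (le_trans (Measure.singularPart_le P Q S) hPS.le) zero_le
        rw [hs0, hS0, add_zero] at hsplit
        exact le_antisymm hsplit zero_le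
      exact Measure.measure_univ_eq_zero.mp huniv
    have hac : P ≪ Q := by
      have := Measure.haveLebesgueDecomposition_add P Q
      rw [hsing, zero_add] at this
      rw [this]
      exact withDensity_absolutelyContinuous Q _
    exact hne (eq_of_ac T hT P Q hPinv hQinv hQerg hac)
  · exact ⟨Atil, hAm, hAinv, h1, hQAtil⟩

end Aux

/-- If `V` is continuous, `T`-invariant and `T`-ergodic, then the
set `Θ*` of `T`-ergodic probability measures in `Θ` is finite. -/
theorem stmt_4 {Ω : Type*} [MeasurableSpace Ω] (T : Ω → Ω) (hT : Measurable T)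
    (Θ : Set (Measure Ω)) (hΘne : Θ.Nonempty)
    (hprob : ∀ P ∈ Θ, IsProbabilityMeasure P)
    (V : Set Ω → ℝ≥0∞)
    (hV : ∀ A : Set Ω, V A = ⨆ P ∈ Θ, P A)
    (hmax : ∀ P : Measure Ω, IsProbabilityMeasure P →
      (∀ A, MeasurableSet A → P A ≤ V A) → P ∈ Θ)
    (hcont : ∀ A : ℕ → Set Ω, (∀ n, MeasurableSet (A n)) → Antitone A →
      (⋂ n, A n) = ∅ → Tendsto (fun n => V (A n)) atTop (nhds 0))
    (hVinv : ∀ A : Set Ω, MeasurableSet A → V (T ⁻¹' A) = V A)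
    (hVerg : ∀ A : Set Ω, MeasurableSet A → T ⁻¹' A = A → V A = 0 ∨ V A = 1) :
    {P ∈ Θ | (∀ A : Set Ω, MeasurableSet A → P (T ⁻¹' A) = P A) ∧
      (∀ A : Set Ω, MeasurableSet A → T ⁻¹' A = A → P A = 0 ∨ P A = 1)}.Finite := by
  by_contra hfin
  have hinf : {P ∈ Θ | (∀ A : Set Ω, MeasurableSet A → P (T ⁻¹' A) = P A) ∧
      (∀ A : Set Ω, MeasurableSet A → T ⁻¹' A = A → P A = 0 ∨ P A = 1)}.Infinite := hfin
  set e := hinf.natEmbedding with hedef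
  set P : ℕ → Measure Ω := fun n => (e n : Measure Ω) with hPdef
  have hPinj : Function.Injective P := fun m n h =>
    e.injective (Subtype.ext h)
  have hmem : ∀ n, P n ∈ Θ := fun n => (e n).2.1
  have hPinv : ∀ n, ∀ A : Set Ω, MeasurableSet A → P n (T ⁻¹' A) = P n A :=
    fun n => (e n).2.2.1
  have hPerg : ∀ n, ∀ A : Set Ω, MeasurableSet A → T ⁻¹' A = A → P n A = 0 ∨ P n A = 1 :=
    fun n => (e n).2.2.2
  have hPprob : ∀ n, IsProbabilityMeasure (P n) := fun n => hprob _ (hmem n)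
  -- separating invariant sets
  have hsep : ∀ m n : ℕ, ∃ A : Set Ω, MeasurableSet A ∧ T ⁻¹' A = A ∧
      P m A = 1 ∧ (m ≠ n → P n A = 0) := by
    intro m n
    by_cases h : m = n
    · refine ⟨univ, MeasurableSet.univ, rfl, ?_, fun hmn => absurd h hmn⟩
      haveI := hPprob m
      simp
    · haveI := hPprob m
      haveI := hPprob n
      obtain ⟨A, hAm, hAinv, h1, h0⟩ :=
        exists_invariant_sep T hT (P m) (P n) (hPinv m) (hPinv n) (hPerg m) (hPerg n)
          (fun hc => h (hPinj hc))
      exact ⟨A, hAm, hAinv, h1, fun _ => h0⟩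
  choose A hAmeas hAinv hA1 hA0 using hsep
  set B : ℕ → Set Ω := fun m => ⋂ n, A m n with hBdef
  have hBmeas : ∀ m, MeasurableSet (B m) := fun m => MeasurableSet.iInter fun n => hAmeas m n
  have hBinv : ∀ m, T ⁻¹' B m = B m := by
    intro m
    simp only [hBdef, preimage_iInter]
    exact iInter_congr fun n => hAinv m n
  have hB1 : ∀ m, P m (B m) = 1 := by
    intro m
    haveI := hPprob m
    have hcompl : P m (B m)ᶜ = 0 := by
      rw [hBdef]
      simp only [compl_iInter]
      refine measure_iUnion_null fun n => ?_
      rw [prob_compl_eq_zero_iff (hAmeas m n)]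
      exact hA1 m n
    rw [← prob_compl_eq_zero_iff (hBmeas m)]
    exact hcompl
  have hB0 : ∀ m n, m ≠ n → P n (B m) = 0 := by
    intro m n hmn
    refine le_antisymm (le_trans (measure_mono ?_) (hA0 m n hmn).le) zero_le
    exact iInter_subset _ n
  set C : ℕ → Set Ω := fun m => B m \ ⋃ (k : ℕ) (_ : k < m), B k with hCdef
  have hCmeas : ∀ m, MeasurableSet (C m) :=
    fun m => (hBmeas m).diff (MeasurableSet.iUnion fun k => MeasurableSet.iUnion fun _ =>
      hBmeas k)
  have hC1 : ∀ m, P m (C m) = 1 := by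
    intro m
    have hnull : P m (⋃ (k : ℕ) (_ : k < m), B k) = 0 :=
      measure_iUnion_null fun k => measure_iUnion_null fun hk => hB0 k m (Nat.ne_of_lt hk)
    rw [hCdef]
    simp only
    rw [measure_diff_null hnull]
    exact hB1 m
  have hCdisj : ∀ k m : ℕ, k < m → ∀ x, x ∈ C m → x ∉ C k := by
    intro k m hkm x hxm hxk
    apply hxm.2
    exact mem_iUnion.mpr ⟨k, mem_iUnion.mpr ⟨hkm, hxk.1⟩⟩
  set D : ℕ → Set Ω := fun N => ⋃ n, C (n + N) with hDdef
  have hDmeas : ∀ N, MeasurableSet (D N) := fun N => MeasurableSet.iUnion fun n => hCmeas _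
  have hDanti : Antitone D := by
    refine antitone_nat_of_succ_le fun N => iUnion_subset fun n => ?_
    have h : n + (N + 1) = (n + 1) + N := by omega
    rw [h]
    exact subset_iUnion (fun m => C (m + N)) (n + 1)
  have hDempty : (⋂ N, D N) = ∅ := by
    ext x
    simp only [mem_iInter, mem_empty_iff_false, iff_false]
    intro hx
    obtain ⟨n₀, hn₀⟩ := mem_iUnion.mp (hx 0)
    obtain ⟨n₁, hn₁⟩ := mem_iUnion.mp (hx (n₀ + 0 + 1))
    exact hCdisj (n₀ + 0) (n₁ + (n₀ + 0 + 1)) (by omega) x hn₁ hn₀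
  have hVD : ∀ N, (1 : ℝ≥0∞) ≤ V (D N) := by
    intro N
    have h1 : P N (C (0 + N)) ≤ P N (D N) :=
      measure_mono (subset_iUnion (fun n => C (n + N)) 0)
    have h2 : P N (D N) ≤ V (D N) := by
      rw [hV]
      exact le_iSup₂ (f := fun (μ : Measure Ω) (_ : μ ∈ Θ) => μ (D N)) (P N) (hmem N)
    calc (1 : ℝ≥0∞) = P N (C N) := (hC1 N).symm
      _ = P N (C (0 + N)) := by rw [Nat.zero_add]
      _ ≤ V (D N) := le_trans h1 h2
  have htend := hcont D hDmeas hDanti hDempty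
  have : (1 : ℝ≥0∞) ≤ 0 := ge_of_tendsto' htend hVD
  simp at this
end

section
/- Assume 𝕍 is continuous, T-invariant, and T-ergodic. Then Θ₀ equals the convex hull of Θ*: every T-invariant probability measure P ∈ Θ₀ can be written as a finite convex combination P = Σ_{k=1}^n λ_k P_k with P_k ∈ Θ*, λ_k ≥ 0, Σ λ_k = 1, and conversely every such finite convex combination of elements of Θ* belongs to Θ₀. -/
open MeasureTheory Filter
open scoped ENNReal

section AuxiliaryLemmas

open Set Topology Filter

lemma aux_liminf_le {u w e : ℕ → ℝ≥0∞} (h1 : ∀ i, u i ≤ w i + e i)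
    (he : Tendsto e atTop (𝓝 0)) : liminf u atTop ≤ liminf w atTop := by
  refine ENNReal.le_of_forall_pos_le_add fun ε hε _ => ?_
  have hev : ∀ᶠ i in atTop, u i ≤ w i + (ε : ℝ≥0∞) := by
    filter_upwards [ENNReal.tendsto_nhds_zero.mp he ε (by exact_mod_cast hε)] with i hi
    exact (h1 i).trans (add_le_add le_rfl hi)
  calc liminf u atTop ≤ liminf (fun i => w i + (ε : ℝ≥0∞)) atTop := liminf_le_liminf hev
    _ = liminf w atTop + (ε : ℝ≥0∞) := by
        apply liminf_add_const atTop w (ε : ℝ≥0∞)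
        · exact Filter.isCobounded_ge_of_top
        · exact Filter.isBoundedUnder_of ⟨0, fun i => zero_le⟩

lemma aux_liminf_eq {u w e : ℕ → ℝ≥0∞} (h1 : ∀ i, u i ≤ w i + e i) (h2 : ∀ i, w i ≤ u i + e i)
    (he : Tendsto e atTop (𝓝 0)) : liminf u atTop = liminf w atTop :=
  le_antisymm (aux_liminf_le h1 he) (aux_liminf_le h2 he)

section Key
variable {Ω : Type*} [MeasurableSpace Ω]

set_option maxHeartbeats 2000000 in
/-- The key analytic lemma. -/
lemma key_lemma (T : Ω → Ω) (hT : Measurable T)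
    (Θ : Set (Measure Ω)) (hprob : ∀ P ∈ Θ, IsProbabilityMeasure P)
    (V : Set Ω → ℝ≥0∞) (hV : ∀ A : Set Ω, V A = ⨆ P ∈ Θ, P A)
    (hVinv : ∀ A : Set Ω, MeasurableSet A → V (T ⁻¹' A) = V A)
    (hVerg : ∀ A : Set Ω, MeasurableSet A → T ⁻¹' A = A → V A = 0 ∨ V A = 1)
    (P : Measure Ω) (hPΘ : P ∈ Θ)
    (hPinv : ∀ A : Set Ω, MeasurableSet A → P (T ⁻¹' A) = P A)
    (C : Set Ω) (hCm : MeasurableSet C) (hCinv : T ⁻¹' C = C) (hC0 : P C ≠ 0)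
    (A : Set Ω) (hA : MeasurableSet A) : P (A ∩ C) ≤ V A * P C := by
  haveI hPprob : IsProbabilityMeasure P := hprob P hPΘ
  have hTP : MeasurePreserving T P P :=
    ⟨hT, Measure.ext fun s hs => (Measure.map_apply hT hs).trans (hPinv s hs)⟩
  -- iterated preimages
  have hAk : ∀ k : ℕ, MeasurableSet ((T^[k]) ⁻¹' A) := fun k => (hT.iterate k) hA
  have hiter : ∀ k : ℕ, T ⁻¹' ((T^[k]) ⁻¹' A) = (T^[k + 1]) ⁻¹' A := by
    intro k; ext ω; simp [Function.iterate_succ_apply]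
  have hCiter : ∀ k : ℕ, (T^[k]) ⁻¹' C = C := by
    intro k; induction k with
    | zero => simp
    | succ k ih => rw [Function.iterate_succ, Set.preimage_comp, ih, hCinv]
  have hVk : ∀ k : ℕ, V ((T^[k]) ⁻¹' A) = V A := by
    intro k; induction k with
    | zero => simp
    | succ k ih => rw [← hiter k, hVinv _ (hAk k), ih]
  -- the ENNReal and real Birkhoff averages
  set S : ℕ → Ω → ℝ≥0∞ :=
    fun N ω => (N : ℝ≥0∞)⁻¹ * ∑ k ∈ Finset.range N, ((T^[k]) ⁻¹' A).indicator 1 ω with hS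
  set Sr : ℕ → Ω → ℝ :=
    fun N ω => (N : ℝ)⁻¹ * ∑ k ∈ Finset.range N, ((T^[k]) ⁻¹' A).indicator 1 ω with hSr
  have hSr_nonneg : ∀ N ω, 0 ≤ Sr N ω := by
    intro N ω
    apply mul_nonneg (by positivity)
    exact Finset.sum_nonneg fun k _ => Set.indicator_nonneg (fun _ _ => zero_le_one) ω
  have hofReal : ∀ N ω, ENNReal.ofReal (Sr N ω) = S N ω := by
    intro N ω
    rcases Nat.eq_zero_or_pos N with h0 | hNpos
    · simp [hSr, hS, h0]
    rw [hSr, hS]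
    rw [ENNReal.ofReal_mul (by positivity), ENNReal.ofReal_inv_of_pos (by exact_mod_cast hNpos),
      ENNReal.ofReal_natCast]
    congr 1
    rw [ENNReal.ofReal_sum_of_nonneg (s := Finset.range N)
      (f := fun k => ((T^[k]) ⁻¹' A).indicator (1 : Ω → ℝ) ω)
      (fun k _ => Set.indicator_nonneg (fun _ _ => zero_le_one) ω)]
    refine Finset.sum_congr rfl fun k _ => ?_
    by_cases hω : ω ∈ (T^[k]) ⁻¹' A <;> simp [hω]
  have hS_le_one : ∀ N ω, S N ω ≤ 1 := by
    intro N ω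
    rcases Nat.eq_zero_or_pos N with h0 | hNpos
    · simp [hS, h0]
    rw [hS]
    calc (N : ℝ≥0∞)⁻¹ * ∑ k ∈ Finset.range N, ((T^[k]) ⁻¹' A).indicator 1 ω
        ≤ (N : ℝ≥0∞)⁻¹ * ∑ _k ∈ Finset.range N, 1 := by
          gcongr with k hk
          exact Set.indicator_le_self' (fun _ _ => zero_le) ω
      _ = (N : ℝ≥0∞)⁻¹ * N := by simp
      _ = 1 := ENNReal.inv_mul_cancel (by exact_mod_cast hNpos.ne') (by simp)
  have hSr_le_one : ∀ N ω, Sr N ω ≤ 1 := by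
    intro N ω
    have := hS_le_one N ω
    rw [← hofReal N ω] at this
    exact (ENNReal.ofReal_le_one.mp this)
  have hS_meas : ∀ N, Measurable (S N) := by
    intro N
    exact (Finset.measurable_sum _ fun k _ =>
      (measurable_one.indicator (hAk k))).const_mul _
  have hSr_meas : ∀ N, Measurable (Sr N) := by
    intro N
    exact (Finset.measurable_sum _ fun k _ =>
      (measurable_one.indicator (hAk k))).const_mul _
  -- Hilbert space / mean ergodic setup
  haveI : Fact ((1:ℝ≥0∞) ≤ 2) := ⟨one_le_two⟩
  set U' : Lp ℝ 2 P →ₗᵢ[ℝ] Lp ℝ 2 P := Lp.compMeasurePreservingₗᵢ ℝ T hTP with hU'def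
  set U : Lp ℝ 2 P →L[ℝ] Lp ℝ 2 P := U'.toContinuousLinearMap with hUdef
  have hUnorm : ‖U‖ ≤ 1 := U'.norm_toContinuousLinearMap_le
  set x : Lp ℝ 2 P := indicatorConstLp 2 hA (measure_ne_top P A) (1:ℝ) with hx
  have hUapp : ∀ y : Lp ℝ 2 P, U y = Lp.compMeasurePreserving T hTP y := fun y => rfl
  have hUk : ∀ k : ℕ, ⇑((⇑U)^[k] x) =ᵐ[P] ((T^[k]) ⁻¹' A).indicator (fun _ => (1:ℝ)) := by
    intro k; induction k with
    | zero =>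
      simpa using
        (indicatorConstLp_coeFn (p := 2) (hs := hA) (hμs := measure_ne_top P A) (c := (1:ℝ)))
    | succ k ih =>
      rw [Function.iterate_succ_apply']
      have h1 : ⇑(U ((⇑U)^[k] x)) =ᵐ[P] (⇑((⇑U)^[k] x)) ∘ T := by
        rw [hUapp]; exact Lp.coeFn_compMeasurePreserving _ _
      refine h1.trans ?_
      have h2 : (⇑((⇑U)^[k] x)) ∘ T =ᵐ[P]
          (((T^[k]) ⁻¹' A).indicator (fun _ => (1:ℝ))) ∘ T :=
        hTP.quasiMeasurePreserving.ae_eq_comp ih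
      refine h2.trans (Filter.EventuallyEq.of_eq ?_)
      funext ω
      have hmem : ω ∈ (T^[k + 1]) ⁻¹' A ↔ T ω ∈ (T^[k]) ⁻¹' A := by
        simp [Function.iterate_succ_apply]
      by_cases hω' : T ω ∈ (T^[k]) ⁻¹' A
      · rw [Function.comp_apply, Set.indicator_of_mem hω', Set.indicator_of_mem (hmem.mpr hω')]
      · rw [Function.comp_apply, Set.indicator_of_notMem hω',
          Set.indicator_of_notMem (fun h => hω' (hmem.mp h))]
  -- the Birkhoff averages in Lp, and their coeFn
  set z : ℕ → Lp ℝ 2 P := fun N => birkhoffAverage ℝ (⇑U) _root_.id N x with hz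
  have hzcoe : ∀ N, ⇑(z N) =ᵐ[P] Sr N := by
    intro N
    have hsum : ⇑(∑ k ∈ Finset.range N, (⇑U)^[k] x) =ᵐ[P]
        fun ω => ∑ k ∈ Finset.range N, (((T^[k]) ⁻¹' A).indicator (fun _ => (1:ℝ)) ω) := by
      classical
      induction (Finset.range N) using Finset.induction_on with
      | empty => simp only [Finset.sum_empty]; exact Lp.coeFn_zero (E := ℝ) (p := 2) (μ := P)
      | @insert a s ha ih =>
        rw [Finset.sum_insert ha]
        refine (Lp.coeFn_add _ _).trans ?_
        filter_upwards [ih, hUk a] with ω h1 h2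
        simp only [Pi.add_apply, h1, h2, Finset.sum_insert ha]
    have h1 : ⇑(z N) =ᵐ[P] (N:ℝ)⁻¹ • ⇑(∑ k ∈ Finset.range N, (⇑U)^[k] x) := by
      rw [hz]
      simp only [birkhoffAverage, birkhoffSum, _root_.id]
      exact Lp.coeFn_smul _ _
    refine h1.trans ?_
    filter_upwards [hsum] with ω hω
    simp only [Pi.smul_apply, hω, smul_eq_mul]
    rfl
  -- von Neumann mean ergodic theorem
  have hconv := U.tendsto_birkhoffAverage_orthogonalProjection hUnorm x
  set g' : Ω → ℝ := ⇑(((LinearMap.eqLocus (U : Lp ℝ 2 P →ₗ[ℝ] Lp ℝ 2 P) ((1 : Lp ℝ 2 P →L[ℝ] Lp ℝ 2 P) : Lp ℝ 2 P →ₗ[ℝ] Lp ℝ 2 P)).orthogonalProjectionOnto x : Lp ℝ 2 P)) with hg'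
  have hmeas_conv : TendstoInMeasure P (fun N => ⇑(z N)) atTop g' :=
    tendstoInMeasure_of_tendsto_Lp hconv
  obtain ⟨ns, hns_mono, hns_ae⟩ := hmeas_conv.exists_seq_tendsto_ae
  have hae : ∀ᵐ ω ∂P, Tendsto (fun i => Sr (ns i) ω) atTop (𝓝 (g' ω)) := by
    have hall : ∀ᵐ ω ∂P, ∀ N, (z N : Ω → ℝ) ω = Sr N ω :=
      (MeasureTheory.ae_all_iff).mpr fun N => hzcoe N
    filter_upwards [hns_ae, hall] with ω h1 h2
    simpa [h2] using h1
  -- the integral of `Sr N` over `C` is `P (A ∩ C)` (for `N ≥ 1`)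
  have hsplit : ∀ k : ℕ, ((T^[k]) ⁻¹' A) ∩ C = (T^[k]) ⁻¹' (A ∩ C) := by
    intro k; rw [Set.preimage_inter, hCiter k]
  have hPk : ∀ k : ℕ, P (((T^[k]) ⁻¹' A) ∩ C) = P (A ∩ C) := by
    intro k; rw [hsplit k]
    exact (hTP.iterate k).measure_preimage (hA.inter hCm).nullMeasurableSet
  have hint_ind : ∀ k : ℕ, ∫ ω in C, ((T^[k]) ⁻¹' A).indicator (1 : Ω → ℝ) ω ∂P
      = (P (A ∩ C)).toReal := by
    intro k
    rw [integral_indicator_one (hAk k), measureReal_def, Measure.restrict_apply (hAk k), hPk k]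
  have hSr_int : ∀ N : ℕ, 1 ≤ N → ∫ ω in C, Sr N ω ∂P = (P (A ∩ C)).toReal := by
    intro N hN
    have hint : ∀ k ∈ Finset.range N,
        Integrable (fun ω => ((T^[k]) ⁻¹' A).indicator (1 : Ω → ℝ) ω) (P.restrict C) :=
      fun k _ => (integrable_const (1:ℝ)).indicator (hAk k)
    calc ∫ ω in C, Sr N ω ∂P
        = (N:ℝ)⁻¹ * ∫ ω in C, (∑ k ∈ Finset.range N,
            ((T^[k]) ⁻¹' A).indicator (1 : Ω → ℝ) ω) ∂P := integral_const_mul _ _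
      _ = (N:ℝ)⁻¹ * ∑ k ∈ Finset.range N,
            ∫ ω in C, ((T^[k]) ⁻¹' A).indicator (1 : Ω → ℝ) ω ∂P := by
          rw [integral_finset_sum _ hint]
      _ = (N:ℝ)⁻¹ * ∑ _k ∈ Finset.range N, (P (A ∩ C)).toReal := by
          rw [Finset.sum_congr rfl fun k _ => hint_ind k]
      _ = (N:ℝ)⁻¹ * (N * (P (A ∩ C)).toReal) := by
          rw [Finset.sum_const, Finset.card_range, nsmul_eq_mul]
      _ = (P (A ∩ C)).toReal := by
          rw [← mul_assoc, inv_mul_cancel₀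
            (by exact_mod_cast Nat.one_le_iff_ne_zero.mp hN), one_mul]
  -- integrability and integral of the limit function
  have hg'_int : Integrable g' P := MemLp.integrable one_le_two (Lp.memLp _)
  have hlim : Tendsto (fun i => ∫ ω in C, Sr (ns i) ω ∂P) atTop (𝓝 (∫ ω in C, g' ω ∂P)) := by
    refine tendsto_integral_of_dominated_convergence (fun _ => (1:ℝ))
      (fun i => ((hSr_meas (ns i)).aestronglyMeasurable)) (integrable_const 1)
      (fun i => Filter.Eventually.of_forall fun ω => ?_) (ae_restrict_of_ae hae)
    rw [Real.norm_eq_abs, abs_of_nonneg (hSr_nonneg _ ω)]; exact hSr_le_one _ ω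
  have hns_ge : ∀ i : ℕ, i ≤ ns i := fun i => hns_mono.le_apply
  have hint_g' : ∫ ω in C, g' ω ∂P = (P (A ∩ C)).toReal := by
    have hev : ∀ᶠ i in atTop, ∫ ω in C, Sr (ns i) ω ∂P = (P (A ∩ C)).toReal := by
      filter_upwards [Filter.eventually_ge_atTop 1] with i hi
      exact hSr_int (ns i) (le_trans hi (hns_ge i))
    exact tendsto_nhds_unique hlim
      (Tendsto.congr' (hev.mono fun i hi => hi.symm) tendsto_const_nhds)
  have hg'_bdd : ∀ᵐ ω ∂P, 0 ≤ g' ω := by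
    filter_upwards [hae] with ω hω
    exact ge_of_tendsto' hω fun i => hSr_nonneg _ ω
  -- real quantities
  have hpC_pos : 0 < (P C).toReal := ENNReal.toReal_pos hC0 (measure_ne_top P C)
  have hr_nonneg : 0 ≤ (P (A ∩ C)).toReal := ENNReal.toReal_nonneg
  -- MAIN ESTIMATE : any `c ≥ 0` with `c * pC < r` satisfies `ofReal c ≤ V A`
  have hmain : ∀ c : ℝ, 0 ≤ c → c * (P C).toReal < (P (A ∩ C)).toReal →
      ENNReal.ofReal c ≤ V A := by
    intro c hc0 hclt
    have hc1 : c < 1 := by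
      have hrle : (P (A ∩ C)).toReal ≤ (P C).toReal :=
        ENNReal.toReal_le_toReal (measure_ne_top _ _) (measure_ne_top _ _) |>.mpr
          (measure_mono Set.inter_subset_right)
      nlinarith
    -- the invariant set E
    set L : Ω → ℝ≥0∞ := fun ω => Filter.liminf (fun i => S (ns i) ω) atTop with hLdef
    have hLmeas : Measurable L := Measurable.liminf fun i => hS_meas (ns i)
    have hLT : ∀ ω, L (T ω) = L ω := by
      intro ω
      have h1 : ∀ N : ℕ, S N (T ω) ≤ S N ω + ((N:ℝ≥0∞))⁻¹ := by
        intro N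
        have hshift : ∀ k : ℕ, ((T^[k]) ⁻¹' A).indicator (1 : Ω → ℝ≥0∞) (T ω)
            = ((T^[k+1]) ⁻¹' A).indicator (1 : Ω → ℝ≥0∞) ω := by
          intro k
          have hmem : T ω ∈ (T^[k]) ⁻¹' A ↔ ω ∈ (T^[k+1]) ⁻¹' A := by
            simp [Function.iterate_succ_apply]
          by_cases hm : T ω ∈ (T^[k]) ⁻¹' A
          · rw [Set.indicator_of_mem hm, Set.indicator_of_mem (hmem.mp hm)]; rfl
          · rw [Set.indicator_of_notMem hm,
              Set.indicator_of_notMem (fun h => hm (hmem.mpr h))]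
        calc S N (T ω) = (N : ℝ≥0∞)⁻¹ *
              ∑ k ∈ Finset.range N, ((T^[k+1]) ⁻¹' A).indicator (1 : Ω → ℝ≥0∞) ω := by
              rw [hS]; simp only [hshift]
          _ ≤ (N : ℝ≥0∞)⁻¹ *
              (∑ k ∈ Finset.range N, ((T^[k]) ⁻¹' A).indicator (1 : Ω → ℝ≥0∞) ω + 1) := by
              gcongr
              calc ∑ k ∈ Finset.range N, ((T^[k+1]) ⁻¹' A).indicator (1 : Ω → ℝ≥0∞) ω
                  ≤ ∑ k ∈ Finset.range (N+1), ((T^[k]) ⁻¹' A).indicator (1 : Ω → ℝ≥0∞) ω := by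
                    rw [Finset.sum_range_succ' (fun k => ((T^[k]) ⁻¹' A).indicator (1 : Ω → ℝ≥0∞) ω) N]
                    exact le_add_right le_rfl
                _ ≤ ∑ k ∈ Finset.range N, ((T^[k]) ⁻¹' A).indicator (1 : Ω → ℝ≥0∞) ω + 1 := by
                    rw [Finset.sum_range_succ]
                    gcongr
                    exact Set.indicator_le_self' (fun _ _ => zero_le) ω
          _ = S N ω + (N : ℝ≥0∞)⁻¹ := by rw [mul_add, mul_one, hS]
      have h2 : ∀ N : ℕ, S N ω ≤ S N (T ω) + ((N:ℝ≥0∞))⁻¹ := by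
        intro N
        have hshift : ∀ k : ℕ, ((T^[k]) ⁻¹' A).indicator (1 : Ω → ℝ≥0∞) (T ω)
            = ((T^[k+1]) ⁻¹' A).indicator (1 : Ω → ℝ≥0∞) ω := by
          intro k
          have hmem : T ω ∈ (T^[k]) ⁻¹' A ↔ ω ∈ (T^[k+1]) ⁻¹' A := by
            simp [Function.iterate_succ_apply]
          by_cases hm : T ω ∈ (T^[k]) ⁻¹' A
          · rw [Set.indicator_of_mem hm, Set.indicator_of_mem (hmem.mp hm)]; rfl
          · rw [Set.indicator_of_notMem hm,
              Set.indicator_of_notMem (fun h => hm (hmem.mpr h))]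
        calc S N ω ≤ (N : ℝ≥0∞)⁻¹ *
              (∑ k ∈ Finset.range N, ((T^[k+1]) ⁻¹' A).indicator (1 : Ω → ℝ≥0∞) ω + 1) := by
              simp only [hS]
              gcongr
              calc ∑ k ∈ Finset.range N, ((T^[k]) ⁻¹' A).indicator (1 : Ω → ℝ≥0∞) ω
                  ≤ ∑ k ∈ Finset.range (N+1), ((T^[k]) ⁻¹' A).indicator (1 : Ω → ℝ≥0∞) ω := by
                    rw [Finset.sum_range_succ]
                    exact le_add_right le_rfl
                _ = ∑ k ∈ Finset.range N, ((T^[k+1]) ⁻¹' A).indicator (1 : Ω → ℝ≥0∞) ω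
                      + ((T^[0]) ⁻¹' A).indicator (1 : Ω → ℝ≥0∞) ω := by
                    rw [Finset.sum_range_succ' (fun k => ((T^[k]) ⁻¹' A).indicator (1 : Ω → ℝ≥0∞) ω) N]
                _ ≤ ∑ k ∈ Finset.range N, ((T^[k+1]) ⁻¹' A).indicator (1 : Ω → ℝ≥0∞) ω + 1 := by
                    gcongr
                    exact Set.indicator_le_self' (fun _ _ => zero_le) ω
          _ = (N : ℝ≥0∞)⁻¹ *
              ∑ k ∈ Finset.range N, ((T^[k+1]) ⁻¹' A).indicator (1 : Ω → ℝ≥0∞) ω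
              + (N : ℝ≥0∞)⁻¹ := by rw [mul_add, mul_one]
          _ = S N (T ω) + (N : ℝ≥0∞)⁻¹ := by rw [hS]; simp only [hshift]
      have he : Tendsto (fun i => ((ns i : ℕ) : ℝ≥0∞)⁻¹) atTop (𝓝 0) :=
        ENNReal.tendsto_inv_nat_nhds_zero.comp hns_mono.tendsto_atTop
      exact aux_liminf_eq (fun i => h1 (ns i)) (fun i => h2 (ns i)) he
    set E : Set Ω := {ω | ENNReal.ofReal c < L ω} with hEdef
    have hEmeas : MeasurableSet E := measurableSet_lt measurable_const hLmeas
    have hEinv : T ⁻¹' E = E := by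
      ext ω; simp only [Set.mem_preimage, hEdef, Set.mem_setOf_eq, hLT ω]
    -- P E > 0
    have hLg' : ∀ᵐ ω ∂P, L ω = ENNReal.ofReal (g' ω) := by
      filter_upwards [hae] with ω hω
      have : Tendsto (fun i => S (ns i) ω) atTop (𝓝 (ENNReal.ofReal (g' ω))) := by
        have := (ENNReal.continuous_ofReal.tendsto (g' ω)).comp hω
        simpa [Function.comp_def, hofReal] using this
      exact this.liminf_eq
    have hPE : P E ≠ 0 := by
      intro hPE0
      have hnotE : ∀ᵐ ω ∂P, L ω ≤ ENNReal.ofReal c := by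
        filter_upwards [measure_eq_zero_iff_ae_notMem.mp hPE0] with ω hω
        exact not_lt.mp hω
      have hle : ∀ᵐ ω ∂P, g' ω ≤ c := by
        filter_upwards [hnotE, hLg', hg'_bdd] with ω h1 h2 h3
        rw [h2] at h1
        exact (ENNReal.ofReal_le_ofReal_iff hc0).mp h1
      have hIntLe : ∫ ω in C, g' ω ∂P ≤ ∫ ω in C, c ∂P := by
        refine integral_mono_ae (hg'_int.restrict) (integrable_const c) (ae_restrict_of_ae hle)
      rw [hint_g', integral_const] at hIntLe
      simp only [measureReal_def, Measure.restrict_apply_univ, smul_eq_mul] at hIntLe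
      nlinarith [hIntLe]
    -- V E = 1
    have hVE : V E = 1 := by
      rcases hVerg E hEmeas hEinv with h0 | h1
      · exfalso
        apply hPE
        have : P E ≤ V E := by rw [hV E]; exact le_biSup (f := fun Q : MeasureTheory.Measure Ω => Q E) hPΘ
        rw [h0] at this
        exact le_antisymm this (zero_le)
      · exact h1
    -- integral bound for any R ∈ Θ
    have hSR_bound : ∀ (R : Measure Ω), R ∈ Θ → ∀ N : ℕ, 1 ≤ N →
        ∫⁻ ω in E, S N ω ∂ R ≤ V A := by
      intro R hRΘ N hN
      have h1 : ∫⁻ ω in E, S N ω ∂ R ≤ ∫⁻ ω, S N ω ∂ R :=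
        lintegral_mono' Measure.restrict_le_self le_rfl
      have h2 : ∫⁻ ω, S N ω ∂ R = (N : ℝ≥0∞)⁻¹ * ∑ k ∈ Finset.range N, R ((T^[k]) ⁻¹' A) := by
        rw [hS]
        rw [lintegral_const_mul _ (Finset.measurable_sum _ fun k _ => measurable_one.indicator (hAk k))]
        congr 1
        rw [lintegral_finset_sum _ fun k _ => measurable_one.indicator (hAk k)]
        exact Finset.sum_congr rfl fun k _ => lintegral_indicator_one (hAk k)
      have h3 : ∀ k : ℕ, R ((T^[k]) ⁻¹' A) ≤ V A := by
        intro k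
        rw [← hVk k, hV ((T^[k]) ⁻¹' A)]
        exact le_biSup (f := fun Q : MeasureTheory.Measure Ω => Q ((T^[k]) ⁻¹' A)) hRΘ
      calc ∫⁻ ω in E, S N ω ∂ R ≤ (N : ℝ≥0∞)⁻¹ * ∑ k ∈ Finset.range N, R ((T^[k]) ⁻¹' A) :=
            h1.trans_eq h2
        _ ≤ (N : ℝ≥0∞)⁻¹ * ∑ _k ∈ Finset.range N, V A := by
            gcongr with k hk
            exact h3 k
        _ = (N : ℝ≥0∞)⁻¹ * (N * V A) := by rw [Finset.sum_const, Finset.card_range, nsmul_eq_mul]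
        _ = V A := by
            rw [← mul_assoc, ENNReal.inv_mul_cancel
              (by exact_mod_cast Nat.one_le_iff_ne_zero.mp hN) (by simp), one_mul]
    -- conclusion of the main estimate
    refine ENNReal.le_of_forall_pos_le_add fun ε hε hVA_fin => ?_
    rcases le_or_gt 1 (ε : ℝ≥0∞) with hε1 | hε1
    · calc ENNReal.ofReal c ≤ 1 := ENNReal.ofReal_le_one.mpr hc1.le
        _ ≤ V A + ε := le_add_left hε1
    -- choose R ∈ Θ with R E > 1 - ε
    have hlt : (1 : ℝ≥0∞) - ε < V E := by
      rw [hVE]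
      exact ENNReal.sub_lt_self ENNReal.one_ne_top one_ne_zero (by exact_mod_cast hε.ne')
    rw [hV E] at hlt
    obtain ⟨R, hR⟩ := lt_iSup_iff.mp hlt
    obtain ⟨hRΘ, hRE⟩ := lt_iSup_iff.mp hR
    haveI hRprob : IsProbabilityMeasure R := hprob R hRΘ
    -- Fatou chain
    have hchain : ENNReal.ofReal c * R E ≤ V A := by
      calc ENNReal.ofReal c * R E = ∫⁻ _ω in E, ENNReal.ofReal c ∂ R := (setLIntegral_const E _).symm
        _ ≤ ∫⁻ ω in E, L ω ∂ R := setLIntegral_mono hLmeas fun ω hω => (le_of_lt hω)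
        _ ≤ liminf (fun i => ∫⁻ ω in E, S (ns i) ω ∂ R) atTop :=
            lintegral_liminf_le fun i => hS_meas (ns i)
        _ ≤ V A := by
            apply liminf_le_of_frequently_le'
            apply Filter.Eventually.frequently
            filter_upwards [Filter.eventually_ge_atTop 1] with i hi
            exact hSR_bound R hRΘ (ns i) (le_trans hi (hns_ge i))
    -- wrap up
    have hRE_le1 : R E ≤ 1 := prob_le_one
    have h1E : 1 - R E ≤ (ε : ℝ≥0∞) := by
      rw [tsub_le_iff_right]
      calc (1:ℝ≥0∞) = (1 - ε) + ε := (tsub_add_cancel_of_le hε1.le).symm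
        _ ≤ R E + ε := add_le_add hRE.le le_rfl
        _ = ε + R E := add_comm _ _
    calc ENNReal.ofReal c = ENNReal.ofReal c * (R E + (1 - R E)) := by
          rw [add_tsub_cancel_of_le hRE_le1, mul_one]
      _ = ENNReal.ofReal c * R E + ENNReal.ofReal c * (1 - R E) := by rw [mul_add]
      _ ≤ V A + 1 * (ε : ℝ≥0∞) :=
          add_le_add hchain (mul_le_mul' (ENNReal.ofReal_le_one.mpr hc1.le) h1E)
      _ = V A + ε := by rw [one_mul]
  -- from the main estimate to the conclusion
  have hfinal : ENNReal.ofReal ((P (A ∩ C)).toReal / (P C).toReal) ≤ V A := by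
    refine ENNReal.le_of_forall_pos_le_add fun ε hε hVA_fin => ?_
    have hεpos : (0:ℝ) < ε := hε
    rcases le_or_gt ((P (A ∩ C)).toReal / (P C).toReal) (ε : ℝ) with hle | hgt
    · calc ENNReal.ofReal ((P (A ∩ C)).toReal / (P C).toReal)
          ≤ ENNReal.ofReal ε := ENNReal.ofReal_le_ofReal hle
        _ = (ε : ℝ≥0∞) := ENNReal.ofReal_coe_nnreal
        _ ≤ V A + ε := le_add_self
    · have hc0 : 0 ≤ (P (A ∩ C)).toReal / (P C).toReal - ε := by linarith
      have hclt : ((P (A ∩ C)).toReal / (P C).toReal - ε) * (P C).toReal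
          < (P (A ∩ C)).toReal := by
        rw [sub_mul, div_mul_cancel₀ _ hpC_pos.ne']
        nlinarith
      have hm := hmain _ hc0 hclt
      calc ENNReal.ofReal ((P (A ∩ C)).toReal / (P C).toReal)
          = ENNReal.ofReal (((P (A ∩ C)).toReal / (P C).toReal - ε) + ε) := by ring_nf
        _ ≤ ENNReal.ofReal ((P (A ∩ C)).toReal / (P C).toReal - ε) + ENNReal.ofReal ε :=
            ENNReal.ofReal_add_le
        _ ≤ V A + ε := by
            rw [ENNReal.ofReal_coe_nnreal]
            exact add_le_add hm le_rfl
  -- finish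
  have hPC_eq : ENNReal.ofReal (P C).toReal = P C := ENNReal.ofReal_toReal (measure_ne_top P C)
  calc P (A ∩ C) = ENNReal.ofReal (P (A ∩ C)).toReal :=
        (ENNReal.ofReal_toReal (measure_ne_top P _)).symm
    _ = ENNReal.ofReal (((P (A ∩ C)).toReal / (P C).toReal) * (P C).toReal) := by
        rw [div_mul_cancel₀ _ hpC_pos.ne']
    _ = ENNReal.ofReal ((P (A ∩ C)).toReal / (P C).toReal) * ENNReal.ofReal (P C).toReal :=
        ENNReal.ofReal_mul (div_nonneg hr_nonneg hpC_pos.le)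
    _ ≤ V A * P C := by rw [hPC_eq]; exact mul_le_mul' hfinal le_rfl

end Key


section Atoms
variable {Ω : Type*} [MeasurableSpace Ω]

lemma no_infinite_family (T : Ω → Ω)
    (Θ : Set (Measure Ω)) (V : Set Ω → ℝ≥0∞) (hV : ∀ A : Set Ω, V A = ⨆ P ∈ Θ, P A)
    (hcont : ∀ A : ℕ → Set Ω, (∀ n, MeasurableSet (A n)) → Antitone A →
      (⋂ n, A n) = ∅ → Tendsto (fun n => V (A n)) atTop (nhds 0))
    (hVerg : ∀ A : Set Ω, MeasurableSet A → T ⁻¹' A = A → V A = 0 ∨ V A = 1)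
    (P : Measure Ω) (hPΘ : P ∈ Θ)
    (D : ℕ → Set Ω) (hDm : ∀ i, MeasurableSet (D i)) (hDinv : ∀ i, T ⁻¹' (D i) = D i)
    (hD0 : ∀ i, P (D i) ≠ 0) (hdisj : Pairwise (Function.onFun Disjoint D)) : False := by
  set B : ℕ → Set Ω := fun n => ⋃ i, D (n + i) with hB
  have hBm : ∀ n, MeasurableSet (B n) := fun n => MeasurableSet.iUnion fun i => hDm _
  have hBinv : ∀ n, T ⁻¹' (B n) = B n := by
    intro n; rw [hB]; simp only [Set.preimage_iUnion]
    exact Set.iUnion_congr fun i => hDinv _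
  have hBanti : Antitone B := by
    intro m n hmn
    refine Set.iUnion_subset fun i => ?_
    have h : n + i = m + (n - m + i) := by omega
    rw [h]
    exact Set.subset_iUnion (fun j => D (m + j)) _
  have hBinter : ⋂ n, B n = ∅ := by
    ext ω; simp only [Set.mem_iInter, Set.mem_empty_iff_false, iff_false]
    intro hω
    obtain ⟨i, hi⟩ := Set.mem_iUnion.mp (hω 0)
    obtain ⟨j, hj⟩ := Set.mem_iUnion.mp (hω (i + 1))
    have hne : (0 + i : ℕ) ≠ i + 1 + j := by omega
    exact (hdisj hne).le_bot ⟨hi, hj⟩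
  have hlim := hcont B hBm hBanti hBinter
  have hone : ∀ n, V (B n) = 1 := by
    intro n
    rcases hVerg (B n) (hBm n) (hBinv n) with h0 | h1
    · exfalso
      have hsub : D n ⊆ B n := by
        rw [hB]
        intro x hx
        exact Set.mem_iUnion.mpr ⟨0, by simpa using hx⟩
      have hle : P (D n) ≤ V (B n) := by
        rw [hV]
        exact le_trans (measure_mono hsub)
          (le_biSup (f := fun Q : Measure Ω => Q (B n)) hPΘ)
      rw [h0] at hle
      exact hD0 n (le_antisymm hle (zero_le))
    · exact h1
  simp only [hone] at hlim
  exact one_ne_zero (tendsto_nhds_unique tendsto_const_nhds hlim)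

lemma exists_atom (T : Ω → Ω)
    (Θ : Set (Measure Ω)) (V : Set Ω → ℝ≥0∞) (hV : ∀ A : Set Ω, V A = ⨆ P ∈ Θ, P A)
    (hcont : ∀ A : ℕ → Set Ω, (∀ n, MeasurableSet (A n)) → Antitone A →
      (⋂ n, A n) = ∅ → Tendsto (fun n => V (A n)) atTop (nhds 0))
    (hVerg : ∀ A : Set Ω, MeasurableSet A → T ⁻¹' A = A → V A = 0 ∨ V A = 1)
    (P : Measure Ω) (hPΘ : P ∈ Θ)
    (N : Set Ω) (hNm : MeasurableSet N) (hNinv : T ⁻¹' N = N) (hN0 : P N ≠ 0) :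
    ∃ Cc : Set Ω, Cc ⊆ N ∧ MeasurableSet Cc ∧ T ⁻¹' Cc = Cc ∧ P Cc ≠ 0 ∧
      ∀ D : Set Ω, D ⊆ Cc → MeasurableSet D → T ⁻¹' D = D → P D = 0 ∨ P D = P Cc := by
  by_contra hno
  push_neg at hno
  have hstep : ∀ M : Set Ω, M ⊆ N → MeasurableSet M → T ⁻¹' M = M → P M ≠ 0 →
      ∃ D : Set Ω, D ⊆ M ∧ MeasurableSet D ∧ T ⁻¹' D = D ∧ P D ≠ 0 ∧ P (M \ D) ≠ 0 := by
    intro M hMN hMm hMinv hM0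
    obtain ⟨D, hDM, hDm, hDinv, hD0, hDne⟩ := hno M hMN hMm hMinv hM0
    refine ⟨D, hDM, hDm, hDinv, hD0, fun hdiff0 => hDne ?_⟩
    have h := measure_inter_add_diff M hDm (μ := P)
    rw [Set.inter_eq_right.mpr hDM, hdiff0, add_zero] at h
    exact h
  classical
  let Q : Type _ := {s : Set Ω // s ⊆ N ∧ MeasurableSet s ∧ T ⁻¹' s = s ∧ P s ≠ 0}
  have hchoice : ∀ q : Q, ∃ D : Set Ω, D ⊆ q.1 ∧ MeasurableSet D ∧ T ⁻¹' D = D ∧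
      P D ≠ 0 ∧ P (q.1 \ D) ≠ 0 :=
    fun q => hstep q.1 q.2.1 q.2.2.1 q.2.2.2.1 q.2.2.2.2
  let piece : Q → Set Ω := fun q => Classical.choose (hchoice q)
  have hpiece : ∀ q : Q, piece q ⊆ q.1 ∧ MeasurableSet (piece q) ∧
      T ⁻¹' (piece q) = piece q ∧ P (piece q) ≠ 0 ∧ P (q.1 \ piece q) ≠ 0 :=
    fun q => Classical.choose_spec (hchoice q)
  let nxt : Q → Q := fun q =>
    ⟨q.1 \ piece q, (Set.diff_subset).trans q.2.1, q.2.2.1.diff (hpiece q).2.1,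
      by rw [Set.preimage_diff, q.2.2.2.1, (hpiece q).2.2.1], (hpiece q).2.2.2.2⟩
  let seq : ℕ → Q := fun n => nxt^[n] ⟨N, Set.Subset.rfl, hNm, hNinv, hN0⟩
  have hseq_succ : ∀ n, seq (n + 1) = nxt (seq n) := fun n => Function.iterate_succ_apply' _ _ _
  set D : ℕ → Set Ω := fun n => piece (seq n) with hD
  have hD_sub : ∀ n, D n ⊆ (seq n).1 := fun n => (hpiece (seq n)).1
  have hmono : ∀ m n, m ≤ n → (seq n).1 ⊆ (seq m).1 := by
    intro m n hmn
    induction n with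
    | zero => rw [Nat.le_zero.mp hmn]
    | succ n ih =>
      rcases Nat.lt_or_ge m (n + 1) with h | h
      · have h1 : (seq (n + 1)).1 ⊆ (seq n).1 := by
          rw [hseq_succ n]; exact Set.diff_subset
        exact h1.trans (ih (by omega))
      · rw [Nat.le_antisymm hmn h]
  have hdisj : Pairwise (Function.onFun Disjoint D) := by
    have hlt : ∀ i j, i < j → Disjoint (D i) (D j) := by
      intro i j hij
      have h1 : D j ⊆ (seq (i + 1)).1 := (hD_sub j).trans (hmono (i + 1) j (by omega))
      rw [hseq_succ i] at h1
      exact Set.disjoint_of_subset_right h1 Set.disjoint_sdiff_right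
    intro i j hij
    rcases lt_or_gt_of_ne hij with h | h
    · exact hlt i j h
    · exact (hlt j i h).symm
  exact no_infinite_family T Θ V hV hcont hVerg P hPΘ D
    (fun n => (hpiece (seq n)).2.1) (fun n => (hpiece (seq n)).2.2.1)
    (fun n => (hpiece (seq n)).2.2.2.1) hdisj

lemma exists_finite_atoms (T : Ω → Ω)
    (Θ : Set (Measure Ω)) (V : Set Ω → ℝ≥0∞) (hV : ∀ A : Set Ω, V A = ⨆ P ∈ Θ, P A)
    (hcont : ∀ A : ℕ → Set Ω, (∀ n, MeasurableSet (A n)) → Antitone A →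
      (⋂ n, A n) = ∅ → Tendsto (fun n => V (A n)) atTop (nhds 0))
    (hVerg : ∀ A : Set Ω, MeasurableSet A → T ⁻¹' A = A → V A = 0 ∨ V A = 1)
    (P : Measure Ω) (hPΘ : P ∈ Θ) :
    ∃ (m : ℕ) (C : ℕ → Set Ω),
      (∀ k, k < m → MeasurableSet (C k) ∧ T ⁻¹' (C k) = C k ∧ P (C k) ≠ 0 ∧
        (∀ D : Set Ω, D ⊆ C k → MeasurableSet D → T ⁻¹' D = D → P D = 0 ∨ P D = P (C k))) ∧
      Pairwise (Function.onFun Disjoint C) ∧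
      P (Set.univ \ ⋃ k, ⋃ (_ : k < m), C k) = 0 := by
  classical
  let R : Type _ := {s : Set Ω // MeasurableSet s ∧ T ⁻¹' s = s}
  have hchoice : ∀ q : R, ∃ c : Set Ω, MeasurableSet c ∧ T ⁻¹' c = c ∧
      (P q.1 ≠ 0 → c ⊆ q.1 ∧ P c ≠ 0 ∧
        (∀ D : Set Ω, D ⊆ c → MeasurableSet D → T ⁻¹' D = D → P D = 0 ∨ P D = P c)) ∧
      (P q.1 = 0 → c = ∅) := by
    intro q
    by_cases h0 : P q.1 = 0
    · exact ⟨∅, MeasurableSet.empty, by simp, fun h => absurd h0 h, fun _ => rfl⟩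
    · obtain ⟨Cc, hsub, hm, hinv, hne, hatom⟩ :=
        exists_atom T Θ V hV hcont hVerg P hPΘ q.1 q.2.1 q.2.2 h0
      exact ⟨Cc, hm, hinv, fun _ => ⟨hsub, hne, hatom⟩, fun h => absurd h h0⟩
  let piece : R → Set Ω := fun q => Classical.choose (hchoice q)
  have hpiece : ∀ q : R, MeasurableSet (piece q) ∧ T ⁻¹' (piece q) = piece q ∧
      (P q.1 ≠ 0 → piece q ⊆ q.1 ∧ P (piece q) ≠ 0 ∧
        (∀ D : Set Ω, D ⊆ piece q → MeasurableSet D → T ⁻¹' D = D →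
          P D = 0 ∨ P D = P (piece q))) ∧
      (P q.1 = 0 → piece q = ∅) :=
    fun q => Classical.choose_spec (hchoice q)
  let nxt : R → R := fun q =>
    ⟨q.1 \ piece q, q.2.1.diff (hpiece q).1,
      by rw [Set.preimage_diff, q.2.2, (hpiece q).2.1]⟩
  let rem : ℕ → R := fun n => nxt^[n] ⟨Set.univ, MeasurableSet.univ, by simp⟩
  have hrem_succ : ∀ n, rem (n + 1) = nxt (rem n) := fun n => Function.iterate_succ_apply' _ _ _
  set C : ℕ → Set Ω := fun n => piece (rem n) with hC
  have hmono : ∀ m n, m ≤ n → (rem n).1 ⊆ (rem m).1 := by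
    intro m n hmn
    induction n with
    | zero => rw [Nat.le_zero.mp hmn]
    | succ n ih =>
      rcases Nat.lt_or_ge m (n + 1) with h | h
      · have h1 : (rem (n + 1)).1 ⊆ (rem n).1 := by
          rw [hrem_succ n]; exact Set.diff_subset
        exact h1.trans (ih (by omega))
      · rw [Nat.le_antisymm hmn h]
  have hdisj : Pairwise (Function.onFun Disjoint C) := by
    have hlt : ∀ i j, i < j → Disjoint (C i) (C j) := by
      intro i j hij
      by_cases h0 : P (rem j).1 = 0
      · rw [hC]
        simp only
        rw [(hpiece (rem j)).2.2.2 h0]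
        exact disjoint_bot_right
      · have h1 : C j ⊆ (rem (i + 1)).1 :=
          (((hpiece (rem j)).2.2.1 h0).1).trans (hmono (i + 1) j (by omega))
        rw [hrem_succ i] at h1
        exact Set.disjoint_of_subset_right h1 Set.disjoint_sdiff_right
    intro i j hij
    rcases lt_or_gt_of_ne hij with h | h
    · exact hlt i j h
    · exact (hlt j i h).symm
  have hstop : ∃ n, P (rem n).1 = 0 := by
    by_contra hall
    push_neg at hall
    refine no_infinite_family T Θ V hV hcont hVerg P hPΘ C
      (fun n => (hpiece (rem n)).1) (fun n => (hpiece (rem n)).2.1)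
      (fun n => ((hpiece (rem n)).2.2.1 (hall n)).2.1) hdisj
  let m := Nat.find hstop
  have hm0 : P (rem m).1 = 0 := Nat.find_spec hstop
  have hmlt : ∀ k, k < m → P (rem k).1 ≠ 0 := fun k hk => Nat.find_min hstop hk
  refine ⟨m, C, fun k hk => ?_, hdisj, ?_⟩
  · obtain ⟨hsub, hne, hatom⟩ := (hpiece (rem k)).2.2.1 (hmlt k hk)
    exact ⟨(hpiece (rem k)).1, (hpiece (rem k)).2.1, hne, hatom⟩
  · have hcover : ∀ n, Set.univ \ ⋃ k, ⋃ (_ : k < n), C k ⊆ (rem n).1 := by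
      intro n
      induction n with
      | zero => simp [rem]
      | succ n ih =>
        rw [hrem_succ n]
        intro x hx
        obtain ⟨-, hx2⟩ := hx
        have hx' : x ∈ Set.univ \ ⋃ k, ⋃ (_ : k < n), C k := by
          refine ⟨Set.mem_univ x, fun hmem => hx2 ?_⟩
          obtain ⟨k, hk, hxk⟩ := by simpa using hmem
          exact Set.mem_iUnion.mpr ⟨k, Set.mem_iUnion.mpr ⟨by omega, hxk⟩⟩
        refine ⟨ih hx', fun hmem => hx2 ?_⟩
        exact Set.mem_iUnion.mpr ⟨n, Set.mem_iUnion.mpr ⟨by omega, hmem⟩⟩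
    exact measure_mono_null (hcover m) hm0

end Atoms


end AuxiliaryLemmas

/-- If `V` is continuous, `T`-invariant and `T`-ergodic, then
`Θ₀ = co Θ*`: every `T`-invariant `P ∈ Θ` is a finite convex combination of
`T`-ergodic members of `Θ`, and conversely every such finite convex combination
of elements of `Θ*` is a `T`-invariant member of `Θ`. -/
theorem stmt_5 {Ω : Type*} [MeasurableSpace Ω] (T : Ω → Ω) (hT : Measurable T)
    (Θ : Set (Measure Ω)) (hΘne : Θ.Nonempty)
    (hprob : ∀ P ∈ Θ, IsProbabilityMeasure P)
    (V : Set Ω → ℝ≥0∞)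
    (hV : ∀ A : Set Ω, V A = ⨆ P ∈ Θ, P A)
    (hmax : ∀ P : Measure Ω, IsProbabilityMeasure P →
      (∀ A, MeasurableSet A → P A ≤ V A) → P ∈ Θ)
    (hcont : ∀ A : ℕ → Set Ω, (∀ n, MeasurableSet (A n)) → Antitone A →
      (⋂ n, A n) = ∅ → Tendsto (fun n => V (A n)) atTop (nhds 0))
    (hVinv : ∀ A : Set Ω, MeasurableSet A → V (T ⁻¹' A) = V A)
    (hVerg : ∀ A : Set Ω, MeasurableSet A → T ⁻¹' A = A → V A = 0 ∨ V A = 1) :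
    (∀ P ∈ Θ, (∀ A : Set Ω, MeasurableSet A → P (T ⁻¹' A) = P A) →
      ∃ (n : ℕ) (l : Fin n → ℝ≥0∞) (Ps : Fin n → Measure Ω),
        (∀ k, Ps k ∈ Θ ∧ (∀ A : Set Ω, MeasurableSet A → Ps k (T ⁻¹' A) = Ps k A) ∧
          (∀ A : Set Ω, MeasurableSet A → T ⁻¹' A = A → Ps k A = 0 ∨ Ps k A = 1)) ∧
        (∑ k, l k) = 1 ∧ P = ∑ k, l k • Ps k) ∧
    (∀ (n : ℕ) (l : Fin n → ℝ≥0∞) (Ps : Fin n → Measure Ω),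
      (∀ k, Ps k ∈ Θ ∧ (∀ A : Set Ω, MeasurableSet A → Ps k (T ⁻¹' A) = Ps k A) ∧
        (∀ A : Set Ω, MeasurableSet A → T ⁻¹' A = A → Ps k A = 0 ∨ Ps k A = 1)) →
      (∑ k, l k) = 1 →
      (∑ k, l k • Ps k) ∈ Θ ∧
        (∀ A : Set Ω, MeasurableSet A →
          (∑ k, l k • Ps k) (T ⁻¹' A) = (∑ k, l k • Ps k) A)) := by
  constructor
  · -- forward direction
    intro P hPΘ hPinv
    haveI hPprob : IsProbabilityMeasure P := hprob P hPΘ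
    obtain ⟨m, C, hatoms, hdisj, hnull⟩ := exists_finite_atoms T Θ V hV hcont hVerg P hPΘ
    have hCm : ∀ k : Fin m, MeasurableSet (C k.1) := fun k => (hatoms k.1 k.2).1
    have hCinv : ∀ k : Fin m, T ⁻¹' (C k.1) = C k.1 := fun k => (hatoms k.1 k.2).2.1
    have hC0 : ∀ k : Fin m, P (C k.1) ≠ 0 := fun k => (hatoms k.1 k.2).2.2.1
    have hCfin : ∀ k : Fin m, P (C k.1) ≠ ∞ := fun k => measure_ne_top P _
    have hCatom : ∀ k : Fin m, ∀ D : Set Ω, D ⊆ C k.1 → MeasurableSet D → T ⁻¹' D = D →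
        P D = 0 ∨ P D = P (C k.1) := fun k => (hatoms k.1 k.2).2.2.2
    set l : Fin m → ℝ≥0∞ := fun k => P (C k.1) with hl
    set Ps : Fin m → Measure Ω := fun k => (P (C k.1))⁻¹ • P.restrict (C k.1) with hPs
    have happly : ∀ (k : Fin m) (A : Set Ω), MeasurableSet A →
        Ps k A = (P (C k.1))⁻¹ * P (A ∩ C k.1) := by
      intro k A hA
      rw [hPs]
      simp only [Measure.smul_apply, smul_eq_mul]
      rw [Measure.restrict_apply hA]
    have hPsprob : ∀ k : Fin m, IsProbabilityMeasure (Ps k) := by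
      intro k
      constructor
      rw [happly k Set.univ MeasurableSet.univ, Set.univ_inter]
      exact ENNReal.inv_mul_cancel (hC0 k) (hCfin k)
    have hPsinv : ∀ (k : Fin m) (A : Set Ω), MeasurableSet A →
        Ps k (T ⁻¹' A) = Ps k A := by
      intro k A hA
      rw [happly k _ (hT hA), happly k A hA]
      congr 1
      have : T ⁻¹' A ∩ C k.1 = T ⁻¹' (A ∩ C k.1) := by
        rw [Set.preimage_inter, hCinv k]
      rw [this]
      exact hPinv _ (hA.inter (hCm k))
    have hPserg : ∀ (k : Fin m) (A : Set Ω), MeasurableSet A → T ⁻¹' A = A →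
        Ps k A = 0 ∨ Ps k A = 1 := by
      intro k A hA hAinv
      have hsub : A ∩ C k.1 ⊆ C k.1 := Set.inter_subset_right
      have hmeas : MeasurableSet (A ∩ C k.1) := hA.inter (hCm k)
      have hinv : T ⁻¹' (A ∩ C k.1) = A ∩ C k.1 := by
        rw [Set.preimage_inter, hAinv, hCinv k]
      rcases hCatom k _ hsub hmeas hinv with h0 | h1
      · left; rw [happly k A hA, h0, mul_zero]
      · right; rw [happly k A hA, h1]
        exact ENNReal.inv_mul_cancel (hC0 k) (hCfin k)
    have hPsΘ : ∀ k : Fin m, Ps k ∈ Θ := by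
      intro k
      refine hmax (Ps k) (hPsprob k) fun A hA => ?_
      rw [happly k A hA]
      calc (P (C k.1))⁻¹ * P (A ∩ C k.1)
          ≤ (P (C k.1))⁻¹ * (V A * P (C k.1)) := by
            gcongr
            exact key_lemma T hT Θ hprob V hV hVinv hVerg P hPΘ hPinv
              (C k.1) (hCm k) (hCinv k) (hC0 k) A hA
        _ = V A := by
            rw [mul_comm (V A), ← mul_assoc, ENNReal.inv_mul_cancel (hC0 k) (hCfin k), one_mul]
    -- disjointness on Fin m
    have hdisjF : Pairwise (Function.onFun Disjoint (fun k : Fin m => C k.1)) :=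
      fun i j hij => hdisj (Fin.val_injective.ne hij)
    have hUeq : (⋃ k : Fin m, C k.1) = ⋃ k, ⋃ (_ : k < m), C k := by
      ext x
      simp only [Set.mem_iUnion]
      constructor
      · rintro ⟨k, hk⟩; exact ⟨k.1, k.2, hk⟩
      · rintro ⟨k, hk, hx⟩; exact ⟨⟨k, hk⟩, hx⟩
    have hUmeas : MeasurableSet (⋃ k : Fin m, C k.1) := MeasurableSet.iUnion fun k => hCm k
    have hU1 : P (⋃ k : Fin m, C k.1) = 1 := by
      refine le_antisymm ((measure_mono (Set.subset_univ _)).trans_eq hPprob.measure_univ) ?_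
      have hsplit : (Set.univ : Set Ω) = (⋃ k : Fin m, C k.1) ∪ (Set.univ \ ⋃ k : Fin m, C k.1) :=
        (Set.union_diff_cancel (Set.subset_univ _)).symm
      calc (1:ℝ≥0∞) = P Set.univ := hPprob.measure_univ.symm
        _ ≤ P (⋃ k : Fin m, C k.1) + P (Set.univ \ ⋃ k : Fin m, C k.1) := by
            conv_lhs => rw [hsplit]
            exact measure_union_le (μ := P) _ _
        _ = P (⋃ k : Fin m, C k.1) := by
            rw [hUeq, hnull, add_zero]
    have hsum1 : ∑ k, l k = 1 := by
      rw [hl]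
      calc ∑ k : Fin m, P (C k.1) = ∑' k : Fin m, P (C k.1) := (tsum_fintype _).symm
        _ = P (⋃ k : Fin m, C k.1) := (measure_iUnion hdisjF fun k => hCm k).symm
        _ = 1 := hU1
    refine ⟨m, l, Ps, fun k => ⟨hPsΘ k, hPsinv k, hPserg k⟩, hsum1, ?_⟩
    -- P = ∑ k, l k • Ps k
    ext B hB
    rw [Measure.finset_sum_apply]
    have hterm : ∀ k : Fin m, (l k • Ps k) B = P (B ∩ C k.1) := by
      intro k
      rw [Measure.smul_apply, smul_eq_mul, happly k B hB, hl, ← mul_assoc,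
        ENNReal.mul_inv_cancel (hC0 k) (hCfin k), one_mul]
    rw [Finset.sum_congr rfl fun k _ => hterm k]
    symm
    have hdisjB : Pairwise (Function.onFun Disjoint (fun k : Fin m => B ∩ C k.1)) :=
      fun i j hij => ((hdisjF hij).mono Set.inter_subset_right Set.inter_subset_right)
    calc ∑ k : Fin m, P (B ∩ C k.1) = ∑' k : Fin m, P (B ∩ C k.1) := (tsum_fintype _).symm
      _ = P (⋃ k : Fin m, (B ∩ C k.1)) :=
          (measure_iUnion hdisjB fun k => hB.inter (hCm k)).symm
      _ = P (B ∩ ⋃ k : Fin m, C k.1) := by rw [Set.inter_iUnion]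
      _ = P B := by
          have h1 : P (B ∩ ⋃ k : Fin m, C k.1) + P (B \ ⋃ k : Fin m, C k.1) = P B :=
            measure_inter_add_diff B hUmeas
          have h2 : P (B \ ⋃ k : Fin m, C k.1) = 0 := by
            refine measure_mono_null ?_ (by rw [← hUeq] at hnull; exact hnull)
            exact Set.diff_subset_diff_left (Set.subset_univ B)
          rw [h2, add_zero] at h1
          exact h1
  · -- converse direction
    intro n l Ps hks hsum
    have hle : ∀ (k : Fin n) (A : Set Ω), MeasurableSet A → Ps k A ≤ V A := by
      intro k A hA
      rw [hV A]
      exact le_biSup (f := fun Q : Measure Ω => Q A) (hks k).1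
    haveI hprob_k : ∀ k : Fin n, IsProbabilityMeasure (Ps k) := fun k => hprob _ (hks k).1
    have happly : ∀ (A : Set Ω), (∑ k, l k • Ps k) A = ∑ k, l k * Ps k A := by
      intro A
      rw [Measure.finset_sum_apply]
      exact Finset.sum_congr rfl fun k _ => by rw [Measure.smul_apply, smul_eq_mul]
    have hμprob : IsProbabilityMeasure (∑ k, l k • Ps k) := by
      constructor
      rw [happly]
      simp only [measure_univ, mul_one]
      exact hsum
    refine ⟨hmax _ hμprob fun A hA => ?_, fun A hA => ?_⟩
    · rw [happly]
      calc ∑ k, l k * Ps k A ≤ ∑ k, l k * V A := by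
            gcongr with k hk
            exact hle k A hA
        _ = (∑ k, l k) * V A := (Finset.sum_mul _ _ _).symm
        _ = V A := by rw [hsum, one_mul]
    · rw [happly, happly]
      exact Finset.sum_congr rfl fun k _ => by rw [(hks k).2.1 A hA]
end

section
/- Assume 𝕍 is continuous, T-invariant, and T-ergodic, and let Θ* = {P_1, …, P_m} be the (finite) set of T-ergodic probability measures in Θ. Let D_1, …, D_m ∈ 𝓘 be pairwise disjoint sets with P_i(D_i) = 1 for each i. Then for every P ∈ Θ₀ and every bounded measurable ξ : Ω → ℝ, for P-almost every ω one has lim_{n→∞} (1/n) Σ_{k=0}^{n-1} ξ(T^k ω) = Σ_{i=1}^m E_{P_i}[ξ] · 1_{D_i}(ω). -/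
set_option linter.unusedSectionVars false

open MeasureTheory Filter Topology
open scoped ENNReal

namespace Stmt7Aux

variable {Ω : Type*} [MeasurableSpace Ω]

/-- Birkhoff sums. -/
def bS (T : Ω → Ω) (f : Ω → ℝ) (n : ℕ) (ω : Ω) : ℝ := ∑ k ∈ Finset.range n, f (T^[k] ω)

lemma bS_zero (T : Ω → Ω) (f : Ω → ℝ) (ω : Ω) : bS T f 0 ω = 0 := by simp [bS]

lemma bS_succ (T : Ω → Ω) (f : Ω → ℝ) (n : ℕ) (ω : Ω) :
    bS T f (n + 1) ω = bS T f n (T ω) + f ω := by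
  simp only [bS, Finset.sum_range_succ']
  simp [Function.iterate_succ_apply]

lemma bS_meas {T : Ω → Ω} (hT : Measurable T) {f : Ω → ℝ} (hf : Measurable f) (n : ℕ) :
    Measurable (bS T f n) :=
  Finset.measurable_sum _ fun k _ => hf.comp (hT.iterate k)

lemma abs_bS_le {T : Ω → Ω} {f : Ω → ℝ} {C : ℝ} (hC : ∀ ω, |f ω| ≤ C) (n : ℕ) (ω : Ω) :
    |bS T f n ω| ≤ n * C := by
  calc |bS T f n ω| ≤ ∑ k ∈ Finset.range n, |f (T^[k] ω)| := Finset.abs_sum_le_sum_abs _ _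
    _ ≤ ∑ _k ∈ Finset.range n, C := Finset.sum_le_sum fun k _ => hC _
    _ = n * C := by simp [mul_comm]

lemma abs_bS_div_le {T : Ω → Ω} {f : Ω → ℝ} {C : ℝ} (hC : ∀ ω, |f ω| ≤ C) (hC0 : 0 ≤ C)
    (n : ℕ) (ω : Ω) : |bS T f n ω / n| ≤ C := by
  rcases Nat.eq_zero_or_pos n with h | h
  · simp [h, bS_zero, hC0]
  · have hn : (0:ℝ) < n := by exact_mod_cast h
    rw [abs_div, abs_of_pos hn, div_le_iff₀ hn]
    calc |bS T f n ω| ≤ n * C := abs_bS_le hC n ω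
      _ = C * n := mul_comm _ _

/-- Running maxima of Birkhoff sums, starting from `bS 0 = 0`. -/
def bPhi (T : Ω → Ω) (f : Ω → ℝ) : ℕ → Ω → ℝ
  | 0 => fun _ => 0
  | (N + 1) => fun ω => max (bPhi T f N ω) (bS T f (N + 1) ω)

lemma bPhi_meas {T : Ω → Ω} (hT : Measurable T) {f : Ω → ℝ} (hf : Measurable f) (N : ℕ) :
    Measurable (bPhi T f N) := by
  induction N with
  | zero => exact measurable_const
  | succ N ih => exact ih.max (bS_meas hT hf (N + 1))

lemma bPhi_nonneg (T : Ω → Ω) (f : Ω → ℝ) (N : ℕ) (ω : Ω) : 0 ≤ bPhi T f N ω := by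
  induction N with
  | zero => exact le_rfl
  | succ N ih => exact ih.trans (le_max_left _ _)

lemma bS_le_bPhi (T : Ω → Ω) (f : Ω → ℝ) {n N : ℕ} (h : n ≤ N) (ω : Ω) :
    bS T f n ω ≤ bPhi T f N ω := by
  induction N with
  | zero => interval_cases n; simp [bS_zero, bPhi]
  | succ N ih =>
      rcases Nat.lt_or_ge n (N + 1) with h' | h'
      · exact (ih (Nat.lt_succ_iff.mp h')).trans (le_max_left _ _)
      · have : n = N + 1 := le_antisymm h h'
        subst this; exact le_max_right _ _

lemma bPhi_exists (T : Ω → Ω) (f : Ω → ℝ) (N : ℕ) (ω : Ω) :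
    ∃ n ≤ N, bPhi T f N ω = bS T f n ω := by
  induction N with
  | zero => exact ⟨0, le_rfl, by simp [bPhi, bS_zero]⟩
  | succ N ih =>
      obtain ⟨n, hn, he⟩ := ih
      rcases max_cases (bPhi T f N ω) (bS T f (N + 1) ω) with ⟨h1, _⟩ | ⟨h1, _⟩
      · exact ⟨n, hn.trans (Nat.le_succ N), by simpa [bPhi, h1] using he⟩
      · exact ⟨N + 1, le_rfl, by simp [bPhi, h1]⟩

lemma integrable_of_bounded {μ : Measure Ω} [IsFiniteMeasure μ] {g : Ω → ℝ}
    (hg : Measurable g) (C : ℝ) (hC : ∀ ω, |g ω| ≤ C) : Integrable g μ :=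
  (integrable_const C).mono' hg.aestronglyMeasurable
    (ae_of_all _ (by simpa [Real.norm_eq_abs] using hC))

/-- The maximal ergodic theorem. -/
lemma maximal_ergodic {μ : Measure Ω} [IsProbabilityMeasure μ] {T : Ω → Ω}
    (hT : Measurable T) (hμ : μ.map T = μ) {f : Ω → ℝ} (hf : Measurable f)
    {C : ℝ} (hC : ∀ ω, |f ω| ≤ C) (N : ℕ) :
    0 ≤ ∫ ω in {ω | 0 < bPhi T f N ω}, f ω ∂μ := by
  have hC0 : ∀ ω : Ω, 0 ≤ C := fun ω => (abs_nonneg (f ω)).trans (hC ω)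
  set Φ := bPhi T f N with hΦdef
  have hΦm : Measurable Φ := bPhi_meas hT hf N
  have hΦ0 : ∀ ω, 0 ≤ Φ ω := bPhi_nonneg T f N
  have hΦbd : ∀ ω, |Φ ω| ≤ N * C := by
    intro ω
    obtain ⟨n, hn, he⟩ := bPhi_exists T f N ω
    rw [hΦdef, he]
    exact (abs_bS_le hC n ω).trans
      (mul_le_mul_of_nonneg_right (by exact_mod_cast hn) (hC0 ω))
  have hint_f : Integrable f μ := integrable_of_bounded hf C hC
  have hint_Φ : Integrable Φ μ := integrable_of_bounded hΦm _ hΦbd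
  have hint_ΦT : Integrable (fun ω => Φ (T ω)) μ :=
    integrable_of_bounded (hΦm.comp hT) _ fun ω => hΦbd (T ω)
  set E := {ω | 0 < Φ ω} with hEdef
  have hE : MeasurableSet E := measurableSet_lt measurable_const hΦm
  have key : ∀ ω ∈ E, Φ ω - Φ (T ω) ≤ f ω := by
    intro ω hω
    obtain ⟨n, hn, he⟩ := bPhi_exists T f N ω
    match n, hn, he with
    | 0, _, he =>
        have h0 : Φ ω = 0 := by rw [hΦdef, he, bS_zero]
        exact absurd hω (by simp [hEdef, h0])
    | (m + 1), hn, he =>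
        have h1 : bS T f m (T ω) ≤ Φ (T ω) := bS_le_bPhi T f (by omega) (T ω)
        have h2 : Φ ω = bS T f m (T ω) + f ω := by rw [hΦdef, he, bS_succ]
        linarith
  have h1 : ∫ ω in E, (Φ ω - Φ (T ω)) ∂μ ≤ ∫ ω in E, f ω ∂μ :=
    setIntegral_mono_on (hint_Φ.sub hint_ΦT).integrableOn hint_f.integrableOn hE key
  have h2 : ∫ ω in E, (Φ ω - Φ (T ω)) ∂μ = ∫ ω in E, Φ ω ∂μ - ∫ ω in E, Φ (T ω) ∂μ :=
    integral_sub hint_Φ.integrableOn hint_ΦT.integrableOn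
  have h3 : ∫ ω in E, Φ ω ∂μ = ∫ ω, Φ ω ∂μ := by
    have hcompl : ∫ ω in Eᶜ, Φ ω ∂μ = 0 := by
      rw [setIntegral_congr_fun hE.compl (g := fun _ => (0:ℝ))
        (fun ω hω => le_antisymm (not_lt.mp hω) (hΦ0 ω))]
      simp
    have := integral_add_compl hE hint_Φ (f := Φ)
    linarith
  have h4 : ∫ ω in E, Φ (T ω) ∂μ ≤ ∫ ω, Φ (T ω) ∂μ :=
    setIntegral_le_integral hint_ΦT (ae_of_all _ fun ω => hΦ0 (T ω))
  have h5 : ∫ ω, Φ (T ω) ∂μ = ∫ ω, Φ ω ∂μ := by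
    conv_rhs => rw [← hμ]
    rw [integral_map hT.aemeasurable hΦm.aestronglyMeasurable]
  linarith

lemma bS_neg (T : Ω → Ω) (f : Ω → ℝ) (n : ℕ) (ω : Ω) :
    bS T (fun x => -f x) n ω = -bS T f n ω := by
  simp [bS]

lemma freq_forward {T : Ω → Ω} {f : Ω → ℝ} {C : ℝ} (hC : ∀ ω, |f ω| ≤ C)
    (ω : Ω) {r r' : ℝ} (hlt : r' < r)
    (h : ∃ᶠ n in atTop, r < bS T f n ω / n) :
    ∃ᶠ n in atTop, r' < bS T f n (T ω) / n := by
  rw [frequently_atTop] at h ⊢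
  intro M
  have hd0 : (0:ℝ) < r - r' := by linarith
  obtain ⟨K, hK⟩ := exists_nat_gt ((C - r') / (r - r'))
  obtain ⟨n, hn, hgt⟩ := h (M + K + 2)
  refine ⟨n - 1, by omega, ?_⟩
  have h1n : 1 ≤ n := by omega
  have hmn : n - 1 + 1 = n := by omega
  have hnpos : (0:ℝ) < n := by exact_mod_cast (by omega : 0 < n)
  have hmpos : (0:ℝ) < ((n - 1 : ℕ) : ℝ) := by exact_mod_cast (by omega : 0 < n - 1)
  have hcast : ((n - 1 : ℕ) : ℝ) = (n:ℝ) - 1 := by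
    rw [Nat.cast_sub h1n]; simp
  have hKle : (K:ℝ) ≤ n := by exact_mod_cast (by omega : K ≤ n)
  have hnd : C - r' < (n:ℝ) * (r - r') := by
    rw [div_lt_iff₀ hd0] at hK; nlinarith
  have hbs : r * n < bS T f n ω := (lt_div_iff₀ hnpos).mp hgt
  have hsucc : bS T f n ω = bS T f (n-1) (T ω) + f ω := by
    conv_lhs => rw [← hmn]
    exact bS_succ T f (n-1) ω
  have hfC : f ω ≤ C := (abs_le.mp (hC ω)).2
  rw [lt_div_iff₀ hmpos, hcast]
  linarith

lemma freq_backward {T : Ω → Ω} {f : Ω → ℝ} {C : ℝ} (hC : ∀ ω, |f ω| ≤ C)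
    (ω : Ω) {r r' : ℝ} (hlt : r' < r)
    (h : ∃ᶠ n in atTop, r < bS T f n (T ω) / n) :
    ∃ᶠ n in atTop, r' < bS T f n ω / n := by
  rw [frequently_atTop] at h ⊢
  intro M
  have hd0 : (0:ℝ) < r - r' := by linarith
  obtain ⟨K, hK⟩ := exists_nat_gt ((C + r') / (r - r'))
  obtain ⟨n, hn, hgt⟩ := h (M + K + 1)
  refine ⟨n + 1, by omega, ?_⟩
  have hnpos : (0:ℝ) < n := by exact_mod_cast (by omega : 0 < n)
  have hmpos : (0:ℝ) < ((n + 1 : ℕ) : ℝ) := by positivity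
  have hKle : (K:ℝ) ≤ n := by exact_mod_cast (by omega : K ≤ n)
  have hnd : C + r' < (n:ℝ) * (r - r') := by
    rw [div_lt_iff₀ hd0] at hK; nlinarith
  have hbs : r * n < bS T f n (T ω) := (lt_div_iff₀ hnpos).mp hgt
  have hsucc : bS T f (n+1) ω = bS T f n (T ω) + f ω := bS_succ T f n ω
  have hfC : -C ≤ f ω := (abs_le.mp (hC ω)).1
  rw [lt_div_iff₀ hmpos]
  push_cast
  linarith

lemma birkhoff_upper {μ : Measure Ω} [IsProbabilityMeasure μ] {T : Ω → Ω}
    (hT : Measurable T) (hμ : μ.map T = μ)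
    (herg : ∀ A : Set Ω, MeasurableSet A → T ⁻¹' A = A → μ A = 0 ∨ μ A = 1)
    {f : Ω → ℝ} (hf : Measurable f) {C : ℝ} (hC : ∀ ω, |f ω| ≤ C)
    (q : ℚ) (hq : ∫ ω, f ω ∂μ < q) :
    μ {ω | ∃ᶠ n in atTop, (q:ℝ) < bS T f n ω / n} = 0 := by
  set β : ℝ := (∫ ω, f ω ∂μ + q) / 2 with hβdef
  have hβ1 : ∫ ω, f ω ∂μ < β := by rw [hβdef]; linarith
  have hβ2 : β < q := by rw [hβdef]; linarith
  set F : ℚ → Set Ω := fun r => {ω | ∃ᶠ n in atTop, (r:ℝ) < bS T f n ω / n} with hFdef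
  have hFmeas : ∀ r, MeasurableSet (F r) := by
    intro r
    have hFr : F r = ⋂ N : ℕ, ⋃ n : ℕ, ⋃ _ : N ≤ n, {ω | (r:ℝ) < bS T f n ω / n} := by
      ext ω
      simp [hFdef, frequently_atTop]
    rw [hFr]
    exact MeasurableSet.iInter fun N => MeasurableSet.iUnion fun n => MeasurableSet.iUnion
      fun _ => measurableSet_lt measurable_const ((bS_meas hT hf n).div_const _)
  set G : Set Ω := ⋃ r : ℚ, ⋃ _ : β < (r:ℝ), F r with hGdef
  have hGmeas : MeasurableSet G :=
    MeasurableSet.iUnion fun r => MeasurableSet.iUnion fun _ => hFmeas r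
  have hGinv : T ⁻¹' G = G := by
    ext ω
    simp only [hGdef, Set.mem_preimage, Set.mem_iUnion, hFdef, Set.mem_setOf_eq]
    constructor
    · rintro ⟨r, hr, hfr⟩
      obtain ⟨r', hr'1, hr'2⟩ := exists_rat_btwn (show β < (r:ℝ) from hr)
      exact ⟨r', hr'1, freq_backward hC ω (by exact_mod_cast hr'2) hfr⟩
    · rintro ⟨r, hr, hfr⟩
      obtain ⟨r', hr'1, hr'2⟩ := exists_rat_btwn (show β < (r:ℝ) from hr)
      exact ⟨r', hr'1, freq_forward hC ω (by exact_mod_cast hr'2) hfr⟩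
  have hint_f : Integrable f μ := integrable_of_bounded hf C hC
  rcases herg G hGmeas hGinv with h0 | h1
  · have hsub : F q ⊆ G := fun ω hω => Set.mem_iUnion.mpr ⟨q, Set.mem_iUnion.mpr ⟨hβ2, hω⟩⟩
    exact le_antisymm (h0 ▸ measure_mono hsub) zero_le
  · exfalso
    set g : Ω → ℝ := fun ω => f ω - β with hgdef
    have hgm : Measurable g := hf.sub measurable_const
    have hgC : ∀ ω, |g ω| ≤ C + |β| := by
      intro ω
      have hg : g ω = f ω - β := rfl
      have h1 := abs_le.mp (hC ω)
      have h2 := le_abs_self β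
      have h3 := neg_abs_le β
      rw [abs_le, hg]
      constructor <;> linarith
    have hbSg : ∀ (n : ℕ) (ω : Ω), bS T g n ω = bS T f n ω - n * β := by
      intro n ω
      simp [bS, hgdef, Finset.sum_sub_distrib, mul_comm]
    set E : Set Ω := ⋃ N : ℕ, {ω | 0 < bPhi T g N ω} with hEdef
    have hENmeas : ∀ N : ℕ, MeasurableSet {ω | 0 < bPhi T g N ω} := fun N =>
      measurableSet_lt measurable_const (bPhi_meas hT hgm N)
    have hEmeas : MeasurableSet E := MeasurableSet.iUnion hENmeas
    have hGE : G ⊆ E := by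
      intro ω hω
      simp only [hGdef, Set.mem_iUnion, hFdef, Set.mem_setOf_eq] at hω
      obtain ⟨r, hr, hfr⟩ := hω
      obtain ⟨n, hn1, hlt⟩ := frequently_atTop.mp hfr 1
      have hnpos : (0:ℝ) < n := by exact_mod_cast hn1
      have hrb : (r:ℝ) * n < bS T f n ω := (lt_div_iff₀ hnpos).mp hlt
      have h2 : 0 < bS T g n ω := by rw [hbSg]; nlinarith
      exact Set.mem_iUnion.mpr ⟨n, lt_of_lt_of_le h2 (bS_le_bPhi T g le_rfl ω)⟩
    have hμE : μ E = 1 := le_antisymm prob_le_one (h1 ▸ measure_mono hGE)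
    have hint_g : Integrable g μ := integrable_of_bounded hgm _ hgC
    have hmono : Monotone fun N : ℕ => {ω : Ω | 0 < bPhi T g N ω} := by
      apply monotone_nat_of_le_succ
      intro N ω hω
      have hmax : bPhi T g (N+1) ω = max (bPhi T g N ω) (bS T g (N+1) ω) := rfl
      exact lt_of_lt_of_le hω (hmax ▸ le_max_left _ _)
    have htend := tendsto_setIntegral_of_monotone hENmeas hmono hint_g.integrableOn
    have hge : 0 ≤ ∫ ω in E, g ω ∂μ :=
      ge_of_tendsto' htend fun N => maximal_ergodic hT hμ hgm hgC N
    have hcompl : μ Eᶜ = 0 := by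
      rw [measure_compl hEmeas (measure_ne_top μ E), hμE, measure_univ]; simp
    have hEeq : ∫ ω in E, g ω ∂μ = ∫ ω, g ω ∂μ := by
      have hzero : ∫ ω in Eᶜ, g ω ∂μ = 0 := by
        rw [Measure.restrict_eq_zero.mpr hcompl]; exact integral_zero_measure _
      have hsplit := integral_add_compl hEmeas hint_g (f := g)
      linarith
    have hgint : ∫ ω, g ω ∂μ = ∫ ω, f ω ∂μ - β := by
      have : ∫ ω, g ω ∂μ = ∫ ω, (f ω - β) ∂μ := rfl
      rw [this, integral_sub hint_f (integrable_const β), integral_const]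
      simp
    rw [hEeq, hgint] at hge
    linarith

/-- Birkhoff's pointwise ergodic theorem for bounded measurable functions and
ergodic probability measures. -/
lemma birkhoff_ergodic {μ : Measure Ω} [IsProbabilityMeasure μ] {T : Ω → Ω}
    (hT : Measurable T) (hμ : μ.map T = μ)
    (herg : ∀ A : Set Ω, MeasurableSet A → T ⁻¹' A = A → μ A = 0 ∨ μ A = 1)
    {f : Ω → ℝ} (hf : Measurable f) {C : ℝ} (hC : ∀ ω, |f ω| ≤ C) :
    ∀ᵐ ω ∂μ, Tendsto (fun n : ℕ => bS T f n ω / n) atTop (𝓝 (∫ ω, f ω ∂μ)) := by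
  have hupper : ∀ᵐ ω ∂μ, ∀ q : ℚ, ∫ x, f x ∂μ < q →
      ¬ (∃ᶠ n in atTop, (q:ℝ) < bS T f n ω / n) := by
    rw [ae_all_iff]
    intro q
    by_cases hq : ∫ x, f x ∂μ < q
    · have h0 := birkhoff_upper hT hμ herg hf hC q hq
      filter_upwards [measure_eq_zero_iff_ae_notMem.mp h0] with ω hω _
      exact hω
    · exact ae_of_all _ fun ω h => absurd h hq
  have hlower : ∀ᵐ ω ∂μ, ∀ q : ℚ, ∫ x, (-f x) ∂μ < q →
      ¬ (∃ᶠ n in atTop, (q:ℝ) < bS T (fun x => -f x) n ω / n) := by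
    rw [ae_all_iff]
    intro q
    by_cases hq : ∫ x, (-f x) ∂μ < q
    · have h0 := birkhoff_upper hT hμ herg hf.neg
        (C := C) (fun ω => by simpa using hC ω) q hq
      filter_upwards [measure_eq_zero_iff_ae_notMem.mp h0] with ω hω _
      exact hω
    · exact ae_of_all _ fun ω h => absurd h hq
  have hneg : ∫ x, (-f x) ∂μ = -∫ x, f x ∂μ := integral_neg f
  filter_upwards [hupper, hlower] with ω h1 h2
  rw [tendsto_order]
  constructor
  · intro b hb
    obtain ⟨q, hq1, hq2⟩ := exists_rat_btwn (show -∫ x, f x ∂μ < -b by linarith)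
    have h2q := h2 q (by rw [hneg]; exact_mod_cast hq1)
    rw [not_frequently] at h2q
    filter_upwards [h2q] with n hn
    rw [bS_neg, neg_div] at hn
    push_neg at hn
    linarith [neg_le_neg hn]
  · intro b hb
    obtain ⟨q, hq1, hq2⟩ := exists_rat_btwn (show ∫ x, f x ∂μ < b from hb)
    have h1q := h1 q hq1
    rw [not_frequently] at h1q
    filter_upwards [h1q] with n hn
    push_neg at hn
    linarith

/-! ### Ultrafilter limits of sequences of measures -/

noncomputable def ulim (U : Ultrafilter ℕ) (f : ℕ → ℝ≥0∞) : ℝ≥0∞ := (U.map f).lim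

lemma tendsto_ulim (U : Ultrafilter ℕ) (f : ℕ → ℝ≥0∞) : Tendsto f ↑U (𝓝 (ulim U f)) := by
  have h := (U.map f).le_nhds_lim
  rwa [Ultrafilter.coe_map] at h

lemma ulim_unique {U : Ultrafilter ℕ} {f : ℕ → ℝ≥0∞} {a : ℝ≥0∞}
    (h : Tendsto f ↑U (𝓝 a)) : ulim U f = a :=
  tendsto_nhds_unique (tendsto_ulim U f) h

lemma ulim_const (U : Ultrafilter ℕ) (c : ℝ≥0∞) : ulim U (fun _ => c) = c :=
  ulim_unique tendsto_const_nhds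

lemma ulim_le_const {U : Ultrafilter ℕ} {f : ℕ → ℝ≥0∞} {c : ℝ≥0∞}
    (h : ∀ k, f k ≤ c) : ulim U f ≤ c :=
  le_of_tendsto' (tendsto_ulim U f) h

lemma exists_limit_measure (V : Set Ω → ℝ≥0∞)
    (hS1 : ∀ A, V A ≤ 1)
    (hScont : ∀ A : ℕ → Set Ω, (∀ n, MeasurableSet (A n)) → Antitone A →
      (⋂ n, A n) = ∅ → Tendsto (fun n => V (A n)) atTop (𝓝 0))
    (ν : ℕ → Measure Ω) (hprob : ∀ k, IsProbabilityMeasure (ν k))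
    (hbound : ∀ k (A : Set Ω), MeasurableSet A → ν k A ≤ V A)
    (U : Ultrafilter ℕ) :
    ∃ μ : Measure Ω, IsProbabilityMeasure μ ∧ (∀ A, MeasurableSet A → μ A ≤ V A) ∧
      ∀ A, MeasurableSet A → Tendsto (fun k => ν k A) ↑U (𝓝 (μ A)) := by
  have hadd : ∀ (g : ℕ → Set Ω), (∀ i, MeasurableSet (g i)) →
      Pairwise (Function.onFun Disjoint g) →
      ulim U (fun k => ν k (⋃ i, g i)) = ∑' i, ulim U (fun k => ν k (g i)) := by
    intro g hgm hgd
    set t : ℕ → Set Ω := fun K => ⋃ i : ℕ, g (K + i) with htdef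
    have htm : ∀ K, MeasurableSet (t K) := fun K => MeasurableSet.iUnion fun i => hgm _
    have htanti : Antitone t := by
      apply antitone_nat_of_succ_le
      intro K ω hω
      obtain ⟨i, hi⟩ := Set.mem_iUnion.mp hω
      exact Set.mem_iUnion.mpr ⟨i + 1, by rw [show K + (i + 1) = K + 1 + i by omega]; exact hi⟩
    have htempty : (⋂ K, t K) = ∅ := by
      ext ω
      simp only [Set.mem_iInter, Set.mem_empty_iff_false, iff_false]
      intro h
      obtain ⟨i, hi⟩ := Set.mem_iUnion.mp (h 0)
      obtain ⟨j, hj⟩ := Set.mem_iUnion.mp (h (i + 1))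
      have : (0 + i) ≠ (i + 1 + j) := by omega
      exact Set.disjoint_left.mp (hgd this) hi hj
    have hsplit : ∀ (k K : ℕ),
        ν k (⋃ i, g i) = ∑ i ∈ Finset.range K, ν k (g i) + ν k (t K) := by
      intro k K
      have hun : (⋃ i, g i) = (⋃ i ∈ Finset.range K, g i) ∪ t K := by
        ext ω
        simp only [Set.mem_iUnion, Set.mem_union, Finset.mem_range, htdef]
        constructor
        · rintro ⟨i, hi⟩
          rcases Nat.lt_or_ge i K with h | h
          · exact Or.inl ⟨i, h, hi⟩
          · exact Or.inr ⟨i - K, by rwa [show K + (i - K) = i by omega]⟩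
        · rintro (⟨i, _, hi⟩ | ⟨i, hi⟩)
          · exact ⟨i, hi⟩
          · exact ⟨K + i, hi⟩
      have hdisj : Disjoint (⋃ i ∈ Finset.range K, g i) (t K) := by
        rw [Set.disjoint_left]
        intro ω hω1 hω2
        simp only [Set.mem_iUnion, Finset.mem_range] at hω1
        obtain ⟨i, hiK, hi⟩ := hω1
        obtain ⟨j, hj⟩ := Set.mem_iUnion.mp hω2
        exact Set.disjoint_left.mp (hgd (show i ≠ K + j by omega)) hi hj
      rw [hun, measure_union hdisj (htm K),
        measure_biUnion_finset (fun i _ j _ hij => hgd hij) (fun i _ => hgm i)]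
    have hK : ∀ K : ℕ, ulim U (fun k => ν k (⋃ i, g i)) =
        ∑ i ∈ Finset.range K, ulim U (fun k => ν k (g i)) + ulim U (fun k => ν k (t K)) := by
      intro K
      apply ulim_unique
      have h1 : Tendsto (fun k => ∑ i ∈ Finset.range K, ν k (g i)) ↑U
          (𝓝 (∑ i ∈ Finset.range K, ulim U (fun k => ν k (g i)))) :=
        tendsto_finset_sum _ fun i _ => tendsto_ulim U _
      have h2 := (h1.add (tendsto_ulim U (fun k => ν k (t K))))
      refine h2.congr fun k => ?_
      exact (hsplit k K).symm
    have htail0 : Tendsto (fun K => ulim U (fun k => ν k (t K))) atTop (𝓝 0) := by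
      refine tendsto_of_tendsto_of_tendsto_of_le_of_le tendsto_const_nhds
        (hScont t htm htanti htempty) (fun K => zero_le) (fun K => ?_)
      exact ulim_le_const fun k => hbound k (t K) (htm K)
    have hfin : Tendsto (fun K => ∑ i ∈ Finset.range K, ulim U (fun k => ν k (g i)))
        atTop (𝓝 (∑' i, ulim U (fun k => ν k (g i)))) := ENNReal.tendsto_nat_tsum _
    have := hfin.add htail0
    rw [add_zero] at this
    have hconst : Tendsto (fun _ : ℕ => ulim U (fun k => ν k (⋃ i, g i))) atTop
        (𝓝 (∑' i, ulim U (fun k => ν k (g i)))) := by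
      refine this.congr fun K => (hK K).symm
    exact tendsto_nhds_unique tendsto_const_nhds hconst
  refine ⟨Measure.ofMeasurable (fun A _ => ulim U fun k => ν k A)
    (by simpa using ulim_const U 0) (fun g hgm hgd => hadd g hgm hgd), ?_, ?_, ?_⟩
  · constructor
    rw [Measure.ofMeasurable_apply _ MeasurableSet.univ]
    simpa [measure_univ] using ulim_const U 1
  · intro A hA
    rw [Measure.ofMeasurable_apply _ hA]
    exact ulim_le_const fun k => hbound k A hA
  · intro A hA
    rw [Measure.ofMeasurable_apply _ hA]
    exact tendsto_ulim U _

lemma iterate_preimage_invariant {T : Ω → Ω} {A : Set Ω} (h : T ⁻¹' A = A) (j : ℕ) :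
    (T^[j]) ⁻¹' A = A := by
  induction j with
  | zero => simp
  | succ j ih => rw [Function.iterate_succ, Set.preimage_comp, ih, h]

lemma tendsto_nat_div_succ : Tendsto (fun n : ℕ => (n : ℝ) / (n + 1)) atTop (𝓝 1) := by
  have h := (tendsto_const_nhds : Tendsto (fun _ : ℕ => (1:ℝ)) atTop (𝓝 1)).sub
    tendsto_one_div_add_atTop_nhds_zero_nat
  rw [sub_zero] at h
  refine h.congr fun n => ?_
  have hne : (n : ℝ) + 1 ≠ 0 := by positivity
  field_simp
  ring

lemma tendsto_succ_div_nat : Tendsto (fun n : ℕ => ((n : ℝ) + 1) / n) atTop (𝓝 1) := by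
  have h := (tendsto_const_nhds : Tendsto (fun _ : ℕ => (1:ℝ)) atTop (𝓝 1)).add
    tendsto_one_div_atTop_nhds_zero_nat
  rw [add_zero] at h
  refine h.congr' ?_
  filter_upwards [eventually_ge_atTop 1] with n hn
  have hne : (n : ℝ) ≠ 0 := by
    have : (0:ℝ) < n := by exact_mod_cast hn
    linarith
  field_simp

lemma tendsto_avg_shift {T : Ω → Ω} {f : Ω → ℝ} {ω : Ω} {L : ℝ} :
    Tendsto (fun n : ℕ => bS T f n (T ω) / n) atTop (𝓝 L) ↔
    Tendsto (fun n : ℕ => bS T f n ω / n) atTop (𝓝 L) := by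
  have hc1 : Tendsto (fun n : ℕ => f ω / ((n:ℝ) + 1)) atTop (𝓝 0) := by
    have h := tendsto_const_div_atTop_nhds_zero_nat (f ω)
    have h2 := h.comp (tendsto_add_atTop_nat 1)
    refine h2.congr fun n => ?_
    simp [Function.comp]
    try norm_cast
  have hc2 : Tendsto (fun n : ℕ => f ω / (n:ℝ)) atTop (𝓝 0) :=
    tendsto_const_div_atTop_nhds_zero_nat (f ω)
  constructor
  · intro hA
    have h1 : Tendsto (fun n : ℕ => (bS T f n (T ω) / n) * ((n:ℝ)/(n+1)) + f ω / ((n:ℝ)+1))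
        atTop (𝓝 (L * 1 + 0)) := (hA.mul tendsto_nat_div_succ).add hc1
    rw [mul_one, add_zero] at h1
    have h2 : Tendsto (fun n : ℕ => bS T f (n+1) ω / ((n:ℝ)+1)) atTop (𝓝 L) := by
      refine h1.congr' ?_
      filter_upwards [eventually_ge_atTop 1] with n hn
      have hne : (n : ℝ) ≠ 0 := by
        have : (0:ℝ) < n := by exact_mod_cast hn
        linarith
      have hne1 : (n : ℝ) + 1 ≠ 0 := by positivity
      rw [bS_succ]
      field_simp
      try ring
    rw [← tendsto_add_atTop_iff_nat 1]
    refine h2.congr fun n => ?_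
    try norm_cast
  · intro hB
    have h0 : Tendsto (fun n : ℕ => bS T f (n+1) ω / ((n:ℝ)+1)) atTop (𝓝 L) := by
      have := hB.comp (tendsto_add_atTop_nat 1)
      refine this.congr fun n => ?_
      simp [Function.comp]
      try norm_cast
    have h1 : Tendsto (fun n : ℕ => (bS T f (n+1) ω / ((n:ℝ)+1)) * (((n:ℝ)+1)/n) - f ω / (n:ℝ))
        atTop (𝓝 (L * 1 - 0)) := (h0.mul tendsto_succ_div_nat).sub hc2
    rw [mul_one, sub_zero] at h1
    refine h1.congr' ?_
    filter_upwards [eventually_ge_atTop 1] with n hn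
    have hne : (n : ℝ) ≠ 0 := by
      have : (0:ℝ) < n := by exact_mod_cast hn
      linarith
    have hne1 : (n : ℝ) + 1 ≠ 0 := by positivity
    rw [bS_succ]
    field_simp
    try ring

/-- Existence of a `V`-atom inside any invariant set of full upper probability. -/
lemma exists_atom (V : Set Ω → ℝ≥0∞) (T : Ω → Ω)
    (hVmono : ∀ A B : Set Ω, A ⊆ B → V A ≤ V B)
    (hcont : ∀ A : ℕ → Set Ω, (∀ n, MeasurableSet (A n)) → Antitone A →
      (⋂ n, A n) = ∅ → Tendsto (fun n => V (A n)) atTop (𝓝 0))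
    (hVerg : ∀ A : Set Ω, MeasurableSet A → T ⁻¹' A = A → V A = 0 ∨ V A = 1)
    (G : Set Ω) (hGm : MeasurableSet G) (hGi : T ⁻¹' G = G) (hG1 : V G = 1) :
    ∃ E, E ⊆ G ∧ MeasurableSet E ∧ T ⁻¹' E = E ∧ V E = 1 ∧
      ∀ A : Set Ω, MeasurableSet A → T ⁻¹' A = A → V (A ∩ E) = 0 ∨ V (E \ A) = 0 := by
  have hfin : ¬ ∃ p : ℕ → Set Ω, (∀ n, MeasurableSet (p n)) ∧ (∀ n, V (p n) = 1) ∧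
      Pairwise (Function.onFun Disjoint p) := by
    rintro ⟨p, hpm, hp1, hpd⟩
    set B : ℕ → Set Ω := fun N => ⋃ i : ℕ, p (N + i) with hBdef
    have hBm : ∀ N, MeasurableSet (B N) := fun N => MeasurableSet.iUnion fun i => hpm _
    have hBanti : Antitone B := by
      apply antitone_nat_of_succ_le
      intro N ω hω
      obtain ⟨i, hi⟩ := Set.mem_iUnion.mp hω
      exact Set.mem_iUnion.mpr ⟨i + 1, by rw [show N + (i + 1) = N + 1 + i by omega]; exact hi⟩
    have hBempty : (⋂ N, B N) = ∅ := by
      ext ω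
      simp only [Set.mem_iInter, Set.mem_empty_iff_false, iff_false]
      intro hcon
      obtain ⟨i, hi⟩ := Set.mem_iUnion.mp (hcon 0)
      obtain ⟨j, hj⟩ := Set.mem_iUnion.mp (hcon (i + 1))
      exact Set.disjoint_left.mp (hpd (show (0 + i) ≠ (i + 1 + j) by omega)) hi hj
    have htend := hcont B hBm hBanti hBempty
    have hev := htend.eventually_lt_const (show (0:ℝ≥0∞) < 1 by norm_num)
    obtain ⟨N, hN⟩ := hev.exists
    have : V (p N) ≤ V (B N) := hVmono _ _ fun ω hω =>
      Set.mem_iUnion.mpr ⟨0, by rw [Nat.add_zero]; exact hω⟩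
    rw [hp1 N] at this
    exact absurd (lt_of_le_of_lt this hN) (lt_irrefl _)
  by_contra hno
  push_neg at hno
  have hstep : ∀ E : Set Ω, E ⊆ G → MeasurableSet E → T ⁻¹' E = E → V E = 1 →
      ∃ A : Set Ω, MeasurableSet A ∧ T ⁻¹' A = A ∧ V (A ∩ E) = 1 ∧ V (E \ A) = 1 := by
    intro E hEG hEm hEi hE1
    obtain ⟨A, hAm, hAi, hA0, hA0'⟩ := hno E hEG hEm hEi hE1
    have hAEi : T ⁻¹' (A ∩ E) = A ∩ E := by rw [Set.preimage_inter, hAi, hEi]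
    have hAEi' : T ⁻¹' (E \ A) = E \ A := by
      rw [Set.preimage_diff, hAi, hEi]
    refine ⟨A, hAm, hAi, ?_, ?_⟩
    · rcases hVerg (A ∩ E) (hAm.inter hEm) hAEi with h | h
      · exact absurd h hA0
      · exact h
    · rcases hVerg (E \ A) (hEm.diff hAm) hAEi' with h | h
      · exact absurd h hA0'
      · exact h
  choose! A hAm hAi hA1 hA2 using hstep
  set Pk : Set Ω → Prop :=
    fun E => E ⊆ G ∧ MeasurableSet E ∧ T ⁻¹' E = E ∧ V E = 1 with hPkdef
  have hPkG : Pk G := ⟨subset_rfl, hGm, hGi, hG1⟩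
  let step : {E : Set Ω // Pk E} → {E : Set Ω // Pk E} := fun p =>
    ⟨A p.1 ∩ p.1, by
      obtain ⟨h1, h2, h3, h4⟩ := p.2
      refine ⟨(Set.inter_subset_right).trans h1, (hAm p.1 h1 h2 h3 h4).inter h2, ?_, ?_⟩
      · rw [Set.preimage_inter, hAi p.1 h1 h2 h3 h4, h3]
      · exact hA1 p.1 h1 h2 h3 h4⟩
  let seq : ℕ → {E : Set Ω // Pk E} := fun n => step^[n] ⟨G, hPkG⟩
  have hseq_succ : ∀ n, seq (n + 1) = step (seq n) := fun n =>
    Function.iterate_succ_apply' step n _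
  have hseq_succ_val : ∀ n, (seq (n + 1)).1 = A (seq n).1 ∩ (seq n).1 := fun n => by
    rw [hseq_succ]
  set p : ℕ → Set Ω := fun n => (seq n).1 \ A (seq n).1 with hpdef
  apply hfin
  refine ⟨p, ?_, ?_, ?_⟩
  · intro n
    obtain ⟨h1, h2, h3, h4⟩ := (seq n).2
    exact h2.diff (hAm _ h1 h2 h3 h4)
  · intro n
    obtain ⟨h1, h2, h3, h4⟩ := (seq n).2
    exact hA2 _ h1 h2 h3 h4
  · have hanti : Antitone (fun n => (seq n).1) := by
      apply antitone_nat_of_succ_le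
      intro n
      rw [hseq_succ_val]
      exact Set.inter_subset_right
    have key : ∀ i j : ℕ, i < j → Disjoint (p i) (p j) := by
      intro i j hij
      rw [Set.disjoint_left]
      intro ω hωi hωj
      have h1 : ω ∈ (seq j).1 := hωj.1
      have h2 : (seq j).1 ⊆ (seq (i + 1)).1 := hanti hij
      have h3 : ω ∈ A (seq i).1 := by
        have := h2 h1
        rw [hseq_succ_val] at this
        exact this.1
      exact hωi.2 h3
    intro i j hij
    rcases lt_or_gt_of_ne hij with h | h
    · exact key i j h
    · exact (key j i h).symm

end Stmt7Aux

open Stmt7Aux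

/-- With `Θ* = {P_1, …, P_m}` the finite set of `T`-ergodic
measures in `Θ` and `D_1, …, D_m` pairwise disjoint invariant sets with
`P_i(D_i) = 1`, for every `T`-invariant `P ∈ Θ₀` and bounded measurable `ξ`,
`P`-a.e. the time averages of `ξ` converge to `∑ i, E_{P_i}[ξ] · 1_{D_i}`. -/
theorem stmt_7 {Ω : Type*} [MeasurableSpace Ω] (T : Ω → Ω) (hT : Measurable T)
    (Θ : Set (Measure Ω)) (hΘne : Θ.Nonempty)
    (hprob : ∀ P ∈ Θ, IsProbabilityMeasure P)
    (V : Set Ω → ℝ≥0∞)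
    (hV : ∀ A : Set Ω, V A = ⨆ P ∈ Θ, P A)
    (hmax : ∀ P : Measure Ω, IsProbabilityMeasure P →
      (∀ A, MeasurableSet A → P A ≤ V A) → P ∈ Θ)
    (hcont : ∀ A : ℕ → Set Ω, (∀ n, MeasurableSet (A n)) → Antitone A →
      (⋂ n, A n) = ∅ → Tendsto (fun n => V (A n)) atTop (nhds 0))
    (hVinv : ∀ A : Set Ω, MeasurableSet A → V (T ⁻¹' A) = V A)
    (hVerg : ∀ A : Set Ω, MeasurableSet A → T ⁻¹' A = A → V A = 0 ∨ V A = 1)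
    (m : ℕ) (Ps : Fin m → Measure Ω) (hPsInj : Function.Injective Ps)
    (hPsRange : Set.range Ps = {P ∈ Θ |
      (∀ A : Set Ω, MeasurableSet A → P (T ⁻¹' A) = P A) ∧
      (∀ A : Set Ω, MeasurableSet A → T ⁻¹' A = A → P A = 0 ∨ P A = 1)})
    (D : Fin m → Set Ω) (hDmeas : ∀ i, MeasurableSet (D i))
    (hDinv : ∀ i, T ⁻¹' (D i) = D i)
    (hDdisj : Pairwise (Function.onFun Disjoint D))
    (hDfull : ∀ i, Ps i (D i) = 1)
    (P : Measure Ω) (hP : P ∈ Θ)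
    (hPinv : ∀ A : Set Ω, MeasurableSet A → P (T ⁻¹' A) = P A)
    (ξ : Ω → ℝ) (hξmeas : Measurable ξ) (C : ℝ) (hξbdd : ∀ ω, |ξ ω| ≤ C) :
    ∀ᵐ ω ∂P,
      Tendsto (fun n : ℕ => (∑ k ∈ Finset.range n, ξ (T^[k] ω)) / n) atTop
        (nhds (∑ i, (D i).indicator (fun _ => ∫ ω', ξ ω' ∂(Ps i)) ω)) := by
  classical
  -- preliminaries about V
  have hVle1 : ∀ A : Set Ω, V A ≤ 1 := by
    intro A
    rw [hV]
    refine iSup₂_le fun Q hQ => ?_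
    haveI := hprob Q hQ
    exact prob_le_one
  have hPleV : ∀ (Q : Measure Ω), Q ∈ Θ → ∀ A : Set Ω, Q A ≤ V A := by
    intro Q hQ A
    rw [hV]
    exact le_iSup₂ (f := fun (P' : Measure Ω) (_ : P' ∈ Θ) => P' A) Q hQ
  have hVmono : ∀ A B : Set Ω, A ⊆ B → V A ≤ V B := by
    intro A B hAB
    rw [hV, hV]
    exact iSup₂_mono fun Q _ => measure_mono hAB
  -- bound for ξ
  have hξbdd' : ∀ ω, |ξ ω| ≤ max C 0 := fun ω => (hξbdd ω).trans (le_max_left _ _)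
  -- the limit function commutes with T
  have hhT : ∀ ω : Ω, (∑ i, (D i).indicator (fun _ => ∫ ω', ξ ω' ∂(Ps i)) (T ω)) =
      ∑ i, (D i).indicator (fun _ => ∫ ω', ξ ω' ∂(Ps i)) ω := by
    intro ω
    refine Finset.sum_congr rfl fun i _ => ?_
    have hiff : T ω ∈ D i ↔ ω ∈ D i := by
      conv_rhs => rw [← hDinv i]
      exact Iff.rfl
    by_cases hω : ω ∈ D i
    · rw [Set.indicator_of_mem hω, Set.indicator_of_mem (hiff.mpr hω)]
    · rw [Set.indicator_of_notMem hω, Set.indicator_of_notMem (fun hc => hω (hiff.mp hc))]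
  set Good : Set Ω := {ω : Ω | Tendsto (fun n : ℕ =>
      (∑ k ∈ Finset.range n, ξ (T^[k] ω)) / n) atTop
      (𝓝 (∑ i, (D i).indicator (fun _ => ∫ ω', ξ ω' ∂(Ps i)) ω))} with hGooddef
  -- measurability of Good
  have hhmeas : Measurable (fun ω => ∑ i, (D i).indicator
      (fun _ => ∫ ω', ξ ω' ∂(Ps i)) ω) :=
    Finset.measurable_sum _ fun i _ => Measurable.indicator measurable_const (hDmeas i)
  have hGoodmeas : MeasurableSet Good := by
    have hrepr : Good = ⋂ (q : ℚ), ⋂ (_ : 0 < q), ⋃ (N : ℕ), ⋂ (n : ℕ), ⋂ (_ : N ≤ n),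
        {ω : Ω | |bS T ξ n ω / n - ∑ i, (D i).indicator
          (fun _ => ∫ ω', ξ ω' ∂(Ps i)) ω| < (q:ℝ)} := by
      ext ω
      simp only [hGooddef, Set.mem_iInter, Set.mem_iUnion, Set.mem_setOf_eq]
      rw [Metric.tendsto_atTop]
      constructor
      · intro ht q hq
        obtain ⟨N, hN⟩ := ht q (by exact_mod_cast hq)
        refine ⟨N, fun n hn => ?_⟩
        have := hN n hn
        rwa [Real.dist_eq] at this
      · intro ht ε hε
        obtain ⟨q, hq1, hq2⟩ := exists_rat_btwn hε
        obtain ⟨N, hN⟩ := ht q (by exact_mod_cast hq1)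
        refine ⟨N, fun n hn => ?_⟩
        rw [Real.dist_eq]
        exact lt_trans (hN n hn) hq2
    rw [hrepr]
    refine MeasurableSet.iInter fun q => MeasurableSet.iInter fun _ =>
      MeasurableSet.iUnion fun N => MeasurableSet.iInter fun n =>
      MeasurableSet.iInter fun _ => ?_
    exact measurableSet_lt (Measurable.abs (((bS_meas hT hξmeas n).div_const _).sub hhmeas))
      measurable_const
  -- invariance of Good
  have hGoodinv : T ⁻¹' Good = Good := by
    ext ω
    have : ω ∈ T ⁻¹' Good ↔ Tendsto (fun n : ℕ => bS T ξ n (T ω) / n) atTop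
        (𝓝 (∑ i, (D i).indicator (fun _ => ∫ ω', ξ ω' ∂(Ps i)) (T ω))) := Iff.rfl
    rw [this, hhT ω]
    exact tendsto_avg_shift
  -- reduce to upper probability of the bad set
  rw [MeasureTheory.ae_iff]
  have hBadEq : {ω : Ω | ¬ Tendsto (fun n : ℕ =>
      (∑ k ∈ Finset.range n, ξ (T^[k] ω)) / n) atTop
      (𝓝 (∑ i, (D i).indicator (fun _ => ∫ ω', ξ ω' ∂(Ps i)) ω))} = Goodᶜ := rfl
  rw [hBadEq]
  have hVBad : V Goodᶜ = 0 := by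
    by_contra hne
    have hBadinv : T ⁻¹' Goodᶜ = Goodᶜ := by rw [Set.preimage_compl, hGoodinv]
    have hBad1 : V Goodᶜ = 1 := (hVerg _ hGoodmeas.compl hBadinv).resolve_left hne
    -- find an atom inside the bad set
    obtain ⟨E, hEsub, hEm, hEi, hE1, hEatom⟩ :=
      exists_atom V T hVmono hcont hVerg _ hGoodmeas.compl hBadinv hBad1
    -- find measures in Θ giving E nearly full mass
    have hQk : ∀ k : ℕ, ∃ Q ∈ Θ, 1 - (k:ℝ≥0∞)⁻¹ < Q E := by
      intro k
      by_contra hcon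
      push_neg at hcon
      have hle : V E ≤ 1 - (k:ℝ≥0∞)⁻¹ := by
        rw [hV]
        exact iSup₂_le hcon
      rw [hE1] at hle
      have hlt : 1 - (k:ℝ≥0∞)⁻¹ < 1 :=
        ENNReal.sub_lt_self ENNReal.one_ne_top one_ne_zero
          (ENNReal.inv_ne_zero.mpr (ENNReal.natCast_ne_top k))
      exact absurd hle (not_le.mpr hlt)
    choose Qs hQsΘ hQsE using hQk
    haveI hQsprob : ∀ k, IsProbabilityMeasure (Qs k) := fun k => hprob _ (hQsΘ k)
    set U : Ultrafilter ℕ := Ultrafilter.of atTop with hUdef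
    have hUle : (U : Filter ℕ) ≤ atTop := Ultrafilter.of_le _
    obtain ⟨Q, hQprob, hQle, hQtend⟩ := exists_limit_measure V hVle1 hcont Qs hQsprob
      (fun k A hA => hPleV _ (hQsΘ k) A) U
    haveI := hQprob
    have hQE : Q E = 1 := by
      refine le_antisymm prob_le_one ?_
      have hlow : Tendsto (fun k : ℕ => 1 - (k:ℝ≥0∞)⁻¹) atTop (𝓝 1) := by
        have h := ENNReal.Tendsto.sub (tendsto_const_nhds :
            Tendsto (fun _ : ℕ => (1:ℝ≥0∞)) atTop (𝓝 1))
          ENNReal.tendsto_inv_nat_nhds_zero (Or.inl ENNReal.one_ne_top)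
        simpa using h
      exact le_of_tendsto_of_tendsto' (hlow.mono_left hUle) (hQtend E hEm)
        (fun k => (hQsE k).le)
    -- averaged measures
    set ν : ℕ → Measure Ω :=
      fun n => ((n:ℝ≥0∞) + 1)⁻¹ • ∑ j ∈ Finset.range (n+1), Q.map (T^[j]) with hνdef
    have hνapply : ∀ (n : ℕ) (A : Set Ω), MeasurableSet A →
        ν n A = ((n:ℝ≥0∞)+1)⁻¹ * ∑ j ∈ Finset.range (n+1), Q ((T^[j]) ⁻¹' A) := by
      intro n A hA
      rw [hνdef]
      simp only [Measure.smul_apply, smul_eq_mul]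
      rw [Measure.finset_sum_apply]
      congr 1
      exact Finset.sum_congr rfl fun j _ => Measure.map_apply (hT.iterate j) hA
    have hn1ne0 : ∀ n : ℕ, ((n:ℝ≥0∞) + 1) ≠ 0 := fun n => by
      simp
    have hn1netop : ∀ n : ℕ, ((n:ℝ≥0∞) + 1) ≠ ⊤ := fun n => by
      simp [ENNReal.natCast_ne_top]
    have hνprob : ∀ n, IsProbabilityMeasure (ν n) := by
      intro n
      constructor
      rw [hνapply n Set.univ MeasurableSet.univ]
      simp only [Set.preimage_univ, measure_univ, Finset.sum_const, Finset.card_range,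
        nsmul_eq_mul, mul_one]
      push_cast
      rw [ENNReal.inv_mul_cancel (hn1ne0 n) (hn1netop n)]
    have hVit : ∀ (j : ℕ) (A : Set Ω), MeasurableSet A → V ((T^[j])⁻¹' A) = V A := by
      intro j A hA
      induction j with
      | zero => simp
      | succ j ih =>
          rw [Function.iterate_succ, Set.preimage_comp, hVinv _ ((hT.iterate j) hA), ih]
    have hνle : ∀ (n : ℕ) (A : Set Ω), MeasurableSet A → ν n A ≤ V A := by
      intro n A hA
      rw [hνapply n A hA]
      calc ((n:ℝ≥0∞)+1)⁻¹ * ∑ j ∈ Finset.range (n+1), Q ((T^[j]) ⁻¹' A)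
          ≤ ((n:ℝ≥0∞)+1)⁻¹ * ∑ _j ∈ Finset.range (n+1), V A := by
            gcongr with j hj
            exact (hQle _ ((hT.iterate j) hA)).trans_eq (hVit j A hA)
        _ = V A := by
            rw [Finset.sum_const, Finset.card_range, nsmul_eq_mul, ← mul_assoc]
            push_cast
            rw [ENNReal.inv_mul_cancel (hn1ne0 n) (hn1netop n), one_mul]
    obtain ⟨R, hRprob, hRle, hRtend⟩ := exists_limit_measure V hVle1 hcont ν hνprob hνle U
    haveI := hRprob
    have hRΘ : R ∈ Θ := hmax R hRprob hRle
    have hinvtop : Tendsto (fun n : ℕ => ((n:ℝ≥0∞)+1)⁻¹) atTop (𝓝 0) := by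
      have h := ENNReal.tendsto_inv_nat_nhds_zero.comp (tendsto_add_atTop_nat 1)
      refine h.congr fun n => ?_
      simp [Function.comp]
    -- R is T-invariant
    have hRinv : ∀ A : Set Ω, MeasurableSet A → R (T ⁻¹' A) = R A := by
      intro A hA
      have hTA : MeasurableSet (T ⁻¹' A) := hT hA
      have hcomm : ∀ j : ℕ, (T^[j]) ⁻¹' (T ⁻¹' A) = (T^[j+1]) ⁻¹' A := by
        intro j
        rw [Function.iterate_succ', Set.preimage_comp]
      have key : ∀ n : ℕ, ν n (T ⁻¹' A) ≤ ν n A + ((n:ℝ≥0∞)+1)⁻¹ ∧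
          ν n A ≤ ν n (T ⁻¹' A) + ((n:ℝ≥0∞)+1)⁻¹ := by
        intro n
        rw [hνapply n _ hTA, hνapply n A hA]
        set u : ℕ → ℝ≥0∞ := fun j => Q ((T^[j]) ⁻¹' A) with hudef
        have hu1 : ∀ j, u j ≤ 1 := by
          haveI : IsProbabilityMeasure Q := hQprob
          intro j
          exact (measure_mono (Set.subset_univ _)).trans (measure_univ (μ := Q)).le
        have hsum1 : ∑ j ∈ Finset.range (n+1), Q ((T^[j])⁻¹' (T⁻¹' A)) =
            ∑ j ∈ Finset.range (n+1), u (j+1) :=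
          Finset.sum_congr rfl fun j _ => by rw [hcomm j]
        have hA1 : ∑ j ∈ Finset.range (n+1), u (j+1) + u 0 =
            ∑ j ∈ Finset.range (n+2), u j := (Finset.sum_range_succ' u (n+1)).symm
        have hA2 : ∑ j ∈ Finset.range (n+2), u j =
            ∑ j ∈ Finset.range (n+1), u j + u (n+1) := Finset.sum_range_succ u (n+1)
        constructor
        · rw [hsum1]
          have hle : ∑ j ∈ Finset.range (n+1), u (j+1) ≤
              ∑ j ∈ Finset.range (n+1), u j + 1 := by
            calc ∑ j ∈ Finset.range (n+1), u (j+1)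
                ≤ ∑ j ∈ Finset.range (n+1), u (j+1) + u 0 := le_self_add
              _ = ∑ j ∈ Finset.range (n+1), u j + u (n+1) := by rw [hA1, hA2]
              _ ≤ ∑ j ∈ Finset.range (n+1), u j + 1 := add_le_add le_rfl (hu1 _)
          calc ((n:ℝ≥0∞)+1)⁻¹ * ∑ j ∈ Finset.range (n+1), u (j+1)
              ≤ ((n:ℝ≥0∞)+1)⁻¹ * (∑ j ∈ Finset.range (n+1), u j + 1) := by gcongr
            _ = ((n:ℝ≥0∞)+1)⁻¹ * ∑ j ∈ Finset.range (n+1), u j + ((n:ℝ≥0∞)+1)⁻¹ := by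
                rw [mul_add, mul_one]
        · rw [hsum1]
          have hle : ∑ j ∈ Finset.range (n+1), u j ≤
              ∑ j ∈ Finset.range (n+1), u (j+1) + 1 := by
            calc ∑ j ∈ Finset.range (n+1), u j
                ≤ ∑ j ∈ Finset.range (n+1), u j + u (n+1) := le_self_add
              _ = ∑ j ∈ Finset.range (n+1), u (j+1) + u 0 := by rw [← hA2, ← hA1]
              _ ≤ ∑ j ∈ Finset.range (n+1), u (j+1) + 1 := add_le_add le_rfl (hu1 _)
          calc ((n:ℝ≥0∞)+1)⁻¹ * ∑ j ∈ Finset.range (n+1), u j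
              ≤ ((n:ℝ≥0∞)+1)⁻¹ * (∑ j ∈ Finset.range (n+1), u (j+1) + 1) := by gcongr
            _ = ((n:ℝ≥0∞)+1)⁻¹ * ∑ j ∈ Finset.range (n+1), u (j+1) + ((n:ℝ≥0∞)+1)⁻¹ := by
                rw [mul_add, mul_one]
      have ht1 : Tendsto (fun n : ℕ => ν n A + ((n:ℝ≥0∞)+1)⁻¹) ↑U (𝓝 (R A)) := by
        have := (hRtend A hA).add (hinvtop.mono_left hUle)
        rwa [add_zero] at this
      have ht2 : Tendsto (fun n : ℕ => ν n (T ⁻¹' A) + ((n:ℝ≥0∞)+1)⁻¹) ↑U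
          (𝓝 (R (T ⁻¹' A))) := by
        have := (hRtend _ hTA).add (hinvtop.mono_left hUle)
        rwa [add_zero] at this
      refine le_antisymm ?_ ?_
      · exact le_of_tendsto_of_tendsto' (hRtend _ hTA) ht1 fun n => (key n).1
      · exact le_of_tendsto_of_tendsto' (hRtend A hA) ht2 fun n => (key n).2
    -- R gives E full mass
    have hRE : R E = 1 := by
      have hνE : ∀ n, ν n E = 1 := by
        intro n
        rw [hνapply n E hEm]
        have hpre : ∀ j : ℕ, (T^[j])⁻¹' E = E := fun j => iterate_preimage_invariant hEi j
        simp only [hpre, hQE, Finset.sum_const, Finset.card_range, nsmul_eq_mul, mul_one]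
        push_cast
        rw [ENNReal.inv_mul_cancel (hn1ne0 n) (hn1netop n)]
      have hconst : Tendsto (fun n : ℕ => ν n E) ↑U (𝓝 1) := by
        refine tendsto_const_nhds.congr fun n => (hνE n).symm
      exact tendsto_nhds_unique (hRtend E hEm) hconst
    have hREc : R Eᶜ = 0 := by
      have h := measure_compl hEm (measure_ne_top R E)
      rw [hRE, measure_univ] at h
      simpa using h
    -- R is T-ergodic
    have hRerg : ∀ A : Set Ω, MeasurableSet A → T ⁻¹' A = A → R A = 0 ∨ R A = 1 := by
      intro A hA hAi
      rcases hEatom A hA hAi with h0 | h0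
      · left
        have hRAE : R (A ∩ E) = 0 :=
          le_antisymm ((hRle _ (hA.inter hEm)).trans_eq h0) zero_le
        have hsub : A ⊆ (A ∩ E) ∪ Eᶜ := by
          intro ω hω
          by_cases hE : ω ∈ E
          · exact Or.inl ⟨hω, hE⟩
          · exact Or.inr hE
        have := (measure_mono (μ := R) hsub).trans (measure_union_le (μ := R) _ _)
        rw [hRAE, hREc, add_zero] at this
        exact le_antisymm this zero_le
      · right
        have hRdiff : R (E \ A) = 0 :=
          le_antisymm ((hRle _ (hEm.diff hA)).trans_eq h0) zero_le
        have hsub : Aᶜ ⊆ (E \ A) ∪ Eᶜ := by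
          intro ω hω
          by_cases hE : ω ∈ E
          · exact Or.inl ⟨hE, hω⟩
          · exact Or.inr hE
        have hc : R Aᶜ = 0 := by
          have := (measure_mono (μ := R) hsub).trans (measure_union_le (μ := R) _ _)
          rw [hRdiff, hREc, add_zero] at this
          exact le_antisymm this zero_le
        have h := measure_compl hA (measure_ne_top R A)
        rw [hc, measure_univ] at h
        have : (1:ℝ≥0∞) ≤ R A := by
          rwa [eq_comm, tsub_eq_zero_iff_le] at h
        exact le_antisymm prob_le_one this
    -- R is an ergodic member of Θ, hence one of the Ps
    have hRmem : R ∈ Set.range Ps := by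
      rw [hPsRange]
      exact ⟨hRΘ, hRinv, hRerg⟩
    obtain ⟨j, hj⟩ := hRmem
    haveI hPsjprob : IsProbabilityMeasure (Ps j) := by rw [hj]; exact hRprob
    have hPsmap : (Ps j).map T = Ps j := by
      refine Measure.ext fun A hA => ?_
      rw [Measure.map_apply hT hA, hj, hRinv A hA]
    have hPserg : ∀ A : Set Ω, MeasurableSet A → T ⁻¹' A = A →
        Ps j A = 0 ∨ Ps j A = 1 := by
      intro A hA hAi
      rw [hj]
      exact hRerg A hA hAi
    have hBirk := birkhoff_ergodic hT hPsmap hPserg hξmeas hξbdd'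
    have hDj_ae : ∀ᵐ ω ∂(Ps j), ω ∈ D j := by
      have hcompl : Ps j (D j)ᶜ = 0 := by
        have h := measure_compl (hDmeas j) (measure_ne_top (Ps j) (D j))
        rw [hDfull j, measure_univ] at h
        simpa using h
      rw [MeasureTheory.ae_iff]
      exact hcompl
    have hgood_ae : ∀ᵐ ω ∂(Ps j), ω ∈ Good := by
      filter_upwards [hBirk, hDj_ae] with ω hω1 hω2
      have hhω : (∑ i, (D i).indicator (fun _ => ∫ ω', ξ ω' ∂(Ps i)) ω) =
          ∫ ω', ξ ω' ∂(Ps j) := by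
        rw [Finset.sum_eq_single j]
        · exact Set.indicator_of_mem hω2 _
        · intro i _ hij
          exact Set.indicator_of_notMem
            (fun hωi => Set.disjoint_left.mp (hDdisj hij) hωi hω2) _
        · intro hj'
          exact absurd (Finset.mem_univ j) hj'
      show ω ∈ Good
      rw [hGooddef]
      simp only [Set.mem_setOf_eq]
      rw [hhω]
      exact hω1
    have hPsGoodc : Ps j Goodᶜ = 0 := by
      rw [MeasureTheory.ae_iff] at hgood_ae
      exact hgood_ae
    have hPsE : Ps j E = 1 := by rw [hj]; exact hRE
    have hcontr : (1:ℝ≥0∞) ≤ 0 := by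
      calc (1:ℝ≥0∞) = Ps j E := hPsE.symm
        _ ≤ Ps j Goodᶜ := measure_mono hEsub
        _ = 0 := hPsGoodc
    simp at hcontr
  refine le_antisymm ?_ zero_le
  exact (hPleV P hP Goodᶜ).trans_eq hVBad
end

section
/- Assume 𝕍 is continuous, T-invariant, and T-ergodic. Then for every P ∈ Θ there exist T-ergodic probability measures P_1, …, P_n ∈ Θ* and weights λ_k ≥ 0 with Σ_{k=1}^n λ_k = 1 such that P(A) = Σ_{k=1}^n λ_k P_k(A) for every A in the invariant σ-algebra 𝓘. -/
open MeasureTheory Filter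
open scoped ENNReal

noncomputable def ulim (f : ℕ → ℝ≥0∞) : ℝ≥0∞ := ((Filter.hyperfilter ℕ).map f).lim

theorem ulim_tendsto (f : ℕ → ℝ≥0∞) : Tendsto f (Filter.hyperfilter ℕ) (nhds (ulim f)) :=
  Ultrafilter.le_nhds_lim _

theorem ulim_unique {f : ℕ → ℝ≥0∞} {a : ℝ≥0∞}
    (h : Tendsto f (Filter.hyperfilter ℕ) (nhds a)) : ulim f = a :=
  tendsto_nhds_unique (ulim_tendsto f) h

theorem hyp_of_atTop {f : ℕ → ℝ≥0∞} {a} (h : Tendsto f atTop (nhds a)) :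
    Tendsto f (Filter.hyperfilter ℕ) (nhds a) := h.mono_left Nat.hyperfilter_le_atTop

theorem ulim_le_ulim {f g : ℕ → ℝ≥0∞} (h : ∀ n, f n ≤ g n) : ulim f ≤ ulim g :=
  le_of_tendsto_of_tendsto' (ulim_tendsto f) (ulim_tendsto g) h

theorem ulim_le {f : ℕ → ℝ≥0∞} {a : ℝ≥0∞} (h : ∀ n, f n ≤ a) : ulim f ≤ a :=
  le_of_tendsto' (ulim_tendsto f) h

theorem ulim_add (f g : ℕ → ℝ≥0∞) : ulim (fun n => f n + g n) = ulim f + ulim g :=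
  ulim_unique ((ulim_tendsto f).add (ulim_tendsto g))

theorem tendsto_inv_succ : Tendsto (fun n : ℕ => ((n : ℝ≥0∞) + 1)⁻¹) atTop (nhds 0) := by
  have h1 : Tendsto (fun n : ℕ => ((n : ℝ≥0∞) + 1)) atTop (nhds ⊤) := by
    have := ENNReal.tendsto_nat_nhds_top
    simpa using this.add tendsto_const_nhds
  have := ENNReal.tendsto_inv_iff.2 h1
  simpa using this

/-- Existence of an ergodic invariant measure in `Θ` concentrated on an atom `B`. -/
theorem ergodic_on_atom {Ω : Type*} [MeasurableSpace Ω] (T : Ω → Ω) (hT : Measurable T)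
    (Θ : Set (Measure Ω))
    (hprob : ∀ P ∈ Θ, IsProbabilityMeasure P)
    (V : Set Ω → ℝ≥0∞)
    (hV : ∀ A : Set Ω, V A = ⨆ P ∈ Θ, P A)
    (hmax : ∀ P : Measure Ω, IsProbabilityMeasure P →
      (∀ A, MeasurableSet A → P A ≤ V A) → P ∈ Θ)
    (hcont : ∀ A : ℕ → Set Ω, (∀ n, MeasurableSet (A n)) → Antitone A →
      (⋂ n, A n) = ∅ → Tendsto (fun n => V (A n)) atTop (nhds 0))
    (hVinv : ∀ A : Set Ω, MeasurableSet A → V (T ⁻¹' A) = V A)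
    (B : Set Ω) (hBm : MeasurableSet B) (hBinv : T ⁻¹' B = B) (hB1 : V B = 1)
    (hatom : ∀ A : Set Ω, MeasurableSet A → T ⁻¹' A = A →
      V (B ∩ A) = 0 ∨ V (B ∩ Aᶜ) = 0) :
    ∃ μ : Measure Ω, μ ∈ Θ ∧ (∀ A : Set Ω, MeasurableSet A → μ (T ⁻¹' A) = μ A) ∧
      (∀ A : Set Ω, MeasurableSet A → T ⁻¹' A = A →
        (V (B ∩ A) = 0 → μ A = 0) ∧ (V (B ∩ A) = 1 → μ A = 1)) := by
  -- basic facts about V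
  have hPle : ∀ P ∈ Θ, ∀ A : Set Ω, P A ≤ V A := by
    intro P hP A
    rw [hV]
    exact le_iSup₂ (f := fun (P : Measure Ω) (_ : P ∈ Θ) => P A) P hP
  have hViter : ∀ (i : ℕ) (A : Set Ω), MeasurableSet A → V (T^[i] ⁻¹' A) = V A := by
    intro i
    induction i with
    | zero => intro A _; simp
    | succ i ih =>
      intro A hA
      rw [Function.iterate_succ', Set.preimage_comp]
      rw [ih _ (hT hA), hVinv A hA]
  -- choose measures Qn ∈ Θ with Qn B close to 1
  have hQex : ∀ n : ℕ, ∃ P ∈ Θ, 1 - ((n : ℝ≥0∞) + 1)⁻¹ < P B := by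
    intro n
    have hlt : 1 - ((n : ℝ≥0∞) + 1)⁻¹ < V B := by
      rw [hB1]
      exact ENNReal.sub_lt_self ENNReal.one_ne_top one_ne_zero (ENNReal.inv_ne_zero.2 (by simp [ENNReal.add_ne_top]))
    rw [hV] at hlt
    simpa [lt_iSup_iff] using hlt
  choose Q hQΘ hQB using hQex
  have hQprob : ∀ n, IsProbabilityMeasure (Q n) := fun n => hprob _ (hQΘ n)
  -- the averaged measures
  set R : ℕ → Set Ω → ℝ≥0∞ := fun n S =>
    ((n : ℝ≥0∞) + 1)⁻¹ * ∑ i ∈ Finset.range (n + 1), Q n (T^[i] ⁻¹' S) with hR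
  have hnz : ∀ n : ℕ, ((n : ℝ≥0∞) + 1) ≠ 0 := fun n => (lt_of_lt_of_le one_pos le_add_self).ne'
  have hnt : ∀ n : ℕ, ((n : ℝ≥0∞) + 1) ≠ ⊤ := fun n => by
    simp [ENNReal.add_ne_top]
  have hRconst : ∀ (n : ℕ) (c : ℝ≥0∞), ((n : ℝ≥0∞) + 1)⁻¹ *
      (∑ _i ∈ Finset.range (n + 1), c) = c := by
    intro n c
    rw [Finset.sum_const, Finset.card_range]
    rw [nsmul_eq_mul, ← mul_assoc]
    push_cast
    rw [ENNReal.inv_mul_cancel (hnz n) (hnt n), one_mul]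
  -- R n is dominated by V on measurable sets
  have hRle : ∀ (n : ℕ) (S : Set Ω), MeasurableSet S → R n S ≤ V S := by
    intro n S hS
    calc R n S ≤ ((n : ℝ≥0∞) + 1)⁻¹ * ∑ _i ∈ Finset.range (n + 1), V S := by
          apply mul_le_mul_right
          apply Finset.sum_le_sum
          intro i _
          rw [← hViter i S hS]
          exact hPle _ (hQΘ n) _
      _ = V S := hRconst n _
  have hRuniv : ∀ n, R n Set.univ = 1 := by
    intro n
    have : ∀ i, Q n (T^[i] ⁻¹' (Set.univ : Set Ω)) = 1 := by
      intro i; simp [measure_univ]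
    simp only [hR, this]
    exact hRconst n 1
  have hRB : ∀ n, R n B = Q n B := by
    intro n
    have hiter : ∀ i : ℕ, T^[i] ⁻¹' B = B := by
      intro i
      induction i with
      | zero => simp
      | succ i ih => rw [Function.iterate_succ', Set.preimage_comp, hBinv, ih]
    simp only [hR, hiter]
    exact hRconst n _
  -- the limit set function
  set m : Set Ω → ℝ≥0∞ := fun S => ulim (fun n => R n S) with hm
  have hmle : ∀ S : Set Ω, MeasurableSet S → m S ≤ V S := fun S hS =>
    ulim_le (fun n => hRle n S hS)
  have hmuniv : m Set.univ = 1 := by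
    apply ulim_unique
    simp only [hRuniv]
    exact tendsto_const_nhds
  have hmmono : ∀ S S' : Set Ω, S ⊆ S' → m S ≤ m S' := by
    intro S S' hss
    apply ulim_le_ulim
    intro n
    exact mul_le_mul_right (Finset.sum_le_sum fun i _ =>
      measure_mono (Set.preimage_mono hss)) _
  have hmadd : ∀ S S' : Set Ω, MeasurableSet S → MeasurableSet S' → Disjoint S S' →
      m (S ∪ S') = m S + m S' := by
    intro S S' hS hS' hdisj
    have h1 : ∀ n, R n (S ∪ S') = R n S + R n S' := by
      intro n
      have h2 : ∀ i : ℕ, Q n (T^[i] ⁻¹' (S ∪ S')) = Q n (T^[i] ⁻¹' S) + Q n (T^[i] ⁻¹' S') := by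
        intro i
        rw [Set.preimage_union]
        exact measure_union (hdisj.preimage _) ((hT.iterate i) hS')
      simp only [hR, h2, Finset.sum_add_distrib, mul_add]
    have h3 : m (S ∪ S') = ulim (fun n => R n S + R n S') := by
      simp only [hm]
      congr 1
      funext n
      exact h1 n
    rw [h3, ulim_add]
  have hmempty : m ∅ = 0 := by
    apply ulim_unique
    have : ∀ n, R n ∅ = 0 := by intro n; simp [hR]
    simp only [this]
    exact tendsto_const_nhds
  -- m B = 1
  have hmB : m B = 1 := by
    refine le_antisymm (by simpa [hB1] using hmle B hBm) ?_
    have h1 : Tendsto (fun n : ℕ => 1 - ((n : ℝ≥0∞) + 1)⁻¹) atTop (nhds 1) := by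
      have := ENNReal.Tendsto.sub (tendsto_const_nhds (x := (1 : ℝ≥0∞)))
        tendsto_inv_succ (Or.inl ENNReal.one_ne_top)
      simpa using this
    refine le_of_tendsto_of_tendsto' (hyp_of_atTop h1) (ulim_tendsto _) ?_
    intro n
    rw [hRB n]
    exact (hQB n).le
  -- invariance of m on measurable sets
  have hminv : ∀ S : Set Ω, MeasurableSet S → m (T ⁻¹' S) = m S := by
    intro S hS
    have key : ∀ n, R n (T ⁻¹' S) ≤ R n S + ((n : ℝ≥0∞) + 1)⁻¹ ∧
        R n S ≤ R n (T ⁻¹' S) + ((n : ℝ≥0∞) + 1)⁻¹ := by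
      intro n
      set a : ℕ → ℝ≥0∞ := fun i => Q n (T^[i] ⁻¹' S) with ha
      have hshift : ∀ i : ℕ, Q n (T^[i] ⁻¹' (T ⁻¹' S)) = a (i + 1) := by
        intro i
        simp only [ha]
        congr 1
        rw [Function.iterate_succ', Set.preimage_comp]
      have hsum : R n (T ⁻¹' S) = ((n : ℝ≥0∞) + 1)⁻¹ *
          ∑ i ∈ Finset.range (n + 1), a (i + 1) := by
        simp only [hR, hshift]
      have hEq : ∑ i ∈ Finset.range (n + 1), a (i + 1) + a 0 =
          ∑ i ∈ Finset.range (n + 1), a i + a (n + 1) := by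
        rw [← Finset.sum_range_succ' a (n + 1), Finset.sum_range_succ a (n + 1)]
      have hb : ∀ i, a i ≤ 1 := fun i => prob_le_one
      constructor
      · rw [hsum, hR]
        have h1 : ∑ i ∈ Finset.range (n + 1), a (i + 1) ≤
            ∑ i ∈ Finset.range (n + 1), a i + 1 := by
          calc ∑ i ∈ Finset.range (n + 1), a (i + 1)
              ≤ ∑ i ∈ Finset.range (n + 1), a (i + 1) + a 0 := le_self_add
            _ = ∑ i ∈ Finset.range (n + 1), a i + a (n + 1) := hEq
            _ ≤ ∑ i ∈ Finset.range (n + 1), a i + 1 := add_le_add_right (hb _) _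
        calc ((n : ℝ≥0∞) + 1)⁻¹ * ∑ i ∈ Finset.range (n + 1), a (i + 1)
            ≤ ((n : ℝ≥0∞) + 1)⁻¹ * (∑ i ∈ Finset.range (n + 1), a i + 1) :=
              mul_le_mul_right h1 _
          _ = ((n : ℝ≥0∞) + 1)⁻¹ * ∑ i ∈ Finset.range (n + 1), a i
              + ((n : ℝ≥0∞) + 1)⁻¹ * 1 := by rw [mul_add]
          _ ≤ ((n : ℝ≥0∞) + 1)⁻¹ * ∑ i ∈ Finset.range (n + 1), a i
              + ((n : ℝ≥0∞) + 1)⁻¹ := by rw [mul_one]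
      · rw [hsum, hR]
        have h1 : ∑ i ∈ Finset.range (n + 1), a i ≤
            ∑ i ∈ Finset.range (n + 1), a (i + 1) + 1 := by
          calc ∑ i ∈ Finset.range (n + 1), a i
              ≤ ∑ i ∈ Finset.range (n + 1), a i + a (n + 1) := le_self_add
            _ = ∑ i ∈ Finset.range (n + 1), a (i + 1) + a 0 := hEq.symm
            _ ≤ ∑ i ∈ Finset.range (n + 1), a (i + 1) + 1 := add_le_add_right (hb _) _
        calc ((n : ℝ≥0∞) + 1)⁻¹ * ∑ i ∈ Finset.range (n + 1), a i
            ≤ ((n : ℝ≥0∞) + 1)⁻¹ * (∑ i ∈ Finset.range (n + 1), a (i + 1) + 1) :=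
              mul_le_mul_right h1 _
          _ = ((n : ℝ≥0∞) + 1)⁻¹ * ∑ i ∈ Finset.range (n + 1), a (i + 1)
              + ((n : ℝ≥0∞) + 1)⁻¹ * 1 := by rw [mul_add]
          _ ≤ ((n : ℝ≥0∞) + 1)⁻¹ * ∑ i ∈ Finset.range (n + 1), a (i + 1)
              + ((n : ℝ≥0∞) + 1)⁻¹ := by rw [mul_one]
    have haux : ∀ f g : ℕ → ℝ≥0∞, (∀ n, f n ≤ g n + ((n : ℝ≥0∞) + 1)⁻¹) →
        ulim f ≤ ulim g := by
      intro f g hfg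
      have h2 : Tendsto (fun n => g n + ((n : ℝ≥0∞) + 1)⁻¹) (Filter.hyperfilter ℕ)
          (nhds (ulim g + 0)) :=
        (ulim_tendsto g).add (hyp_of_atTop tendsto_inv_succ)
      have := le_of_tendsto_of_tendsto' (ulim_tendsto f) h2 hfg
      simpa using this
    exact le_antisymm (haux _ _ fun n => (key n).1) (haux _ _ fun n => (key n).2)
  -- countable additivity
  have hmctble : ∀ f : ℕ → Set Ω, (∀ i, MeasurableSet (f i)) →
      Pairwise (Function.onFun Disjoint f) → m (⋃ i, f i) = ∑' i, m (f i) := by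
    intro f hfm hfd
    have hfin : ∀ N : ℕ, m (⋃ i ∈ Finset.range N, f i) = ∑ i ∈ Finset.range N, m (f i) := by
      intro N
      induction N with
      | zero => simpa using hmempty
      | succ N ih =>
        rw [Finset.sum_range_succ, ← ih]
        have hU : (⋃ i ∈ Finset.range (N + 1), f i) =
            (⋃ i ∈ Finset.range N, f i) ∪ f N := by
          simp [Finset.range_add_one, Set.iUnion_union_distrib, Set.union_comm]
        rw [hU]
        apply hmadd _ _ ((Finset.range N).measurableSet_biUnion fun i _ => hfm i) (hfm N)
        apply Set.disjoint_iUnion₂_left.2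
        intro i hi
        exact hfd (Finset.mem_range.1 hi).ne
    set tail : ℕ → Set Ω := fun N => ⋃ i, f (i + N) with htail
    have htailm : ∀ N, MeasurableSet (tail N) := fun N =>
      MeasurableSet.iUnion fun i => hfm _
    have htailanti : Antitone tail := by
      apply antitone_nat_of_succ_le
      intro N x hx
      obtain ⟨i, hi⟩ := Set.mem_iUnion.1 hx
      refine Set.mem_iUnion.2 ⟨i + 1, ?_⟩
      have he : i + 1 + N = i + (N + 1) := by omega
      rw [he]
      exact hi
    have htailempty : (⋂ N, tail N) = ∅ := by
      ext x
      simp only [Set.mem_iInter, Set.mem_empty_iff_false, iff_false]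
      intro hx
      obtain ⟨i, hi⟩ := Set.mem_iUnion.1 (hx 0)
      obtain ⟨j, hj⟩ := Set.mem_iUnion.1 (hx (i + 1))
      have : i + 0 = j + (i + 1) := by
        by_contra hne
        exact (hfd hne).le_bot ⟨hi, hj⟩ |>.elim
      omega
    have htail0 : Tendsto (fun N => V (tail N)) atTop (nhds 0) :=
      hcont tail htailm htailanti htailempty
    have hsplit : ∀ N, m (⋃ i, f i) = ∑ i ∈ Finset.range N, m (f i) + m (tail N) := by
      intro N
      have hU : (⋃ i, f i) = (⋃ i ∈ Finset.range N, f i) ∪ tail N := by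
        ext x
        simp only [Set.mem_iUnion, Set.mem_union, Finset.mem_range, htail]
        constructor
        · rintro ⟨i, hi⟩
          rcases lt_or_ge i N with h | h
          · exact Or.inl ⟨i, h, hi⟩
          · exact Or.inr ⟨i - N, by rwa [Nat.sub_add_cancel h]⟩
        · rintro (⟨i, _, hi⟩ | ⟨i, hi⟩)
          · exact ⟨i, hi⟩
          · exact ⟨i + N, hi⟩
      have hdis : Disjoint (⋃ i ∈ Finset.range N, f i) (tail N) := by
        apply Set.disjoint_iUnion₂_left.2
        intro i hi
        apply Set.disjoint_iUnion_right.2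
        intro j
        have hiN : i < N := Finset.mem_range.1 hi
        exact hfd (by omega : i ≠ j + N)
      have h4 := hmadd _ _ ((Finset.range N).measurableSet_biUnion fun i _ => hfm i)
        (htailm N) hdis
      rw [hU, h4, hfin N]
    apply le_antisymm
    · have hub : ∀ N, m (⋃ i, f i) ≤ ∑ i ∈ Finset.range N, m (f i) + V (tail N) := by
        intro N
        rw [hsplit N]
        exact add_le_add_right (hmle _ (htailm N)) _
      have h5 := ge_of_tendsto' ((ENNReal.tendsto_nat_tsum fun i => m (f i)).add htail0) hub
      simpa using h5
    · refine le_of_tendsto' (ENNReal.tendsto_nat_tsum fun i => m (f i)) ?_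
      intro N
      rw [hsplit N]
      exact le_self_add
  -- build the measure
  set μ : Measure Ω := Measure.ofMeasurable (fun S _ => m S) hmempty
    (fun f hfm hfd => hmctble f hfm hfd) with hμ
  have hμapp : ∀ S : Set Ω, MeasurableSet S → μ S = m S := fun S hS =>
    Measure.ofMeasurable_apply S hS
  have hμprob : IsProbabilityMeasure μ := ⟨by rw [hμapp _ MeasurableSet.univ, hmuniv]⟩
  have hμΘ : μ ∈ Θ := hmax μ hμprob (fun A hA => (hμapp A hA).le.trans (hmle A hA))
  have hμinv : ∀ A : Set Ω, MeasurableSet A → μ (T ⁻¹' A) = μ A := by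
    intro A hA
    rw [hμapp _ (hT hA), hμapp _ hA, hminv A hA]
  have hμB : μ B = 1 := by rw [hμapp _ hBm, hmB]
  have hμBc : μ Bᶜ = 0 := by
    have h1 := measure_compl hBm (measure_ne_top μ B)
    rw [measure_univ, hμB] at h1
    simpa using h1
  have key0 : ∀ A : Set Ω, MeasurableSet A → V (B ∩ A) = 0 → μ A = 0 := by
    intro A hA h0
    have hsplitA : μ (A ∩ B) + μ (A \ B) = μ A := measure_inter_add_diff A hBm
    have h2 : μ (A ∩ B) = 0 := by
      have := (hμapp _ (hA.inter hBm)).le.trans (hmle _ (hA.inter hBm))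
      rw [Set.inter_comm] at h0
      exact le_antisymm (this.trans_eq h0) zero_le
    have h3 : μ (A \ B) = 0 := by
      have : A \ B ⊆ Bᶜ := fun x hx => hx.2
      exact le_antisymm ((measure_mono this).trans_eq hμBc) zero_le
    rw [← hsplitA, h2, h3, add_zero]
  refine ⟨μ, hμΘ, hμinv, ?_⟩
  intro A hA hAinv
  refine ⟨key0 A hA, ?_⟩
  intro h1
  rcases hatom A hA hAinv with h | h
  · rw [h1] at h
    exact absurd h one_ne_zero
  · have hAc : μ Aᶜ = 0 := key0 Aᶜ hA.compl h
    have h2 := measure_compl hA (measure_ne_top μ A)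
    rw [measure_univ, hAc] at h2
    have h3 : μ A ≤ 1 := prob_le_one
    have := tsub_eq_zero_iff_le.1 h2.symm
    exact le_antisymm h3 this


def VAtom {Ω : Type*} [MeasurableSpace Ω] (T : Ω → Ω) (V : Set Ω → ℝ≥0∞) (B : Set Ω) : Prop :=
  MeasurableSet B ∧ T ⁻¹' B = B ∧ V B = 1 ∧
    ∀ A : Set Ω, MeasurableSet A → T ⁻¹' A = A → V (B ∩ A) = 0 ∨ V (B ∩ Aᶜ) = 0

def VDecomp {Ω : Type*} [MeasurableSpace Ω] (T : Ω → Ω) (V : Set Ω → ℝ≥0∞) (C : Set Ω) : Prop :=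
  ∃ s : Finset (Set Ω), (∀ B ∈ s, VAtom T V B ∧ B ⊆ C) ∧
    (↑s : Set (Set Ω)).PairwiseDisjoint id ∧ V (C \ ⋃₀ ↑s) = 0

theorem vsplit {Ω : Type*} [MeasurableSpace Ω] (T : Ω → Ω) (V : Set Ω → ℝ≥0∞)
    (hVmono : ∀ A A' : Set Ω, A ⊆ A' → V A ≤ V A')
    (hVempty : V ∅ = 0)
    (hVsub : ∀ A A' : Set Ω, V (A ∪ A') ≤ V A + V A')
    (hVerg : ∀ A : Set Ω, MeasurableSet A → T ⁻¹' A = A → V A = 0 ∨ V A = 1)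
    (C : Set Ω) (hCm : MeasurableSet C) (hCinv : T ⁻¹' C = C) (hC1 : V C = 1)
    (hCnd : ¬ VDecomp T V C) :
    ∃ C' : Set Ω, MeasurableSet C' ∧ T ⁻¹' C' = C' ∧ V C' = 1 ∧ ¬ VDecomp T V C' ∧
      C' ⊆ C ∧ V (C \ C') = 1 := by
  classical
  have hnotatom : ¬ VAtom T V C := by
    intro hat
    apply hCnd
    refine ⟨{C}, ?_, ?_, ?_⟩
    · intro B hB
      rw [Finset.mem_singleton] at hB
      subst hB
      exact ⟨hat, subset_rfl⟩
    · simp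
    · simp [hVempty]
  have hex : ∃ A : Set Ω, MeasurableSet A ∧ T ⁻¹' A = A ∧
      V (C ∩ A) ≠ 0 ∧ V (C ∩ Aᶜ) ≠ 0 := by
    by_contra hno
    push_neg at hno
    refine hnotatom ⟨hCm, hCinv, hC1, ?_⟩
    intro A hA hAi
    by_cases h : V (C ∩ A) = 0
    · exact Or.inl h
    · exact Or.inr (hno A hA hAi h)
  obtain ⟨A, hAm, hAinv, hA0, hAc0⟩ := hex
  have hCAinv : T ⁻¹' (C ∩ A) = C ∩ A := by
    rw [Set.preimage_inter, hCinv, hAinv]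
  have hCAcinv : T ⁻¹' (C ∩ Aᶜ) = C ∩ Aᶜ := by
    rw [Set.preimage_inter, hCinv, Set.preimage_compl, hAinv]
  have h1 : V (C ∩ A) = 1 := (hVerg _ (hCm.inter hAm) hCAinv).resolve_left hA0
  have h2 : V (C ∩ Aᶜ) = 1 := (hVerg _ (hCm.inter hAm.compl) hCAcinv).resolve_left hAc0
  have hdAA : Disjoint (C ∩ A) (C ∩ Aᶜ) :=
    Disjoint.mono Set.inter_subset_right Set.inter_subset_right disjoint_compl_right
  have hkey : ¬ VDecomp T V (C ∩ A) ∨ ¬ VDecomp T V (C ∩ Aᶜ) := by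
    by_contra hno
    push_neg at hno
    obtain ⟨⟨s₀, hs₀, hd₀, hr₀⟩, ⟨s₁, hs₁, hd₁, hr₁⟩⟩ := hno
    apply hCnd
    refine ⟨s₀ ∪ s₁, ?_, ?_, ?_⟩
    · intro B hB
      rcases Finset.mem_union.1 hB with h | h
      · exact ⟨(hs₀ B h).1, (hs₀ B h).2.trans Set.inter_subset_left⟩
      · exact ⟨(hs₁ B h).1, (hs₁ B h).2.trans Set.inter_subset_left⟩
    · rw [Finset.coe_union]
      apply Set.pairwiseDisjoint_union.2
      refine ⟨hd₀, hd₁, ?_⟩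
      intro B₀ hB₀ B₁ hB₁ _
      exact Disjoint.mono (hs₀ B₀ hB₀).2 (hs₁ B₁ hB₁).2 hdAA
    · have hsub : (C \ ⋃₀ ↑(s₀ ∪ s₁)) ⊆ (((C ∩ A) \ ⋃₀ ↑s₀) ∪ ((C ∩ Aᶜ) \ ⋃₀ ↑s₁)) := by
        intro x hx
        have hnot : ∀ B ∈ s₀ ∪ s₁, x ∉ B := by
          intro B hB hxB
          exact hx.2 ⟨B, by simpa using hB, hxB⟩
        by_cases hxA : x ∈ A
        · exact Or.inl ⟨⟨hx.1, hxA⟩, fun ⟨B, hB, hxB⟩ =>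
            hnot B (Finset.mem_union_left _ (by simpa using hB)) hxB⟩
        · exact Or.inr ⟨⟨hx.1, hxA⟩, fun ⟨B, hB, hxB⟩ =>
            hnot B (Finset.mem_union_right _ (by simpa using hB)) hxB⟩
      refine le_antisymm ?_ zero_le
      calc V (C \ ⋃₀ ↑(s₀ ∪ s₁)) ≤ V (((C ∩ A) \ ⋃₀ ↑s₀) ∪ ((C ∩ Aᶜ) \ ⋃₀ ↑s₁)) :=
            hVmono _ _ hsub
        _ ≤ V ((C ∩ A) \ ⋃₀ ↑s₀) + V ((C ∩ Aᶜ) \ ⋃₀ ↑s₁) := hVsub _ _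
        _ = 0 := by rw [hr₀, hr₁, add_zero]
  rcases hkey with hk | hk
  · refine ⟨C ∩ A, hCm.inter hAm, hCAinv, h1, hk, Set.inter_subset_left, ?_⟩
    rw [Set.diff_self_inter, Set.diff_eq]
    exact h2
  · refine ⟨C ∩ Aᶜ, hCm.inter hAm.compl, hCAcinv, h2, hk, Set.inter_subset_left, ?_⟩
    rw [Set.diff_self_inter, Set.diff_eq, compl_compl]
    exact h1

theorem vdecomp_univ {Ω : Type*} [MeasurableSpace Ω] (T : Ω → Ω) (V : Set Ω → ℝ≥0∞)
    (hVmono : ∀ A A' : Set Ω, A ⊆ A' → V A ≤ V A')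
    (hVempty : V ∅ = 0)
    (hVsub : ∀ A A' : Set Ω, V (A ∪ A') ≤ V A + V A')
    (hVuniv : V Set.univ = 1)
    (hVerg : ∀ A : Set Ω, MeasurableSet A → T ⁻¹' A = A → V A = 0 ∨ V A = 1)
    (hcont : ∀ A : ℕ → Set Ω, (∀ n, MeasurableSet (A n)) → Antitone A →
      (⋂ n, A n) = ∅ → Tendsto (fun n => V (A n)) atTop (nhds 0)) :
    VDecomp T V Set.univ := by
  classical
  by_contra h
  let S := {C : Set Ω // MeasurableSet C ∧ T ⁻¹' C = C ∧ V C = 1 ∧ ¬ VDecomp T V C}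
  have hstep : ∀ x : S, ∃ y : S, y.1 ⊆ x.1 ∧ V (x.1 \ y.1) = 1 := by
    intro x
    obtain ⟨C', h1, h2, h3, h4, h5, h6⟩ := vsplit T V hVmono hVempty hVsub hVerg x.1
      x.2.1 x.2.2.1 x.2.2.2.1 x.2.2.2.2
    exact ⟨⟨C', h1, h2, h3, h4⟩, h5, h6⟩
  choose F hFsub hFdiff using hstep
  have hx0 : MeasurableSet (Set.univ : Set Ω) ∧ T ⁻¹' (Set.univ : Set Ω) = Set.univ ∧
      V Set.univ = 1 ∧ ¬ VDecomp T V Set.univ :=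
    ⟨MeasurableSet.univ, Set.preimage_univ, hVuniv, h⟩
  let C : ℕ → S := fun n => F^[n] ⟨Set.univ, hx0⟩
  have hCsucc : ∀ n, C (n + 1) = F (C n) := fun n => Function.iterate_succ_apply' F n _
  have hstep1 : ∀ n, (C (n + 1)).1 ⊆ (C n).1 := fun n => by
    rw [hCsucc n]; exact hFsub (C n)
  have hCanti : ∀ i j, i ≤ j → (C j).1 ⊆ (C i).1 := by
    intro i j hij
    induction hij with
    | refl => exact subset_rfl
    | step h ih => exact (hstep1 _).trans ih
  let D : ℕ → Set Ω := fun n => (C n).1 \ (C (n + 1)).1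
  have hDm : ∀ n, MeasurableSet (D n) := fun n => ((C n).2.1).diff ((C (n + 1)).2.1)
  have hD1 : ∀ n, V (D n) = 1 := by
    intro n
    have := hFdiff (C n)
    rw [← hCsucc n] at this
    exact this
  have hDdisj : ∀ i j, i < j → Disjoint (D i) (D j) := by
    intro i j hij
    have hsub : D j ⊆ (C (i + 1)).1 := Set.diff_subset.trans (hCanti (i + 1) j hij)
    apply Set.disjoint_left.2
    intro x hxDi hxDj
    exact hxDi.2 (hsub hxDj)
  let E : ℕ → Set Ω := fun N => ⋃ i, D (i + N)
  have hEm : ∀ N, MeasurableSet (E N) := fun N => MeasurableSet.iUnion fun i => hDm _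
  have hEanti : Antitone E := by
    apply antitone_nat_of_succ_le
    intro N x hx
    obtain ⟨i, hi⟩ := Set.mem_iUnion.1 hx
    refine Set.mem_iUnion.2 ⟨i + 1, ?_⟩
    have he : i + 1 + N = i + (N + 1) := by omega
    rw [he]
    exact hi
  have hEempty : (⋂ N, E N) = ∅ := by
    ext x
    simp only [Set.mem_iInter, Set.mem_empty_iff_false, iff_false]
    intro hx
    obtain ⟨i, hi⟩ := Set.mem_iUnion.1 (hx 0)
    obtain ⟨j, hj⟩ := Set.mem_iUnion.1 (hx (i + 1))
    have hlt : i + 0 < j + (i + 1) := by omega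
    exact (hDdisj _ _ hlt).le_bot ⟨hi, hj⟩
  have htend := hcont E hEm hEanti hEempty
  have hge : ∀ N, (1 : ℝ≥0∞) ≤ V (E N) := by
    intro N
    rw [← hD1 N]
    refine hVmono _ _ ?_
    intro x hx
    exact Set.mem_iUnion.2 ⟨0, by simpa using hx⟩
  obtain ⟨N, hN⟩ := (htend.eventually_lt_const (zero_lt_one)).exists
  exact absurd (hge N) (not_le.2 hN)


/-- If `V` is continuous, `T`-invariant and `T`-ergodic, then every
`P ∈ Θ` coincides on the invariant σ-algebra with a finite convex combination of
`T`-ergodic measures from `Θ*`. -/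
theorem stmt_8 {Ω : Type*} [MeasurableSpace Ω] (T : Ω → Ω) (hT : Measurable T)
    (Θ : Set (Measure Ω)) (hΘne : Θ.Nonempty)
    (hprob : ∀ P ∈ Θ, IsProbabilityMeasure P)
    (V : Set Ω → ℝ≥0∞)
    (hV : ∀ A : Set Ω, V A = ⨆ P ∈ Θ, P A)
    (hmax : ∀ P : Measure Ω, IsProbabilityMeasure P →
      (∀ A, MeasurableSet A → P A ≤ V A) → P ∈ Θ)
    (hcont : ∀ A : ℕ → Set Ω, (∀ n, MeasurableSet (A n)) → Antitone A →
      (⋂ n, A n) = ∅ → Tendsto (fun n => V (A n)) atTop (nhds 0))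
    (hVinv : ∀ A : Set Ω, MeasurableSet A → V (T ⁻¹' A) = V A)
    (hVerg : ∀ A : Set Ω, MeasurableSet A → T ⁻¹' A = A → V A = 0 ∨ V A = 1) :
    ∀ P ∈ Θ, ∃ (n : ℕ) (l : Fin n → ℝ≥0∞) (Ps : Fin n → Measure Ω),
      (∀ k, Ps k ∈ Θ ∧ (∀ A : Set Ω, MeasurableSet A → Ps k (T ⁻¹' A) = Ps k A) ∧
        (∀ A : Set Ω, MeasurableSet A → T ⁻¹' A = A → Ps k A = 0 ∨ Ps k A = 1)) ∧
      (∑ k, l k) = 1 ∧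
      (∀ A : Set Ω, MeasurableSet A → T ⁻¹' A = A → P A = ∑ k, l k * Ps k A) := by
  classical
  intro P hP
  haveI hPprob : IsProbabilityMeasure P := hprob P hP
  have hPle : ∀ Q ∈ Θ, ∀ A : Set Ω, Q A ≤ V A := by
    intro Q hQ A
    rw [hV]
    exact le_iSup₂ (f := fun (Q : Measure Ω) (_ : Q ∈ Θ) => Q A) Q hQ
  have hVmono : ∀ A A' : Set Ω, A ⊆ A' → V A ≤ V A' := by
    intro A A' hs
    rw [hV, hV]
    exact iSup_mono fun Q => iSup_mono fun _ => measure_mono hs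
  have hVempty : V ∅ = 0 := by rw [hV]; simp
  have hVuniv : V Set.univ = 1 := by
    obtain ⟨Q, hQ⟩ := hΘne
    refine le_antisymm ?_ ?_
    · rw [hV]
      refine iSup₂_le fun Q hQ => ?_
      haveI := hprob Q hQ
      exact prob_le_one
    · calc (1 : ℝ≥0∞) = Q Set.univ := ((hprob Q hQ).measure_univ).symm
        _ ≤ V Set.univ := hPle Q hQ _
  have hVsub : ∀ A A' : Set Ω, V (A ∪ A') ≤ V A + V A' := by
    intro A A'
    rw [hV]
    refine iSup₂_le fun Q hQ => ?_
    exact (measure_union_le _ _).trans (add_le_add (hPle Q hQ A) (hPle Q hQ A'))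
  obtain ⟨s, hsat, hsdisj, hsrem⟩ :=
    vdecomp_univ T V hVmono hVempty hVsub hVuniv hVerg hcont
  let e : Fin s.card ≃ {x // x ∈ s} := s.equivFin.symm
  let Bs : Fin s.card → Set Ω := fun k => (e k).1
  have hBsmem : ∀ k, Bs k ∈ s := fun k => (e k).2
  have hBsat : ∀ k, VAtom T V (Bs k) := fun k => (hsat _ (hBsmem k)).1
  have hBsm : ∀ k, MeasurableSet (Bs k) := fun k => (hBsat k).1
  have hBsinv : ∀ k, T ⁻¹' (Bs k) = Bs k := fun k => (hBsat k).2.1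
  have hBsdisj : Pairwise (Function.onFun Disjoint Bs) := by
    intro i j hij
    refine hsdisj (Finset.mem_coe.2 (hBsmem i)) (Finset.mem_coe.2 (hBsmem j)) ?_
    intro hEq
    exact hij (e.injective (Subtype.ext hEq))
  have hUnion : (⋃ k, Bs k) = ⋃₀ ↑s := by
    ext x
    simp only [Set.mem_iUnion, Set.mem_sUnion, Finset.mem_coe]
    constructor
    · rintro ⟨k, hk⟩
      exact ⟨Bs k, hBsmem k, hk⟩
    · rintro ⟨B, hB, hxB⟩
      refine ⟨e.symm ⟨B, hB⟩, ?_⟩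
      have : Bs (e.symm ⟨B, hB⟩) = B := by
        simp only [Bs, Equiv.apply_symm_apply]
      rw [this]
      exact hxB
  have hUm : MeasurableSet (⋃ k, Bs k) := MeasurableSet.iUnion hBsm
  have hrem : V ((⋃ k, Bs k)ᶜ) = 0 := by
    rw [hUnion, Set.compl_eq_univ_diff]
    exact hsrem
  have hergex : ∀ k, ∃ μ : Measure Ω, μ ∈ Θ ∧
      (∀ A : Set Ω, MeasurableSet A → μ (T ⁻¹' A) = μ A) ∧
      (∀ A : Set Ω, MeasurableSet A → T ⁻¹' A = A →
        (V (Bs k ∩ A) = 0 → μ A = 0) ∧ (V (Bs k ∩ A) = 1 → μ A = 1)) := fun k =>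
    ergodic_on_atom T hT Θ hprob V hV hmax hcont hVinv (Bs k) (hBsm k) (hBsinv k)
      (hBsat k).2.2.1 (hBsat k).2.2.2
  choose μs hμΘ hμinv hμkey using hergex
  refine ⟨s.card, fun k => P (Bs k), μs, ?_, ?_, ?_⟩
  · intro k
    refine ⟨hμΘ k, hμinv k, ?_⟩
    intro A hA hAinv
    have hBA : T ⁻¹' (Bs k ∩ A) = Bs k ∩ A := by
      rw [Set.preimage_inter, hBsinv k, hAinv]
    rcases hVerg (Bs k ∩ A) ((hBsm k).inter hA) hBA with h0 | h1
    · exact Or.inl ((hμkey k A hA hAinv).1 h0)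
    · exact Or.inr ((hμkey k A hA hAinv).2 h1)
  · have hPU : P (⋃ k, Bs k) = 1 := by
      have hc : P ((⋃ k, Bs k)ᶜ) = 0 :=
        le_antisymm ((hPle P hP _).trans_eq hrem) zero_le
      have h2 := measure_compl hUm (measure_ne_top P _)
      rw [measure_univ, hc] at h2
      exact le_antisymm prob_le_one (tsub_eq_zero_iff_le.1 h2.symm)
    have hsum : P (⋃ k, Bs k) = ∑' k, P (Bs k) := measure_iUnion hBsdisj hBsm
    rw [tsum_fintype] at hsum
    rw [← hsum, hPU]
  · intro A hA hAinv
    have hPAU : P (A ∩ ⋃ k, Bs k) + P (A \ ⋃ k, Bs k) = P A :=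
      measure_inter_add_diff A hUm
    have hdiff0 : P (A \ ⋃ k, Bs k) = 0 := by
      refine le_antisymm ?_ zero_le
      have hss : (A \ ⋃ k, Bs k) ⊆ (⋃ k, Bs k)ᶜ := fun x hx => hx.2
      calc P (A \ ⋃ k, Bs k) ≤ V (A \ ⋃ k, Bs k) := hPle P hP _
        _ ≤ V ((⋃ k, Bs k)ᶜ) := hVmono _ _ hss
        _ = 0 := hrem
    have hinter : (A ∩ ⋃ k, Bs k) = ⋃ k, A ∩ Bs k := by rw [Set.inter_iUnion]
    have hadd : P (⋃ k, A ∩ Bs k) = ∑' k, P (A ∩ Bs k) :=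
      measure_iUnion
        (fun i j hij => ((hBsdisj hij).mono Set.inter_subset_right Set.inter_subset_right))
        (fun k => hA.inter (hBsm k))
    have hterm : ∀ k, P (A ∩ Bs k) = P (Bs k) * μs k A := by
      intro k
      have hBA : T ⁻¹' (Bs k ∩ A) = Bs k ∩ A := by
        rw [Set.preimage_inter, hBsinv k, hAinv]
      rcases hVerg (Bs k ∩ A) ((hBsm k).inter hA) hBA with h0 | h1
      · have hμ0 : μs k A = 0 := (hμkey k A hA hAinv).1 h0
        have hP0 : P (A ∩ Bs k) = 0 := by
          refine le_antisymm ?_ zero_le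
          rw [Set.inter_comm]
          exact (hPle P hP _).trans_eq h0
        rw [hP0, hμ0, mul_zero]
      · have hμ1 : μs k A = 1 := (hμkey k A hA hAinv).2 h1
        have hc0 : V (Bs k ∩ Aᶜ) = 0 := by
          rcases (hBsat k).2.2.2 A hA hAinv with hh | hh
          · rw [h1] at hh
            exact absurd hh one_ne_zero
          · exact hh
        have hd : P (Bs k \ A) = 0 := by
          refine le_antisymm ?_ zero_le
          rw [Set.diff_eq]
          exact (hPle P hP _).trans_eq hc0
        have h2 : P (Bs k ∩ A) + P (Bs k \ A) = P (Bs k) :=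
          measure_inter_add_diff (Bs k) hA
        rw [hd, add_zero] at h2
        rw [hμ1, mul_one, Set.inter_comm]
        exact h2
    calc P A = P (A ∩ ⋃ k, Bs k) + P (A \ ⋃ k, Bs k) := hPAU.symm
      _ = ∑ k, P (Bs k) * μs k A := by
          rw [hdiff0, add_zero, hinter, hadd, tsum_fintype]
          exact Finset.sum_congr rfl fun k _ => hterm k
end

section
/- Assume 𝕍 is continuous. Let μ : 𝓕 → [0,1] be finitely additive (μ(A ∪ B) = μ(A) + μ(B) for disjoint A, B ∈ 𝓕) with μ(∅) = 0, μ(Ω) = 1, and μ(A) ≤ 𝕍(A) for all A ∈ 𝓕. Then μ is countably additive, i.e., μ extends to a probability measure on (Ω, 𝓕), and this probability measure belongs to Θ. -/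
open MeasureTheory Filter
open scoped ENNReal

/-- If `V` is continuous, then every finitely additive
`μ : 𝓕 → [0,1]` with `μ(∅) = 0`, `μ(Ω) = 1` and `μ ≤ V` is countably additive:
it extends to a probability measure on `(Ω, 𝓕)` belonging to `Θ`. -/
theorem stmt_9 {Ω : Type*} [MeasurableSpace Ω]
    (Θ : Set (Measure Ω)) (hΘne : Θ.Nonempty)
    (hprob : ∀ P ∈ Θ, IsProbabilityMeasure P)
    (V : Set Ω → ℝ≥0∞)
    (hV : ∀ A : Set Ω, V A = ⨆ P ∈ Θ, P A)
    (hmax : ∀ P : Measure Ω, IsProbabilityMeasure P →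
      (∀ A, MeasurableSet A → P A ≤ V A) → P ∈ Θ)
    (hcont : ∀ A : ℕ → Set Ω, (∀ n, MeasurableSet (A n)) → Antitone A →
      (⋂ n, A n) = ∅ → Tendsto (fun n => V (A n)) atTop (nhds 0))
    (μ : Set Ω → ℝ≥0∞)
    (hle1 : ∀ A : Set Ω, MeasurableSet A → μ A ≤ 1)
    (hadd : ∀ A B : Set Ω, MeasurableSet A → MeasurableSet B → Disjoint A B →
      μ (A ∪ B) = μ A + μ B)
    (hempty : μ ∅ = 0) (huniv : μ Set.univ = 1)
    (hdom : ∀ A : Set Ω, MeasurableSet A → μ A ≤ V A) :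
    ∃ P : Measure Ω, IsProbabilityMeasure P ∧ P ∈ Θ ∧
      ∀ A : Set Ω, MeasurableSet A → P A = μ A := by
  -- countable additivity
  have hcountadd : ∀ f : ℕ → Set Ω, (∀ i, MeasurableSet (f i)) →
      Pairwise (Function.onFun Disjoint f) → μ (⋃ i, f i) = ∑' i, μ (f i) := by
    intro f hf hdisj
    set B : ℕ → Set Ω := fun n => ⋃ i ∈ Finset.range n, f i with hB
    have hBmeas : ∀ n, MeasurableSet (B n) := fun n =>
      (Finset.range n).measurableSet_biUnion (fun i _ => hf i)
    have hBsum : ∀ n, μ (B n) = ∑ i ∈ Finset.range n, μ (f i) := by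
      intro n
      induction n with
      | zero => simpa [hB] using hempty
      | succ n ih =>
        have hBsucc : B (n + 1) = B n ∪ f n := by
          show ⋃ i ∈ Finset.range (n + 1), f i = (⋃ i ∈ Finset.range n, f i) ∪ f n
          rw [Finset.range_add_one, Finset.set_biUnion_insert, Set.union_comm]
        have hd : Disjoint (B n) (f n) := by
          refine Set.disjoint_iUnion₂_left.2 fun i hi => ?_
          exact hdisj (Finset.mem_range.1 hi).ne
        rw [hBsucc, hadd _ _ (hBmeas n) (hf n) hd, ih, Finset.sum_range_succ]
    set A : ℕ → Set Ω := fun n => (⋃ i, f i) \ B n with hA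
    have hAmeas : ∀ n, MeasurableSet (A n) :=
      fun n => (MeasurableSet.iUnion hf).diff (hBmeas n)
    have hBmono : Monotone B := by
      intro m n hmn
      exact Set.biUnion_subset_biUnion_left (Finset.range_subset_range.2 hmn)
    have hAanti : Antitone A := fun m n hmn => Set.diff_subset_diff_right (hBmono hmn)
    have hAint : (⋂ n, A n) = ∅ := by
      apply Set.eq_empty_iff_forall_notMem.2
      intro x hx
      have hx0 := Set.mem_iInter.1 hx 0
      obtain ⟨i, hi⟩ := Set.mem_iUnion.1 hx0.1
      have hxi := Set.mem_iInter.1 hx (i + 1)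
      exact hxi.2 (Set.mem_biUnion (Finset.mem_range.2 (Nat.lt_succ_self i)) hi)
    have hVA : Tendsto (fun n => V (A n)) atTop (nhds 0) :=
      hcont A hAmeas hAanti hAint
    have hμA : Tendsto (fun n => μ (A n)) atTop (nhds 0) := by
      refine tendsto_of_tendsto_of_tendsto_of_le_of_le tendsto_const_nhds hVA
        (fun n => zero_le) (fun n => hdom _ (hAmeas n))
    have hsplit : ∀ n, μ (⋃ i, f i) = μ (B n) + μ (A n) := by
      intro n
      have hU : (⋃ i, f i) = B n ∪ A n := by
        rw [hA]
        rw [Set.union_diff_cancel]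
        exact Set.iUnion₂_subset fun i _ => Set.subset_iUnion f i
      rw [hU, hadd _ _ (hBmeas n) (hAmeas n) Set.disjoint_sdiff_right]
    have h1 : Tendsto (fun n => μ (B n) + μ (A n)) atTop
        (nhds ((∑' i, μ (f i)) + 0)) := by
      apply Tendsto.add _ hμA
      simp only [hBsum]
      exact ENNReal.tendsto_nat_tsum _
    have h2 : Tendsto (fun n => μ (B n) + μ (A n)) atTop (nhds (μ (⋃ i, f i))) := by
      simp only [fun n => (hsplit n).symm]
      exact tendsto_const_nhds
    have := tendsto_nhds_unique h2 h1
    simpa using this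
  set P : Measure Ω := Measure.ofMeasurable (fun s _ => μ s) hempty
    (fun f hf hd => hcountadd f hf hd) with hP
  have hPapp : ∀ A : Set Ω, MeasurableSet A → P A = μ A := fun A hA =>
    Measure.ofMeasurable_apply A hA
  have hPprob : IsProbabilityMeasure P :=
    ⟨by rw [hPapp _ MeasurableSet.univ, huniv]⟩
  exact ⟨P, hPprob, hmax P hPprob (fun A hA => (hPapp A hA) ▸ hdom A hA), hPapp⟩
end
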